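/- arXiv:2211.04936 — 6 statements merged into one kernel-verified Lean document; each statement's English description precedes it below -/
import Mathlib

section
/- Let A, B ∈ GL(d, ℝ) be expansive matrices with associated step homogeneous quasi-norms ρ_A, ρ_B. Then ρ_A and ρ_B are equivalent (i.e., there exists C ≥ 1 with (1/C)ρ_A ≤ ρ_B ≤ Cρ_A pointwise) if and only if sup_{k ∈ ℤ} ‖A^{-k} B^{⌊ck⌋}‖ < ∞, where c = ln|det A| / ln|det B|. -/
open MeasureTheory
open scoped Pointwise

/-- A real matrix is expansive if it is invertible and all its complex eigenvalues
have absolute value strictly greater than `1`. -/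
def Expansive {d : ℕ} (A : Matrix (Fin d) (Fin d) ℝ) : Prop :=
  IsUnit A ∧ ∀ μ ∈ spectrum ℂ (A.map (algebraMap ℝ ℂ)), 1 < ‖μ‖

/-- The action of a matrix on Euclidean space. -/
def ms {d : ℕ} (A : Matrix (Fin d) (Fin d) ℝ) (x : EuclideanSpace ℝ (Fin d)) :
    EuclideanSpace ℝ (Fin d) := WithLp.toLp 2 (A.mulVec x)

/-- An ellipsoid of volume one satisfying `Ω ⊆ rΩ ⊆ AΩ` for some `r > 1`. -/
def IsExpansiveEllipsoid {d : ℕ} (A : Matrix (Fin d) (Fin d) ℝ)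
    (Ω : Set (EuclideanSpace ℝ (Fin d))) : Prop :=
  (∃ P : Matrix (Fin d) (Fin d) ℝ, IsUnit P ∧ Ω = {x | ‖ms P x‖ < 1}) ∧
    volume Ω = 1 ∧ ∃ r : ℝ, 1 < r ∧ Ω ⊆ r • Ω ∧ r • Ω ⊆ ms A '' Ω

/-- The step homogeneous quasi-norm of `A` associated to the ellipsoid `Ω`:
`ρ x = |det A| ^ i` for `x ∈ A^{i+1} Ω \ A^i Ω`, and `ρ 0 = 0`. -/
def IsStepQuasiNorm {d : ℕ} (A : Matrix (Fin d) (Fin d) ℝ)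
    (Ω : Set (EuclideanSpace ℝ (Fin d))) (ρ : EuclideanSpace ℝ (Fin d) → ℝ) : Prop :=
  ρ 0 = 0 ∧ ∀ i : ℤ, ∀ x ∈ ms (A ^ (i + 1)) '' Ω \ ms (A ^ i) '' Ω, ρ x = |A.det| ^ i

attribute [local instance] Matrix.linftyOpNormedAddCommGroup

namespace StmtAux
variable {d : ℕ}

lemma ms_mul (M N : Matrix (Fin d) (Fin d) ℝ) (x : EuclideanSpace ℝ (Fin d)) :
    ms (M * N) x = ms M (ms N x) := congrArg (WithLp.toLp 2) (Matrix.mulVec_mulVec _ M N).symm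
lemma ms_one (x : EuclideanSpace ℝ (Fin d)) : ms (1 : Matrix (Fin d) (Fin d) ℝ) x = x :=
  congrArg (WithLp.toLp 2) (Matrix.one_mulVec _)
lemma ms_zero (M : Matrix (Fin d) (Fin d) ℝ) : ms M (0 : EuclideanSpace ℝ (Fin d)) = 0 :=
  by simp [ms]
lemma ms_smul (M : Matrix (Fin d) (Fin d) ℝ) (t : ℝ) (x : EuclideanSpace ℝ (Fin d)) :
    ms M (t • x) = t • ms M x := by simp [ms, Matrix.mulVec_smul]
lemma ms_cancel {M : Matrix (Fin d) (Fin d) ℝ} (h : IsUnit M.det) (x : EuclideanSpace ℝ (Fin d)) :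
    ms M⁻¹ (ms M x) = x := by rw [← ms_mul, Matrix.nonsing_inv_mul _ h, ms_one]
lemma ms_ne_zero {M : Matrix (Fin d) (Fin d) ℝ} (h : IsUnit M.det)
    {x : EuclideanSpace ℝ (Fin d)} (hx : x ≠ 0) : ms M x ≠ 0 := fun h0 =>
  hx (by rw [← ms_cancel h x, h0, ms_zero])
lemma ms_zpow_cancel {A : Matrix (Fin d) (Fin d) ℝ} (hA : IsUnit A.det) (i : ℤ)
    (x : EuclideanSpace ℝ (Fin d)) : ms (A ^ i) (ms (A ^ (-i)) x) = x := by
  have h := Matrix.zpow_neg_mul_zpow_self (-i) hA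
  rw [neg_neg] at h
  rw [← ms_mul, h, ms_one]
lemma ms_zpow_cancel' {A : Matrix (Fin d) (Fin d) ℝ} (hA : IsUnit A.det) (i : ℤ)
    (x : EuclideanSpace ℝ (Fin d)) : ms (A ^ (-i)) (ms (A ^ i) x) = x := by
  rw [← ms_mul, Matrix.zpow_neg_mul_zpow_self i hA, ms_one]

lemma exists_opBound (M : Matrix (Fin d) (Fin d) ℝ) :
    ∃ K : ℝ, 0 ≤ K ∧ ∀ x : EuclideanSpace ℝ (Fin d), ‖ms M x‖ ≤ K * ‖x‖ := by
  refine ⟨‖LinearMap.toContinuousLinearMap (Matrix.toEuclideanLin M)‖, norm_nonneg _, fun x => ?_⟩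
  exact (LinearMap.toContinuousLinearMap (Matrix.toEuclideanLin M)).le_opNorm x

/-- The gauge of `x` relative to the ellipsoid of `P`, at scale `A^i`. -/
noncomputable def ga (A P : Matrix (Fin d) (Fin d) ℝ) (i : ℤ) (x : EuclideanSpace ℝ (Fin d)) : ℝ :=
  ‖ms P (ms (A ^ (-i)) x)‖

lemma ga_nonneg (A P : Matrix (Fin d) (Fin d) ℝ) (i : ℤ) (x : EuclideanSpace ℝ (Fin d)) :
    0 ≤ ga A P i x := norm_nonneg _

lemma ga_zero (A P : Matrix (Fin d) (Fin d) ℝ) (i : ℤ) : ga A P i 0 = 0 := by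
  simp [ga, ms_zero]

lemma ga_smul (A P : Matrix (Fin d) (Fin d) ℝ) (i : ℤ) {t : ℝ} (ht : 0 ≤ t)
    (x : EuclideanSpace ℝ (Fin d)) : ga A P i (t • x) = t * ga A P i x := by
  rw [ga, ms_smul, ms_smul, norm_smul, Real.norm_eq_abs, abs_of_nonneg ht]; rfl

lemma ga_pos {A P : Matrix (Fin d) (Fin d) ℝ} (hA : IsUnit A.det) (hP : IsUnit P.det)
    (i : ℤ) {x : EuclideanSpace ℝ (Fin d)} (hx : x ≠ 0) : 0 < ga A P i x :=
  norm_pos_iff.mpr (ms_ne_zero hP (ms_ne_zero (hA.det_zpow _) hx))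

lemma ga_shift {A : Matrix (Fin d) (Fin d) ℝ} (P : Matrix (Fin d) (Fin d) ℝ)
    (hA : IsUnit A.det) (i m : ℤ) (x : EuclideanSpace ℝ (Fin d)) :
    ga A P (i + m) (ms (A ^ m) x) = ga A P i x := by
  have h : -(i + m) + m = -i := by ring
  rw [ga, ← ms_mul (A ^ (-(i + m))) (A ^ m) x, ← Matrix.zpow_add hA, h]; rfl

lemma ga_mem {A : Matrix (Fin d) (Fin d) ℝ} (P : Matrix (Fin d) (Fin d) ℝ)
    (hA : IsUnit A.det) (i : ℤ) (x : EuclideanSpace ℝ (Fin d)) :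
    x ∈ ms (A ^ i) '' {y : EuclideanSpace ℝ (Fin d) | ‖ms P y‖ < 1} ↔ ga A P i x < 1 := by
  constructor
  · rintro ⟨u, hu, rfl⟩
    rwa [ga, ms_zpow_cancel' hA]
  · intro h
    exact ⟨ms (A ^ (-i)) x, h, ms_zpow_cancel hA i x⟩

lemma ga_step {A P : Matrix (Fin d) (Fin d) ℝ} (hA : IsUnit A.det) {r : ℝ} (hr : 1 < r)
    (hsub : ∀ y : EuclideanSpace ℝ (Fin d), ‖ms P y‖ < r → ga A P 1 y < 1) (i : ℤ)
    (x : EuclideanSpace ℝ (Fin d)) : r * ga A P (i + 1) x ≤ ga A P i x := by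
  rcases eq_or_ne x 0 with rfl | hx
  · simp [ga_zero]
  have hr0 : (0 : ℝ) < r := lt_trans one_pos hr
  refine le_of_forall_pos_le_add fun ε hε => ?_
  set s := ga A P i x with hs
  have hs0 : 0 ≤ s := ga_nonneg _ _ _ _
  have hsε : 0 < s + ε := by linarith
  set t := r / (s + ε) with ht
  have ht0 : 0 < t := div_pos hr0 hsε
  have h1 : ga A P i (t • x) < r := by
    rw [ga_smul _ _ _ ht0.le]
    have he : t * (s + ε) = r := div_mul_cancel₀ r hsε.ne'
    calc t * s < t * (s + ε) := mul_lt_mul_of_pos_left (by linarith) ht0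
      _ = r := he
  -- apply hsub to y = ms (A^(-i)) (t • x)
  have h2 : ga A P 1 (ms (A ^ (-i)) (t • x)) < 1 := by
    apply hsub
    exact h1
  have h3 : ga A P 1 (ms (A ^ (-i)) (t • x)) = t * ga A P (i + 1) x := by
    rw [ga, ← ms_mul (A ^ (-1 : ℤ)) (A ^ (-i)) (t • x), ← Matrix.zpow_add hA]
    have h' : (-1 : ℤ) + -i = -(i + 1) := by ring
    rw [h', ← ga, ga_smul _ _ _ ht0.le]
  rw [h3] at h2
  have h4 : ga A P (i + 1) x < 1 / t := (lt_div_iff₀ ht0).mpr (by rwa [mul_comm])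
  have h5 : 1 / t = (s + ε) / r := one_div_div r (s + ε)
  rw [h5] at h4
  have h6 : r * ((s + ε) / r) = s + ε := by field_simp
  have h7 : r * ga A P (i + 1) x < s + ε := by
    calc r * ga A P (i + 1) x < r * ((s + ε) / r) := mul_lt_mul_of_pos_left h4 hr0
      _ = s + ε := h6
  exact h7.le

lemma ga_mono {A P : Matrix (Fin d) (Fin d) ℝ} (hA : IsUnit A.det) {r : ℝ} (hr : 1 < r)
    (hsub : ∀ y : EuclideanSpace ℝ (Fin d), ‖ms P y‖ < r → ga A P 1 y < 1) (i : ℤ)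
    (x : EuclideanSpace ℝ (Fin d)) : ga A P (i + 1) x ≤ ga A P i x := by
  have h := ga_step hA hr hsub i x
  nlinarith [ga_nonneg A P (i + 1) x]

lemma ga_pow {A P : Matrix (Fin d) (Fin d) ℝ} (hA : IsUnit A.det) {r : ℝ} (hr : 1 < r)
    (hsub : ∀ y : EuclideanSpace ℝ (Fin d), ‖ms P y‖ < r → ga A P 1 y < 1) (i : ℤ) (n : ℕ)
    (x : EuclideanSpace ℝ (Fin d)) : r ^ n * ga A P (i + n) x ≤ ga A P i x := by
  induction n with
  | zero => simp
  | succ n ih =>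
    have hc : i + ((n : ℤ) + 1) = (i + n) + 1 := by ring
    have h1 : r ^ (n + 1) * ga A P (i + ((n : ℕ) + 1 : ℕ)) x
        = r ^ n * (r * ga A P ((i + n) + 1) x) := by
      push_cast
      rw [hc]
      ring
    rw [h1]
    calc r ^ n * (r * ga A P ((i + n) + 1) x) ≤ r ^ n * ga A P (i + n) x := by
          apply mul_le_mul_of_nonneg_left (ga_step hA hr hsub _ x)
          positivity
      _ ≤ ga A P i x := ih

lemma ga_anti {A P : Matrix (Fin d) (Fin d) ℝ} (hA : IsUnit A.det) {r : ℝ} (hr : 1 < r)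
    (hsub : ∀ y : EuclideanSpace ℝ (Fin d), ‖ms P y‖ < r → ga A P 1 y < 1) {i j : ℤ}
    (hij : i ≤ j) (x : EuclideanSpace ℝ (Fin d)) : ga A P j x ≤ ga A P i x := by
  set n := (j - i).toNat with hn
  have hin : i + (n : ℤ) = j := by
    have := Int.toNat_of_nonneg (sub_nonneg.mpr hij)
    omega
  have h1 := ga_pow hA hr hsub i n x
  rw [hin] at h1
  have h2 : ga A P j x ≤ r ^ n * ga A P j x :=
    le_mul_of_one_le_left (ga_nonneg _ _ _ _) (one_le_pow₀ hr.le)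
  linarith

lemma exists_index {A P : Matrix (Fin d) (Fin d) ℝ} (hA : IsUnit A.det) (hP : IsUnit P.det)
    {r : ℝ} (hr : 1 < r)
    (hsub : ∀ y : EuclideanSpace ℝ (Fin d), ‖ms P y‖ < r → ga A P 1 y < 1)
    {x : EuclideanSpace ℝ (Fin d)} (hx : x ≠ 0) :
    ∃ i : ℤ, 1 ≤ ga A P i x ∧ ga A P (i + 1) x < 1 ∧ ∀ z : ℤ, 1 ≤ ga A P z x → z ≤ i := by
  have hs0 : 0 < ga A P 0 x := ga_pos hA hP 0 hx
  -- bounded above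
  obtain ⟨n0, hn0⟩ := pow_unbounded_of_one_lt (ga A P 0 x) hr
  have Hbdd : ∀ z : ℤ, 1 ≤ ga A P z x → z ≤ (n0 : ℤ) := by
    intro z hz
    by_contra hlt
    push_neg at hlt
    have hz0 : (0 : ℤ) ≤ z := le_trans (by positivity) hlt.le
    set n := z.toNat with hn
    have hzn : (n : ℤ) = z := Int.toNat_of_nonneg hz0
    have h1 := ga_pow hA hr hsub 0 n x
    rw [zero_add, hzn] at h1
    have h2 : r ^ n ≤ r ^ n * ga A P z x :=
      le_mul_of_one_le_right (by positivity) hz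
    have h3 : r ^ n < r ^ n0 := lt_of_le_of_lt (le_trans h2 h1) hn0
    have h4 : n < n0 := (pow_lt_pow_iff_right₀ hr).mp h3
    omega
  have Hinh : ∃ z : ℤ, 1 ≤ ga A P z x := by
    obtain ⟨n1, hn1⟩ := pow_unbounded_of_one_lt (ga A P 0 x)⁻¹ hr
    refine ⟨-(n1 : ℤ), ?_⟩
    have h1 := ga_pow hA hr hsub (-(n1 : ℤ)) n1 x
    rw [neg_add_cancel] at h1
    have h2 : 1 < r ^ n1 * ga A P 0 x := by
      have := mul_lt_mul_of_pos_right hn1 hs0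
      rwa [inv_mul_cancel₀ hs0.ne'] at this
    linarith
  obtain ⟨i, hi, hmax⟩ := Int.exists_greatest_of_bdd ⟨(n0 : ℤ), Hbdd⟩ Hinh
  refine ⟨i, hi, ?_, hmax⟩
  by_contra h
  push_neg at h
  have := hmax (i + 1) h
  omega

lemma abs_coord_le (x : EuclideanSpace ℝ (Fin d)) (i : Fin d) : |x i| ≤ ‖x‖ := by
  rw [EuclideanSpace.norm_eq, ← Real.sqrt_sq_eq_abs]
  apply Real.sqrt_le_sqrt
  have : |x i| ^ 2 ≤ ∑ j, ‖x j‖ ^ 2 := by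
    have h := Finset.single_le_sum (f := fun j => ‖x j‖ ^ 2)
      (fun j _ => by positivity) (Finset.mem_univ i)
    simpa [Real.norm_eq_abs, sq_abs] using h
  simpa [sq_abs] using this

lemma norm_le_sum_abs (x : EuclideanSpace ℝ (Fin d)) : ‖x‖ ≤ ∑ i, |x i| := by
  rw [EuclideanSpace.norm_eq]
  have h1 : ∑ j, ‖x j‖ ^ 2 ≤ (∑ i, |x i|) ^ 2 := by
    have : ∀ j ∈ Finset.univ, ‖x j‖ ^ 2 ≤ |x j| * ∑ i, |x i| := by
      intro j _
      rw [Real.norm_eq_abs, sq]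
      apply mul_le_mul_of_nonneg_left _ (abs_nonneg _)
      exact Finset.single_le_sum (f := fun i => |x i|) (fun i _ => abs_nonneg _)
        (Finset.mem_univ j)
    calc ∑ j, ‖x j‖ ^ 2 ≤ ∑ j, |x j| * ∑ i, |x i| := Finset.sum_le_sum this
      _ = (∑ i, |x i|) ^ 2 := by rw [← Finset.sum_mul, sq]
  calc Real.sqrt (∑ j, ‖x j‖ ^ 2) ≤ Real.sqrt ((∑ i, |x i|) ^ 2) := Real.sqrt_le_sqrt h1
    _ = ∑ i, |x i| := by
      rw [Real.sqrt_sq (Finset.sum_nonneg fun i _ => abs_nonneg _)]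

lemma ms_le_of_entries (X : Matrix (Fin d) (Fin d) ℝ) {R : ℝ} (hR0 : 0 ≤ R)
    (hR : ∀ i j, |X i j| ≤ R) (x : EuclideanSpace ℝ (Fin d)) :
    ‖ms X x‖ ≤ ((d : ℝ) * d * R) * ‖x‖ := by
  have hcoord : ∀ i, |ms X x i| ≤ (d : ℝ) * R * ‖x‖ := by
    intro i
    have h1 : ms X x i = ∑ j, X i j * x j := by simp [ms, Matrix.mulVec, dotProduct]
    calc |ms X x i| = |∑ j, X i j * x j| := by rw [h1]
      _ ≤ ∑ j, |X i j * x j| := Finset.abs_sum_le_sum_abs _ _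
      _ ≤ ∑ j : Fin d, R * ‖x‖ := by
          apply Finset.sum_le_sum
          intro j _
          rw [abs_mul]
          exact mul_le_mul (hR i j) (abs_coord_le x j) (abs_nonneg _) hR0
      _ = (d : ℝ) * R * ‖x‖ := by
          rw [Finset.sum_const, Finset.card_univ, Fintype.card_fin]
          push_cast; ring
  calc ‖ms X x‖ ≤ ∑ i, |ms X x i| := norm_le_sum_abs _
    _ ≤ ∑ i : Fin d, (d : ℝ) * R * ‖x‖ := Finset.sum_le_sum fun i _ => hcoord i
    _ = ((d : ℝ) * d * R) * ‖x‖ := by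
        rw [Finset.sum_const, Finset.card_univ, Fintype.card_fin]
        push_cast; ring

section Linfty
attribute [local instance] Matrix.linftyOpNormedAddCommGroup

lemma row_sum_le_linfty (X : Matrix (Fin d) (Fin d) ℝ) (i : Fin d) :
    ∑ j, |X i j| ≤ ‖X‖ := by
  have h1 : (∑ j, ‖X i j‖₊) ≤ ‖X‖₊ := by
    rw [Matrix.linfty_opNNNorm_def]
    exact Finset.le_sup (f := fun i : Fin d => ∑ j, ‖X i j‖₊) (Finset.mem_univ i)
  have h2 : ((∑ j, ‖X i j‖₊ : NNReal) : ℝ) = ∑ j, |X i j| := by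
    push_cast
    simp [Real.norm_eq_abs]
  rw [← h2]
  exact_mod_cast h1

lemma entry_le_linfty (X : Matrix (Fin d) (Fin d) ℝ) (i j : Fin d) : |X i j| ≤ ‖X‖ := by
  refine le_trans ?_ (row_sum_le_linfty X i)
  exact Finset.single_le_sum (f := fun j => |X i j|) (fun k _ => abs_nonneg _)
    (Finset.mem_univ j)

lemma linfty_le_of_rows (X : Matrix (Fin d) (Fin d) ℝ) {M : ℝ} (hM : 0 ≤ M)
    (h : ∀ i, ∑ j, |X i j| ≤ M) : ‖X‖ ≤ M := by
  rw [Matrix.linfty_opNorm_def]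
  have h1 : (Finset.univ.sup fun i : Fin d => ∑ j, ‖X i j‖₊) ≤ M.toNNReal := by
    apply Finset.sup_le
    intro i _
    rw [← NNReal.coe_le_coe]
    have h2 : ((∑ j, ‖X i j‖₊ : NNReal) : ℝ) = ∑ j, |X i j| := by
      push_cast
      simp [Real.norm_eq_abs]
    rw [h2, Real.coe_toNNReal _ hM]
    exact h i
  calc ((Finset.univ.sup fun i : Fin d => ∑ j, ‖X i j‖₊ : NNReal) : ℝ)
      ≤ (M.toNNReal : ℝ) := by exact_mod_cast h1
    _ = M := Real.coe_toNNReal _ hM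

end Linfty

/-- abstract inclusion lemma -/
lemma incl {X Y PX PY : Matrix (Fin d) (Fin d) ℝ}
    (hY : IsUnit Y.det) (hPY : IsUnit PY.det)
    (hX : IsUnit X.det) {rX : ℝ} (hrX : 1 < rX)
    (hsubX : ∀ y : EuclideanSpace ℝ (Fin d), ‖ms PX y‖ < rX → ga X PX 1 y < 1)
    (p q : ℤ → ℤ) {Mb : ℝ} (hMb0 : 0 ≤ Mb)
    (hMb : ∀ (k : ℤ) (x : EuclideanSpace ℝ (Fin d)),
      ‖ms (X ^ (-(p k)) * Y ^ (q k)) x‖ ≤ Mb * ‖x‖) :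
    ∃ L : ℕ, ∀ (k : ℤ) (x : EuclideanSpace ℝ (Fin d)),
      ga Y PY (q k) x < 1 → ga X PX (p k + L) x < 1 := by
  obtain ⟨KY, hKY0, hKY⟩ := exists_opBound (PY⁻¹ : Matrix (Fin d) (Fin d) ℝ)
  obtain ⟨KX, hKX0, hKX⟩ := exists_opBound PX
  obtain ⟨L, hL⟩ := pow_unbounded_of_one_lt (KX * (Mb * KY)) hrX
  refine ⟨L, fun k x hx => ?_⟩
  set u := ms (Y ^ (-(q k))) x with hu
  have hxu : x = ms (Y ^ (q k)) u := (ms_zpow_cancel hY (q k) x).symm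
  have hunorm : ‖u‖ ≤ KY := by
    have h1 : ‖ms PY u‖ < 1 := hx
    calc ‖u‖ = ‖ms PY⁻¹ (ms PY u)‖ := by rw [ms_cancel hPY]
      _ ≤ KY * ‖ms PY u‖ := hKY _
      _ ≤ KY * 1 := mul_le_mul_of_nonneg_left h1.le hKY0
      _ = KY := mul_one _
  set w := ms (X ^ (-(p k))) x with hw
  have hwnorm : ‖w‖ ≤ Mb * KY := by
    have h1 : w = ms (X ^ (-(p k)) * Y ^ (q k)) u := by
      rw [hw, ms_mul, ← hxu]
    rw [h1]
    calc ‖ms (X ^ (-(p k)) * Y ^ (q k)) u‖ ≤ Mb * ‖u‖ := hMb k u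
      _ ≤ Mb * KY := mul_le_mul_of_nonneg_left hunorm hMb0
  have hshift : ga X PX (p k + (L : ℤ)) x = ga X PX (L : ℤ) w := by
    have h1 : ga X PX ((L : ℤ) + p k) (ms (X ^ (p k)) w) = ga X PX (L : ℤ) w :=
      ga_shift PX hX (L : ℤ) (p k) w
    have h2 : ms (X ^ (p k)) w = x := ms_zpow_cancel hX (p k) x
    rw [h2] at h1
    rw [add_comm, h1]
  rw [hshift]
  have h3 := ga_pow hX hrX hsubX 0 L w
  rw [zero_add] at h3
  have h4 : ga X PX 0 w ≤ KX * (Mb * KY) := by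
    calc ga X PX 0 w = ‖ms PX (ms (X ^ (-(0 : ℤ))) w)‖ := rfl
      _ = ‖ms PX w‖ := by norm_num [ms_one]
      _ ≤ KX * ‖w‖ := hKX w
      _ ≤ KX * (Mb * KY) := mul_le_mul_of_nonneg_left hwnorm hKX0
  have h5 : rX ^ L * ga X PX (L : ℤ) w < rX ^ L := lt_of_le_of_lt (le_trans h3 h4) hL
  have h6 : (0 : ℝ) < rX ^ L := by positivity
  nlinarith [ga_nonneg X PX (L : ℤ) w]

lemma abs_det_zpow {A : Matrix (Fin d) (Fin d) ℝ} (hA : IsUnit A.det) (z : ℤ) :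
    |(A ^ z).det| = |A.det| ^ z := by
  have hd0 : A.det ≠ 0 := hA.ne_zero
  rcases Int.eq_nat_or_neg z with ⟨n, rfl | rfl⟩
  · rw [zpow_natCast, Matrix.det_pow, abs_pow, zpow_natCast]
  · rw [Matrix.zpow_neg hA, zpow_natCast, Matrix.det_nonsing_inv, Matrix.det_pow,
      Ring.inverse_eq_inv, abs_inv, abs_pow, zpow_neg, zpow_natCast]

lemma multiset_one_lt_prod (s : Multiset ℝ) (hne : s ≠ 0) (h : ∀ x ∈ s, 1 < x) :
    1 < s.prod := by
  obtain ⟨a, ha⟩ := Multiset.exists_mem_of_ne_zero hne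
  have hs : s = a ::ₘ s.erase a := (Multiset.cons_erase ha).symm
  rw [hs, Multiset.prod_cons]
  have ha1 : 1 < a := h a ha
  have hp : 1 ≤ (s.erase a).prod := by
    apply Multiset.one_le_prod
    intro x hx
    exact (h x (Multiset.mem_of_mem_erase hx)).le
  calc (1 : ℝ) < a := ha1
    _ = a * 1 := (mul_one a).symm
    _ ≤ a * (s.erase a).prod := by
        apply mul_le_mul_of_nonneg_left hp (by linarith)

lemma root_mem_spectrum (M : Matrix (Fin d) (Fin d) ℂ) (μ : ℂ)
    (h : M.charpoly.IsRoot μ) : μ ∈ spectrum ℂ M := by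
  rw [spectrum.mem_iff]
  intro hunit
  have hdet : M.charpoly.eval μ = ((algebraMap ℂ (Matrix (Fin d) (Fin d) ℂ)) μ - M).det := by
    rw [Matrix.charpoly, eval_det, Matrix.matPolyEquiv_charmatrix]
    rw [Polynomial.eval_sub, Polynomial.eval_X, Polynomial.eval_C]
    rfl
  have h0 : M.charpoly.eval μ = 0 := h
  have h1 := hunit.map (Matrix.detMonoidHom (n := Fin d) (R := ℂ))
  rw [Matrix.coe_detMonoidHom, ← hdet, h0] at h1
  exact not_isUnit_zero h1

lemma one_lt_abs_det {A : Matrix (Fin d) (Fin d) ℝ} (hd : 0 < d) (hA : Expansive A) :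
    1 < |A.det| := by
  set Ac := A.map (algebraMap ℝ ℂ) with hAc
  have hdet : Ac.det = (algebraMap ℝ ℂ) A.det := (RingHom.map_det (algebraMap ℝ ℂ) A).symm
  have habs : |A.det| = ‖Ac.det‖ := by
    rw [hdet]
    simp
  rw [habs, Matrix.det_eq_prod_roots_charpoly]
  have hcard : Ac.charpoly.roots.card = d := by
    have h1 : Ac.charpoly.natDegree = d := by
      rw [Matrix.charpoly_natDegree_eq_dim, Fintype.card_fin]
    have h2 := (Polynomial.splits_iff_card_roots (f := Ac.charpoly)).mp
      (IsAlgClosed.splits Ac.charpoly)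
    rw [h1] at h2
    exact h2
  have hne : Ac.charpoly.roots ≠ 0 := by
    intro h0
    rw [h0] at hcard
    simp at hcard
    omega
  rw [show ‖Ac.charpoly.roots.prod‖ = (Ac.charpoly.roots.map (fun x => ‖x‖)).prod from
    map_multiset_prod (normHom : ℂ →*₀ ℝ) _]
  apply multiset_one_lt_prod
  · intro h0
    exact hne (by simpa using Multiset.map_eq_zero.mp h0)
  · intro x hx
    obtain ⟨μ, hμ, rfl⟩ := Multiset.mem_map.mp hx
    apply hA.2
    apply root_mem_spectrum
    exact (Polynomial.mem_roots (Polynomial.Monic.ne_zero (Matrix.charpoly_monic Ac))).mp hμ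

lemma smul_ball_eq (P : Matrix (Fin d) (Fin d) ℝ) {r : ℝ} (hr : 0 < r) :
    r • {y : EuclideanSpace ℝ (Fin d) | ‖ms P y‖ < 1}
      = {y : EuclideanSpace ℝ (Fin d) | ‖ms P y‖ < r} := by
  ext x
  rw [Set.mem_smul_set_iff_inv_smul_mem₀ hr.ne']
  simp only [Set.mem_setOf_eq]
  rw [ms_smul, norm_smul, Real.norm_eq_abs, abs_inv, abs_of_pos hr]
  rw [inv_mul_lt_iff₀ hr, mul_one]

section Main
attribute [local instance] Matrix.linftyOpNormedAddCommGroup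

lemma forward_dir {A B PA PB : Matrix (Fin d) (Fin d) ℝ}
    {ρA ρB : EuclideanSpace ℝ (Fin d) → ℝ}
    (hAdet : IsUnit A.det) (hBdet : IsUnit B.det)
    (hPAdet : IsUnit PA.det) (hPBdet : IsUnit PB.det)
    (ha : 1 < |A.det|) (hb : 1 < |B.det|)
    {rA rB : ℝ} (hrA : 1 < rA) (hrB : 1 < rB)
    (hsubA : ∀ y : EuclideanSpace ℝ (Fin d), ‖ms PA y‖ < rA → ga A PA 1 y < 1)
    (hsubB : ∀ y : EuclideanSpace ℝ (Fin d), ‖ms PB y‖ < rB → ga B PB 1 y < 1)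
    (hρAval : ∀ x i, 1 ≤ ga A PA i x → ga A PA (i+1) x < 1 → ρA x = |A.det| ^ i)
    (hρBval : ∀ x i, 1 ≤ ga B PB i x → ga B PB (i+1) x < 1 → ρB x = |B.det| ^ i)
    {C : ℝ} (hC1 : 1 ≤ C) (hC : ∀ x, (1/C) * ρA x ≤ ρB x ∧ ρB x ≤ C * ρA x) :
    ∃ M : ℝ, ∀ k : ℤ,
      ‖A ^ (-k) * B ^ ⌊Real.log |A.det| / Real.log |B.det| * (k : ℝ)⌋‖ ≤ M := by
  set c := Real.log |A.det| / Real.log |B.det| with hcdef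
  have ha0 : (0 : ℝ) < |A.det| := lt_trans one_pos ha
  have hb0 : (0 : ℝ) < |B.det| := lt_trans one_pos hb
  have hC0 : (0 : ℝ) < C := lt_of_lt_of_le one_pos hC1
  have hlogb : Real.log |B.det| ≠ 0 := (Real.log_pos hb).ne'
  have hexp : ∀ k : ℤ, |A.det| ^ k = |B.det| ^ (c * (k : ℝ)) := by
    intro k
    rw [← Real.rpow_intCast |A.det| k, Real.rpow_def_of_pos hb0, Real.rpow_def_of_pos ha0]
    congr 1
    have h0 : c * Real.log |B.det| = Real.log |A.det| := div_mul_cancel₀ _ hlogb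
    calc Real.log |A.det| * (k : ℝ) = (c * Real.log |B.det|) * (k : ℝ) := by rw [h0]
      _ = Real.log |B.det| * (c * (k : ℝ)) := by ring
  have hm1 : ∀ k : ℤ, |B.det| ^ (⌊c * (k : ℝ)⌋ : ℤ) ≤ |A.det| ^ k := by
    intro k
    rw [hexp k, ← Real.rpow_intCast |B.det| ⌊c * (k : ℝ)⌋]
    exact Real.rpow_le_rpow_of_exponent_le hb.le (Int.floor_le _)
  have key : ∀ j : Fin d, ∃ K : ℝ, 0 ≤ K ∧ ∀ k : ℤ,
      ‖ms (A ^ (-k) * B ^ ⌊c * (k : ℝ)⌋) (EuclideanSpace.single j (1:ℝ))‖ ≤ K := by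
    intro j
    set v := EuclideanSpace.single j (1:ℝ) with hv
    have hv0 : v ≠ 0 := by
      intro h
      have h1 : v j = 1 := by simp [hv]
      rw [h] at h1
      simp at h1
    obtain ⟨jB, hjB1, hjB2, _⟩ := exists_index hBdet hPBdet hrB hsubB hv0
    obtain ⟨N, hN⟩ := pow_unbounded_of_one_lt (C * |B.det| ^ jB) ha
    obtain ⟨K, hK0, hK⟩ := exists_opBound (A ^ (N : ℤ) * PA⁻¹)
    refine ⟨K, hK0, fun k => ?_⟩
    set mk := ⌊c * (k : ℝ)⌋ with hmk
    set y := ms (B ^ mk) v with hy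
    have hy0 : y ≠ 0 := ms_ne_zero (hBdet.det_zpow _) hv0
    obtain ⟨iy, hiy1, hiy2, _⟩ := exists_index hAdet hPAdet hrA hsubA hy0
    have hρBy : ρB y = |B.det| ^ (jB + mk) := by
      apply hρBval
      · rw [hy, ga_shift PB hBdet jB mk v]
        exact hjB1
      · have e : jB + mk + 1 = (jB + 1) + mk := by ring
        rw [e, hy, ga_shift PB hBdet (jB + 1) mk v]
        exact hjB2
    have hρAy : ρA y = |A.det| ^ iy := hρAval y iy hiy1 hiy2
    have hup : |A.det| ^ iy ≤ C * (|B.det| ^ jB * |A.det| ^ k) := by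
      have h1 : ρA y ≤ C * ρB y := by
        have h2 := (hC y).1
        calc ρA y = C * ((1/C) * ρA y) := by field_simp
          _ ≤ C * ρB y := mul_le_mul_of_nonneg_left h2 hC0.le
      rw [hρAy, hρBy] at h1
      have h3 : |B.det| ^ (jB + mk) = |B.det| ^ jB * |B.det| ^ mk :=
        zpow_add₀ hb0.ne' _ _
      rw [h3] at h1
      calc |A.det| ^ iy ≤ C * (|B.det| ^ jB * |B.det| ^ mk) := h1
        _ ≤ C * (|B.det| ^ jB * |A.det| ^ k) := by
            apply mul_le_mul_of_nonneg_left _ hC0.le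
            apply mul_le_mul_of_nonneg_left (hm1 k) (by positivity)
    have hik : iy < (N : ℤ) + k := by
      rw [← zpow_lt_zpow_iff_right₀ ha]
      calc |A.det| ^ iy ≤ C * (|B.det| ^ jB * |A.det| ^ k)  := hup
        _ = (C * |B.det| ^ jB) * |A.det| ^ k := by ring
        _ < |A.det| ^ (N : ℕ) * |A.det| ^ k := by
            apply mul_lt_mul_of_pos_right hN (by positivity)
        _ = |A.det| ^ ((N : ℤ) + k) := by
            rw [zpow_add₀ ha0.ne', zpow_natCast]
    set w := ms (A ^ (-k)) y with hw
    have hgw : ga A PA (N : ℤ) w = ga A PA ((N : ℤ) + k) y := by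
      have h1 := ga_shift PA hAdet ((N : ℤ) + k) (-k) y
      rw [add_neg_cancel_right] at h1
      rw [hw, h1]
    have hga : ga A PA (N : ℤ) w < 1 := by
      rw [hgw]
      calc ga A PA ((N : ℤ) + k) y ≤ ga A PA (iy + 1) y :=
            ga_anti hAdet hrA hsubA (by omega) y
        _ < 1 := hiy2
    set z := ms PA (ms (A ^ (-(N : ℤ))) w) with hz
    have hzn : ‖z‖ < 1 := hga
    have hw2 : w = ms (A ^ (N : ℤ) * PA⁻¹) z := by
      rw [ms_mul, hz, ms_cancel hPAdet, ms_zpow_cancel hAdet]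
    have hwv : ms (A ^ (-k) * B ^ mk) v = w := by
      rw [ms_mul, ← hy, ← hw]
    calc ‖ms (A ^ (-k) * B ^ mk) v‖ = ‖w‖ := by rw [hwv]
      _ = ‖ms (A ^ (N : ℤ) * PA⁻¹) z‖ := by rw [← hw2]
      _ ≤ K * ‖z‖ := hK z
      _ ≤ K * 1 := mul_le_mul_of_nonneg_left hzn.le hK0
      _ = K := mul_one K
  choose K hK0 hK using key
  refine ⟨∑ j, K j, fun k => ?_⟩
  apply linfty_le_of_rows _ (Finset.sum_nonneg fun j _ => hK0 j)
  intro i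
  apply Finset.sum_le_sum
  intro j _
  set D := A ^ (-k) * B ^ ⌊c * (k : ℝ)⌋ with hD
  have h1 : (ms D (EuclideanSpace.single j (1:ℝ))) i = D i j := by
    simp [ms, Matrix.mulVec_single]
  calc |D i j| = |(ms D (EuclideanSpace.single j (1:ℝ))) i| := by rw [h1]
    _ ≤ ‖ms D (EuclideanSpace.single j (1:ℝ))‖ := abs_coord_le _ i
    _ ≤ K j := hK j k

lemma ms_smul_mat (t : ℝ) (X : Matrix (Fin d) (Fin d) ℝ) (x : EuclideanSpace ℝ (Fin d)) :
    ms (t • X) x = t • ms X x := by simp [ms, Matrix.smul_mulVec]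

lemma reverse_dir {A B PA PB : Matrix (Fin d) (Fin d) ℝ}
    {ρA ρB : EuclideanSpace ℝ (Fin d) → ℝ}
    (hAdet : IsUnit A.det) (hBdet : IsUnit B.det)
    (hPAdet : IsUnit PA.det) (hPBdet : IsUnit PB.det)
    (ha : 1 < |A.det|) (hb : 1 < |B.det|)
    {rA rB : ℝ} (hrA : 1 < rA) (hrB : 1 < rB)
    (hsubA : ∀ y : EuclideanSpace ℝ (Fin d), ‖ms PA y‖ < rA → ga A PA 1 y < 1)
    (hsubB : ∀ y : EuclideanSpace ℝ (Fin d), ‖ms PB y‖ < rB → ga B PB 1 y < 1)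
    (hρA0 : ρA 0 = 0) (hρB0 : ρB 0 = 0)
    (hρAval : ∀ x i, 1 ≤ ga A PA i x → ga A PA (i+1) x < 1 → ρA x = |A.det| ^ i)
    (hρBval : ∀ x i, 1 ≤ ga B PB i x → ga B PB (i+1) x < 1 → ρB x = |B.det| ^ i)
    {M0 : ℝ}
    (hM0 : ∀ k : ℤ,
      ‖A ^ (-k) * B ^ ⌊Real.log |A.det| / Real.log |B.det| * (k : ℝ)⌋‖ ≤ M0) :
    ∃ C : ℝ, 1 ≤ C ∧ ∀ x, (1 / C) * ρA x ≤ ρB x ∧ ρB x ≤ C * ρA x := by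
  set c := Real.log |A.det| / Real.log |B.det| with hcdef
  have ha0 : (0 : ℝ) < |A.det| := lt_trans one_pos ha
  have hb0 : (0 : ℝ) < |B.det| := lt_trans one_pos hb
  have hlogb : Real.log |B.det| ≠ 0 := (Real.log_pos hb).ne'
  have hc : 0 < c := div_pos (Real.log_pos ha) (Real.log_pos hb)
  have hexp : ∀ k : ℤ, |A.det| ^ k = |B.det| ^ (c * (k : ℝ)) := by
    intro k
    rw [← Real.rpow_intCast |A.det| k, Real.rpow_def_of_pos hb0, Real.rpow_def_of_pos ha0]
    congr 1
    have h0 : c * Real.log |B.det| = Real.log |A.det| := div_mul_cancel₀ _ hlogb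
    calc Real.log |A.det| * (k : ℝ) = (c * Real.log |B.det|) * (k : ℝ) := by rw [h0]
      _ = Real.log |B.det| * (c * (k : ℝ)) := by ring
  have hm1 : ∀ k : ℤ, |B.det| ^ (⌊c * (k : ℝ)⌋ : ℤ) ≤ |A.det| ^ k := by
    intro k
    rw [hexp k, ← Real.rpow_intCast |B.det| ⌊c * (k : ℝ)⌋]
    exact Real.rpow_le_rpow_of_exponent_le hb.le (Int.floor_le _)
  have hm2 : ∀ k : ℤ, |A.det| ^ k ≤ |B.det| * |B.det| ^ (⌊c * (k : ℝ)⌋ : ℤ) := by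
    intro k
    rw [hexp k]
    have h1 : |B.det| ^ (c * (k : ℝ)) ≤ |B.det| ^ ((⌊c * (k : ℝ)⌋ + 1 : ℤ) : ℝ) := by
      apply Real.rpow_le_rpow_of_exponent_le hb.le
      push_cast
      exact (Int.lt_floor_add_one _).le
    rw [Real.rpow_intCast] at h1
    calc |B.det| ^ (c * (k : ℝ)) ≤ |B.det| ^ (⌊c * (k : ℝ)⌋ + 1 : ℤ) := h1
      _ = |B.det| * |B.det| ^ (⌊c * (k : ℝ)⌋ : ℤ) := by
          rw [zpow_add_one₀ hb0.ne']
          ring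
  set R0 := max M0 1 with hR0def
  have hR1 : (1 : ℝ) ≤ R0 := le_max_right _ _
  have hR0 : (0 : ℝ) ≤ R0 := le_trans zero_le_one hR1
  have hent : ∀ (k : ℤ) (i j : Fin d), |(A ^ (-k) * B ^ ⌊c * (k : ℝ)⌋) i j| ≤ R0 := by
    intro k i j
    calc |(A ^ (-k) * B ^ ⌊c * (k : ℝ)⌋) i j| ≤ ‖A ^ (-k) * B ^ ⌊c * (k : ℝ)⌋‖ :=
          entry_le_linfty _ i j
      _ ≤ M0 := hM0 k
      _ ≤ R0 := le_max_left _ _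
  have hE1 : ∀ (k : ℤ) (x : EuclideanSpace ℝ (Fin d)),
      ‖ms (A ^ (-k) * B ^ ⌊c * (k : ℝ)⌋) x‖ ≤ ((d : ℝ) * d * R0) * ‖x‖ :=
    fun k x => ms_le_of_entries _ hR0 (hent k) x
  set Rd := (d.factorial : ℝ) * R0 ^ d with hRddef
  have hRd0 : 0 ≤ Rd := by positivity
  have hadj : ∀ (k : ℤ) (i j : Fin d),
      |(Matrix.adjugate (A ^ (-k) * B ^ ⌊c * (k : ℝ)⌋)) i j| ≤ Rd := by
    intro k i j
    rw [Matrix.adjugate_apply]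
    have hbnd : ∀ i' j' : Fin d,
        |((A ^ (-k) * B ^ ⌊c * (k : ℝ)⌋).updateRow j (Pi.single i 1)) i' j'| ≤ R0 := by
      intro i' j'
      rw [Matrix.updateRow_apply]
      split
      · rw [Pi.single_apply]
        split
        · simpa using hR1
        · simpa using hR0
      · exact hent k i' j'
    have h := Matrix.det_le (abv := AbsoluteValue.abs) (x := R0) hbnd
    simpa [hRddef, Fintype.card_fin, nsmul_eq_mul] using h
  have hdetD : ∀ k : ℤ, 1 / |B.det| ≤ |(A ^ (-k) * B ^ ⌊c * (k : ℝ)⌋).det| := by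
    intro k
    rw [Matrix.det_mul, abs_mul, abs_det_zpow hAdet, abs_det_zpow hBdet, zpow_neg]
    have hak : (0 : ℝ) < |A.det| ^ k := zpow_pos ha0 k
    rw [div_le_iff₀ hb0]
    have h2 := hm2 k
    calc (1 : ℝ) = (|A.det| ^ k)⁻¹ * |A.det| ^ k := (inv_mul_cancel₀ hak.ne').symm
      _ ≤ (|A.det| ^ k)⁻¹ * (|B.det| * |B.det| ^ (⌊c * (k : ℝ)⌋ : ℤ)) := by
          apply mul_le_mul_of_nonneg_left h2 (by positivity)
      _ = (|A.det| ^ k)⁻¹ * |B.det| ^ (⌊c * (k : ℝ)⌋ : ℤ) * |B.det| := by ring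
  have hE2 : ∀ (k : ℤ) (x : EuclideanSpace ℝ (Fin d)),
      ‖ms (B ^ (-⌊c * (k : ℝ)⌋) * A ^ k) x‖ ≤ (|B.det| * ((d : ℝ) * d * Rd)) * ‖x‖ := by
    intro k x
    set D := A ^ (-k) * B ^ ⌊c * (k : ℝ)⌋ with hD
    have hprod : D * (B ^ (-⌊c * (k : ℝ)⌋) * A ^ k) = 1 := by
      have h1 : B ^ (⌊c * (k : ℝ)⌋) * B ^ (-⌊c * (k : ℝ)⌋) = 1 := by
        have := Matrix.zpow_neg_mul_zpow_self (-⌊c * (k : ℝ)⌋) hBdet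
        rwa [neg_neg] at this
      rw [hD, mul_assoc, ← mul_assoc (B ^ (⌊c * (k : ℝ)⌋)), h1, one_mul]
      exact Matrix.zpow_neg_mul_zpow_self k hAdet
    have hinveq : B ^ (-⌊c * (k : ℝ)⌋) * A ^ k = (D.det)⁻¹ • D.adjugate := by
      rw [← Matrix.inv_eq_right_inv hprod, Matrix.inv_def, Ring.inverse_eq_inv]
    rw [hinveq, ms_smul_mat, norm_smul, Real.norm_eq_abs, abs_inv]
    have h5 : |D.det|⁻¹ ≤ |B.det| := by
      have h6 := hdetD k
      rw [← hD] at h6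
      have h7 : (0:ℝ) < 1 / |B.det| := by positivity
      calc |D.det|⁻¹ ≤ (1 / |B.det|)⁻¹ := by
            apply inv_anti₀ h7 h6
        _ = |B.det| := by rw [one_div, inv_inv]
    have h8 : ‖ms D.adjugate x‖ ≤ ((d : ℝ) * d * Rd) * ‖x‖ := by
      apply ms_le_of_entries _ hRd0 _ x
      intro i j
      have := hadj k i j
      rwa [← hD] at this
    calc |D.det|⁻¹ * ‖ms D.adjugate x‖ ≤ |B.det| * (((d : ℝ) * d * Rd) * ‖x‖) := by
          apply mul_le_mul h5 h8 (norm_nonneg _) hb0.le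
      _ = (|B.det| * ((d : ℝ) * d * Rd)) * ‖x‖ := by ring
  obtain ⟨L2, hL2⟩ := incl hBdet hPBdet hAdet hrA hsubA (fun k => k)
    (fun k => ⌊c * (k : ℝ)⌋) (by positivity) hE1
  obtain ⟨L1, hL1⟩ := incl hAdet hPAdet hBdet hrB hsubB (fun k => ⌊c * (k : ℝ)⌋)
    (fun k => k) (by positivity) hE2
  set C1 := |A.det| * |B.det| ^ L1 with hC1def
  set C2 := |B.det| ^ ((1 + c : ℝ)) * |A.det| ^ L2 with hC2def
  set C := max 1 (max C1 C2) with hCdef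
  have hCge1 : (1 : ℝ) ≤ C := le_max_left _ _
  have hC0 : (0 : ℝ) < C := lt_of_lt_of_le one_pos hCge1
  have hC1le : C1 ≤ C := le_trans (le_max_left _ _) (le_max_right _ _)
  have hC2le : C2 ≤ C := le_trans (le_max_right _ _) (le_max_right _ _)
  refine ⟨C, hCge1, fun x => ?_⟩
  rcases eq_or_ne x 0 with rfl | hx
  · rw [hρA0, hρB0]
    constructor <;> simp
  obtain ⟨i, hi1, hi2, _⟩ := exists_index hAdet hPAdet hrA hsubA hx
  obtain ⟨j, hj1, hj2, _⟩ := exists_index hBdet hPBdet hrB hsubB hx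
  have hρAx : ρA x = |A.det| ^ i := hρAval x i hi1 hi2
  have hρBx : ρB x = |B.det| ^ j := hρBval x j hj1 hj2
  have hρBpos : 0 < ρB x := by rw [hρBx]; exact zpow_pos hb0 j
  have hρApos : 0 < ρA x := by rw [hρAx]; exact zpow_pos ha0 i
  -- Claim 1 : ρB x ≤ C1 * ρA x
  have claim1 : ρB x ≤ C1 * ρA x := by
    have h1 : ga B PB (⌊c * ((i + 1 : ℤ) : ℝ)⌋ + (L1 : ℤ)) x < 1 := hL1 (i + 1) x hi2
    have hj : j < ⌊c * ((i + 1 : ℤ) : ℝ)⌋ + (L1 : ℤ) := by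
      by_contra hcon
      push_neg at hcon
      have := ga_anti hBdet hrB hsubB hcon x
      linarith
    rw [hρAx, hρBx]
    calc |B.det| ^ j ≤ |B.det| ^ (⌊c * ((i + 1 : ℤ) : ℝ)⌋ + (L1 : ℤ)) :=
          zpow_le_zpow_right₀ hb.le hj.le
      _ = |B.det| ^ (⌊c * ((i + 1 : ℤ) : ℝ)⌋ : ℤ) * |B.det| ^ (L1 : ℤ) :=
          zpow_add₀ hb0.ne' _ _
      _ ≤ |A.det| ^ (i + 1) * |B.det| ^ (L1 : ℤ) := by
          apply mul_le_mul_of_nonneg_right (hm1 (i + 1)) (by positivity)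
      _ = C1 * |A.det| ^ i := by
          rw [zpow_add₀ ha0.ne', hC1def, zpow_one, zpow_natCast]
          ring
  -- Claim 2 : ρA x ≤ C2 * ρB x
  have claim2 : ρA x ≤ C2 * ρB x := by
    set k0 := ⌈((j : ℝ) + 1) / c⌉ with hk0def
    have hck0 : ((j : ℝ) + 1) ≤ c * (k0 : ℝ) := by
      have h1 : ((j : ℝ) + 1) / c ≤ (k0 : ℝ) := Int.le_ceil _
      calc ((j : ℝ) + 1) = c * (((j : ℝ) + 1) / c) := by field_simp
        _ ≤ c * (k0 : ℝ) := mul_le_mul_of_nonneg_left h1 hc.le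
    have hfl : (j + 1 : ℤ) ≤ ⌊c * (k0 : ℝ)⌋ := by
      apply Int.le_floor.mpr
      push_cast
      exact hck0
    have h3 : ga B PB (⌊c * ((k0 : ℤ) : ℝ)⌋) x < 1 := by
      calc ga B PB (⌊c * ((k0 : ℤ) : ℝ)⌋) x ≤ ga B PB (j + 1) x :=
            ga_anti hBdet hrB hsubB hfl x
        _ < 1 := hj2
    have h4 : ga A PA (k0 + (L2 : ℤ)) x < 1 := hL2 k0 x h3
    have hik : i < k0 + (L2 : ℤ) := by
      by_contra hcon
      push_neg at hcon
      have := ga_anti hAdet hrA hsubA hcon x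
      linarith
    have hk0up : c * (k0 : ℝ) ≤ (j : ℝ) + 1 + c := by
      have h5 : (k0 : ℝ) < ((j : ℝ) + 1) / c + 1 := Int.ceil_lt_add_one _
      have h6 : c * (k0 : ℝ) ≤ c * (((j : ℝ) + 1) / c + 1) :=
        mul_le_mul_of_nonneg_left h5.le hc.le
      calc c * (k0 : ℝ) ≤ c * (((j : ℝ) + 1) / c + 1) := h6
        _ = (j : ℝ) + 1 + c := by field_simp
    have hak0 : |A.det| ^ k0 ≤ |B.det| ^ j * |B.det| ^ ((1 + c : ℝ)) := by
      rw [hexp k0]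
      have h7 : |B.det| ^ (c * (k0 : ℝ)) ≤ |B.det| ^ ((j : ℝ) + 1 + c) :=
        Real.rpow_le_rpow_of_exponent_le hb.le hk0up
      have h8 : |B.det| ^ ((j : ℝ) + 1 + c) = |B.det| ^ ((j : ℝ)) * |B.det| ^ ((1 + c : ℝ)) := by
        rw [← Real.rpow_add hb0]
        ring_nf
      rw [h8] at h7
      rwa [Real.rpow_intCast] at h7
    rw [hρAx, hρBx]
    calc |A.det| ^ i ≤ |A.det| ^ (k0 + (L2 : ℤ)) := zpow_le_zpow_right₀ ha.le hik.le
      _ = |A.det| ^ k0 * |A.det| ^ (L2 : ℤ) := zpow_add₀ ha0.ne' _ _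
      _ ≤ (|B.det| ^ j * |B.det| ^ ((1 + c : ℝ))) * |A.det| ^ (L2 : ℤ) := by
          apply mul_le_mul_of_nonneg_right hak0 (by positivity)
      _ = C2 * |B.det| ^ j := by
          rw [hC2def, zpow_natCast]
          ring
  constructor
  · have h1 : ρA x ≤ C * ρB x :=
      le_trans claim2 (mul_le_mul_of_nonneg_right hC2le hρBpos.le)
    calc (1 / C) * ρA x ≤ (1 / C) * (C * ρB x) := by
          apply mul_le_mul_of_nonneg_left h1 (by positivity)
      _ = ρB x := by field_simp
  · exact le_trans claim1 (mul_le_mul_of_nonneg_right hC1le hρApos.le)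

end Main

end StmtAux

/-- Two expansive matrices have equivalent step homogeneous quasi-norms if and only if
`sup_{k ∈ ℤ} ‖A^{-k} B^{⌊ck⌋}‖ < ∞`, where `c = ln |det A| / ln |det B|`. -/
theorem stmt2 {d : ℕ} (A B : Matrix (Fin d) (Fin d) ℝ)
    (hA : Expansive A) (hB : Expansive B)
    (ΩA ΩB : Set (EuclideanSpace ℝ (Fin d)))
    (hΩA : IsExpansiveEllipsoid A ΩA) (hΩB : IsExpansiveEllipsoid B ΩB)
    (ρA ρB : EuclideanSpace ℝ (Fin d) → ℝ)
    (hρA : IsStepQuasiNorm A ΩA ρA) (hρB : IsStepQuasiNorm B ΩB ρB) :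
    (∃ C : ℝ, 1 ≤ C ∧ ∀ x, (1 / C) * ρA x ≤ ρB x ∧ ρB x ≤ C * ρA x) ↔
      (∃ M : ℝ, ∀ k : ℤ,
        ‖A ^ (-k) * B ^ ⌊Real.log |A.det| / Real.log |B.det| * (k : ℝ)⌋‖ ≤ M) := by
  classical
  rcases Nat.eq_zero_or_pos d with hd0 | hd
  · subst hd0
    constructor
    · intro _
      refine ⟨0, fun k => ?_⟩
      have hz : (A ^ (-k) * B ^ ⌊Real.log |A.det| / Real.log |B.det| * (k : ℝ)⌋ :
          Matrix (Fin 0) (Fin 0) ℝ) = 0 := by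
        ext i j
        exact i.elim0
      rw [hz, norm_zero]
    · intro _
      refine ⟨1, le_refl 1, fun x => ?_⟩
      have hx : x = 0 := by ext i; exact i.elim0
      rw [hx, hρA.1, hρB.1]
      norm_num
  obtain ⟨⟨PA, hPAu, hΩAeq⟩, -, rA, hrA, hsA1, hsA2⟩ := hΩA
  obtain ⟨⟨PB, hPBu, hΩBeq⟩, -, rB, hrB, hsB1, hsB2⟩ := hΩB
  have hAdet : IsUnit A.det := (Matrix.isUnit_iff_isUnit_det A).mp hA.1
  have hBdet : IsUnit B.det := (Matrix.isUnit_iff_isUnit_det B).mp hB.1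
  have hPAdet : IsUnit PA.det := (Matrix.isUnit_iff_isUnit_det PA).mp hPAu
  have hPBdet : IsUnit PB.det := (Matrix.isUnit_iff_isUnit_det PB).mp hPBu
  have ha : 1 < |A.det| := StmtAux.one_lt_abs_det hd hA
  have hb : 1 < |B.det| := StmtAux.one_lt_abs_det hd hB
  have hsubA : ∀ y : EuclideanSpace ℝ (Fin d), ‖ms PA y‖ < rA → StmtAux.ga A PA 1 y < 1 := by
    intro y hy
    have h0 : (0 : ℝ) < rA := lt_trans one_pos hrA
    have hy' : y ∈ rA • ΩA := by
      rw [hΩAeq, StmtAux.smul_ball_eq PA h0]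
      exact hy
    have hy2 : y ∈ ms A '' ΩA := hsA2 hy'
    rw [hΩAeq] at hy2
    have hy3 : y ∈ ms (A ^ (1 : ℤ)) '' {x : EuclideanSpace ℝ (Fin d) | ‖ms PA x‖ < 1} := by
      rwa [zpow_one]
    exact (StmtAux.ga_mem PA hAdet 1 y).mp hy3
  have hsubB : ∀ y : EuclideanSpace ℝ (Fin d), ‖ms PB y‖ < rB → StmtAux.ga B PB 1 y < 1 := by
    intro y hy
    have h0 : (0 : ℝ) < rB := lt_trans one_pos hrB
    have hy' : y ∈ rB • ΩB := by
      rw [hΩBeq, StmtAux.smul_ball_eq PB h0]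
      exact hy
    have hy2 : y ∈ ms B '' ΩB := hsB2 hy'
    rw [hΩBeq] at hy2
    have hy3 : y ∈ ms (B ^ (1 : ℤ)) '' {x : EuclideanSpace ℝ (Fin d) | ‖ms PB x‖ < 1} := by
      rwa [zpow_one]
    exact (StmtAux.ga_mem PB hBdet 1 y).mp hy3
  have hρAval : ∀ (x : EuclideanSpace ℝ (Fin d)) (i : ℤ),
      1 ≤ StmtAux.ga A PA i x → StmtAux.ga A PA (i + 1) x < 1 → ρA x = |A.det| ^ i := by
    intro x i h1 h2
    apply hρA.2 i x
    constructor
    · rw [hΩAeq]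
      exact (StmtAux.ga_mem PA hAdet (i + 1) x).mpr h2
    · intro hm
      rw [hΩAeq] at hm
      exact absurd ((StmtAux.ga_mem PA hAdet i x).mp hm) (not_lt.mpr h1)
  have hρBval : ∀ (x : EuclideanSpace ℝ (Fin d)) (i : ℤ),
      1 ≤ StmtAux.ga B PB i x → StmtAux.ga B PB (i + 1) x < 1 → ρB x = |B.det| ^ i := by
    intro x i h1 h2
    apply hρB.2 i x
    constructor
    · rw [hΩBeq]
      exact (StmtAux.ga_mem PB hBdet (i + 1) x).mpr h2
    · intro hm
      rw [hΩBeq] at hm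
      exact absurd ((StmtAux.ga_mem PB hBdet i x).mp hm) (not_lt.mpr h1)
  constructor
  · rintro ⟨C, hC1, hC⟩
    exact StmtAux.forward_dir hAdet hBdet hPAdet hPBdet ha hb hrA hrB hsubA hsubB
      hρAval hρBval hC1 hC
  · rintro ⟨M0, hM0⟩
    exact StmtAux.reverse_dir hAdet hBdet hPAdet hPBdet ha hb hrA hrB hsubA hsubB
      hρA.1 hρB.1 hρAval hρBval hM0
end

section
/- Let A, B ∈ GL(d, ℝ) be expansive matrices. Then A and B are equivalent (their step homogeneous quasi-norms are equivalent) if and only if the transposes A* and B* are equivalent. -/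
open MeasureTheory
open scoped Pointwise

/-- Two expansive matrices are equivalent if their step homogeneous quasi-norms
(associated to expansive ellipsoids) are equivalent. -/
def StepEquivalent {d : ℕ} (A B : Matrix (Fin d) (Fin d) ℝ) : Prop :=
  ∃ (ΩA ΩB : Set (EuclideanSpace ℝ (Fin d)))
    (ρA ρB : EuclideanSpace ℝ (Fin d) → ℝ),
      IsExpansiveEllipsoid A ΩA ∧ IsExpansiveEllipsoid B ΩB ∧
      IsStepQuasiNorm A ΩA ρA ∧ IsStepQuasiNorm B ΩB ρB ∧
      ∃ C : ℝ, 1 ≤ C ∧ ∀ x, (1 / C) * ρA x ≤ ρB x ∧ ρB x ≤ C * ρA x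

namespace StepAux

open Matrix

variable {d : ℕ}

/-- operator norm of a matrix acting on Euclidean space -/
noncomputable def nrm {d : ℕ} (M : Matrix (Fin d) (Fin d) ℝ) : ℝ :=
  ‖Matrix.toEuclideanCLM (𝕜 := ℝ) M‖

/-- the open ellipsoid determined by `P` -/
def ell {d : ℕ} (P : Matrix (Fin d) (Fin d) ℝ) : Set (EuclideanSpace ℝ (Fin d)) :=
  {x | ‖ms P x‖ < 1}

lemma ms_mul (M N : Matrix (Fin d) (Fin d) ℝ) (x : EuclideanSpace ℝ (Fin d)) :
    ms (M * N) x = ms M (ms N x) :=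
  congrArg (WithLp.toLp 2) (Matrix.mulVec_mulVec x.ofLp M N).symm

lemma ms_one (x : EuclideanSpace ℝ (Fin d)) : ms (1 : Matrix (Fin d) (Fin d) ℝ) x = x :=
  congrArg (WithLp.toLp 2) (Matrix.one_mulVec x.ofLp)

lemma ms_zero (M : Matrix (Fin d) (Fin d) ℝ) : ms M (0 : EuclideanSpace ℝ (Fin d)) = 0 :=
  by simp [ms]

lemma ms_smul (M : Matrix (Fin d) (Fin d) ℝ) (t : ℝ) (x : EuclideanSpace ℝ (Fin d)) :
    ms M (t • x) = t • ms M x :=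
  by simp [ms, Matrix.mulVec_smul]

lemma ms_smul_mat (M : Matrix (Fin d) (Fin d) ℝ) (t : ℝ) (x : EuclideanSpace ℝ (Fin d)) :
    ms (t • M) x = t • ms M x :=
  by simp [ms, Matrix.smul_mulVec]

lemma norm_ms_le (M : Matrix (Fin d) (Fin d) ℝ) (x : EuclideanSpace ℝ (Fin d)) :
    ‖ms M x‖ ≤ nrm M * ‖x‖ :=
  (Matrix.toEuclideanCLM (𝕜 := ℝ) M).le_opNorm x

lemma nrm_nonneg (M : Matrix (Fin d) (Fin d) ℝ) : 0 ≤ nrm M := norm_nonneg _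

lemma nrm_mul_le (M N : Matrix (Fin d) (Fin d) ℝ) : nrm (M * N) ≤ nrm M * nrm N := by
  unfold nrm
  rw [_root_.map_mul]
  exact ContinuousLinearMap.opNorm_comp_le _ _

lemma nrm_transpose (M : Matrix (Fin d) (Fin d) ℝ) : nrm Mᵀ = nrm M := by
  unfold nrm
  have h1 : Mᵀ = star M := by
    ext i j; simp [Matrix.star_eq_conjTranspose, Matrix.conjTranspose_apply]
  rw [h1, map_star, ContinuousLinearMap.star_eq_adjoint]
  exact (ContinuousLinearMap.adjoint (𝕜 := ℝ)).norm_map _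

set_option synthInstance.maxHeartbeats 400000 in
lemma nrm_smul (t : ℝ) (M : Matrix (Fin d) (Fin d) ℝ) : nrm (t • M) = |t| * nrm M := by
  unfold nrm
  rw [_root_.map_smul]
  exact (norm_smul t (Matrix.toEuclideanCLM (𝕜 := ℝ) M)).trans (by rw [Real.norm_eq_abs])

lemma norm_ms_pos {M : Matrix (Fin d) (Fin d) ℝ} (hM : IsUnit M.det)
    {x : EuclideanSpace ℝ (Fin d)} (hx : x ≠ 0) : 0 < ‖ms M x‖ := by
  rw [norm_pos_iff]
  intro h
  apply hx
  have : ms M⁻¹ (ms M x) = x := by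
    rw [← ms_mul, Matrix.nonsing_inv_mul _ hM, ms_one]
  rw [← this, h, ms_zero]

lemma mem_ell {P : Matrix (Fin d) (Fin d) ℝ} {x : EuclideanSpace ℝ (Fin d)} :
    x ∈ ell P ↔ ‖ms P x‖ < 1 := Iff.rfl

lemma image_ell {M : Matrix (Fin d) (Fin d) ℝ} (hM : IsUnit M.det)
    (P : Matrix (Fin d) (Fin d) ℝ) : ms M '' ell P = ell (P * M⁻¹) := by
  ext y
  constructor
  · rintro ⟨x, hx, rfl⟩
    show ‖ms (P * M⁻¹) (ms M x)‖ < 1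
    rw [← ms_mul, Matrix.mul_assoc, Matrix.nonsing_inv_mul _ hM, Matrix.mul_one]
    exact hx
  · intro hy
    refine ⟨ms M⁻¹ y, ?_, ?_⟩
    · show ‖ms P (ms M⁻¹ y)‖ < 1
      rw [← ms_mul]
      exact hy
    · rw [← ms_mul, Matrix.mul_nonsing_inv _ hM, ms_one]

lemma nrm_le_one_iff (L : Matrix (Fin d) (Fin d) ℝ) :
    nrm L ≤ 1 ↔ ∀ x : EuclideanSpace ℝ (Fin d), ‖x‖ < 1 → ‖ms L x‖ < 1 := by
  constructor
  · intro h x hx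
    calc ‖ms L x‖ ≤ nrm L * ‖x‖ := norm_ms_le L x
    _ ≤ 1 * ‖x‖ := mul_le_mul_of_nonneg_right h (norm_nonneg x)
    _ = ‖x‖ := one_mul _
    _ < 1 := hx
  · intro h
    have : ∀ x : EuclideanSpace ℝ (Fin d), ‖ms L x‖ ≤ ‖x‖ := by
      intro x
      rcases eq_or_ne x 0 with rfl | hx
      · simp [ms_zero]
      · by_contra hc
        push_neg at hc
        have hxp : 0 < ‖x‖ := norm_pos_iff.mpr hx
        have hLp : 0 < ‖ms L x‖ := lt_trans hxp hc
        obtain ⟨c, hc1, hc2⟩ := exists_between ((div_lt_one hLp).mpr hc)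
        have hcp : 0 < c := lt_of_le_of_lt (div_nonneg hxp.le hLp.le) hc1
        have hz : ‖(c / ‖x‖) • x‖ < 1 := by
          rw [norm_smul, Real.norm_eq_abs, abs_of_pos (div_pos hcp hxp),
            div_mul_cancel₀ _ hxp.ne']
          exact hc2
        have := h _ hz
        rw [ms_smul, norm_smul, Real.norm_eq_abs, abs_of_pos (div_pos hcp hxp)] at this
        have h1 : 1 ≤ c / ‖x‖ * ‖ms L x‖ := by
          rw [div_mul_eq_mul_div, le_div_iff₀ hxp, one_mul]
          calc ‖x‖ = ‖x‖ / ‖ms L x‖ * ‖ms L x‖ := by field_simp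
          _ ≤ c * ‖ms L x‖ := mul_le_mul_of_nonneg_right hc1.le hLp.le
        linarith
    exact (Matrix.toEuclideanCLM (𝕜 := ℝ) L).opNorm_le_bound zero_le_one
      (fun x => by rw [one_mul]; exact this x)

lemma ell_subset_iff {P Q : Matrix (Fin d) (Fin d) ℝ} (hP : IsUnit P.det) :
    ell P ⊆ ell Q ↔ nrm (Q * P⁻¹) ≤ 1 := by
  constructor
  · intro h
    rw [nrm_le_one_iff]
    intro z hz
    have hmem : ms P⁻¹ z ∈ ell P := by
      show ‖ms P (ms P⁻¹ z)‖ < 1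
      rw [← ms_mul, Matrix.mul_nonsing_inv _ hP, ms_one]
      exact hz
    have := h hmem
    rw [mem_ell] at this
    rwa [ms_mul]
  · intro h x hx
    rw [mem_ell] at hx ⊢
    have hxe : ms Q x = ms (Q * P⁻¹) (ms P x) := by
      rw [← ms_mul, Matrix.mul_assoc, Matrix.nonsing_inv_mul _ hP, Matrix.mul_one]
    rw [hxe]
    calc ‖ms (Q * P⁻¹) (ms P x)‖ ≤ nrm (Q * P⁻¹) * ‖ms P x‖ := norm_ms_le _ _
    _ ≤ 1 * ‖ms P x‖ := mul_le_mul_of_nonneg_right h (norm_nonneg _)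
    _ = ‖ms P x‖ := one_mul _
    _ < 1 := hx

lemma smul_ell {t : ℝ} (ht : 0 < t) (P : Matrix (Fin d) (Fin d) ℝ) :
    t • ell P = ell (t⁻¹ • P) := by
  ext x
  rw [Set.mem_smul_set_iff_inv_smul_mem₀ ht.ne', mem_ell, mem_ell, ms_smul_mat, ← ms_smul]

lemma smul_inv_mat {c : ℝ} (hc : c ≠ 0) {M : Matrix (Fin d) (Fin d) ℝ} (hM : IsUnit M.det) :
    (c • M)⁻¹ = c⁻¹ • M⁻¹ := by
  apply Matrix.inv_eq_right_inv
  rw [smul_mul_smul_comm, mul_inv_cancel₀ hc, Matrix.mul_nonsing_inv _ hM, one_smul]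

lemma isUnit_det_smul {c : ℝ} (hc : c ≠ 0) {M : Matrix (Fin d) (Fin d) ℝ}
    (hM : IsUnit M.det) : IsUnit ((c • M).det) := by
  rw [Matrix.det_smul]
  exact (isUnit_iff_ne_zero).mpr (mul_ne_zero (pow_ne_zero _ hc) hM.ne_zero)

lemma det_toEuclideanLin (P : Matrix (Fin d) (Fin d) ℝ) :
    LinearMap.det (Matrix.toEuclideanLin (𝕜 := ℝ) (n := Fin d) P) = P.det := by
  rw [Matrix.toEuclideanLin_eq_toLin, LinearMap.det_toLin]

lemma volume_ell {P : Matrix (Fin d) (Fin d) ℝ} (hP : IsUnit P.det) :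
    volume (ell P) = ENNReal.ofReal |P.det|⁻¹
      * volume (Metric.ball (0 : EuclideanSpace ℝ (Fin d)) 1) := by
  have h1 : ell P = (Matrix.toEuclideanLin (𝕜 := ℝ) (n := Fin d) P) ⁻¹'
      Metric.ball (0 : EuclideanSpace ℝ (Fin d)) 1 := by
    ext x
    rw [mem_ell, Set.mem_preimage, mem_ball_zero_iff]
    rfl
  rw [h1, Measure.addHaar_preimage_linearMap volume
      (by rw [det_toEuclideanLin]; exact hP.ne_zero), det_toEuclideanLin, abs_inv]


/-- the chain of dilated ellipsoids -/
def chain (A P : Matrix (Fin d) (Fin d) ℝ) (i : ℤ) : Set (EuclideanSpace ℝ (Fin d)) :=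
  ms (A ^ i) '' ell P

/-- the norm controlling `chain B Q j ⊆ chain A P i` -/
noncomputable def gfun (A B P Q : Matrix (Fin d) (Fin d) ℝ) (i j : ℤ) : ℝ :=
  nrm (P * A ^ (-i) * (B ^ j * Q⁻¹))

lemma zero_mem_chain (A P : Matrix (Fin d) (Fin d) ℝ) (i : ℤ) : 0 ∈ chain A P i :=
  ⟨0, by rw [mem_ell, ms_zero, norm_zero]; exact one_pos, ms_zero _⟩

lemma chain_eq {A : Matrix (Fin d) (Fin d) ℝ} (hA : IsUnit A.det)
    (P : Matrix (Fin d) (Fin d) ℝ) (i : ℤ) : chain A P i = ell (P * A ^ (-i)) := by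
  unfold chain
  rw [image_ell (hA.det_zpow i) P, Matrix.zpow_neg hA i]

lemma mem_chain_iff {A : Matrix (Fin d) (Fin d) ℝ} (hA : IsUnit A.det)
    (P : Matrix (Fin d) (Fin d) ℝ) (i : ℤ) (x : EuclideanSpace ℝ (Fin d)) :
    x ∈ chain A P i ↔ ‖ms (P * A ^ (-i)) x‖ < 1 := by
  rw [chain_eq hA, mem_ell]

lemma mat_step {A P : Matrix (Fin d) (Fin d) ℝ} (hA : IsUnit A.det) (hP : IsUnit P.det)
    (i : ℤ) : (P * A⁻¹ * P⁻¹) * (P * A ^ (-i)) = P * A ^ (-(i+1)) := by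
  have h1 : (-(i+1) : ℤ) = -1 + -i := by ring
  rw [h1, Matrix.zpow_add hA, Matrix.zpow_neg_one]
  simp only [Matrix.mul_assoc]
  rw [← Matrix.mul_assoc P⁻¹ P, Matrix.nonsing_inv_mul _ hP, Matrix.one_mul]

lemma norm_step {A P : Matrix (Fin d) (Fin d) ℝ} {r : ℝ} (hA : IsUnit A.det)
    (hP : IsUnit P.det) (hs : nrm (P * A⁻¹ * P⁻¹) ≤ r⁻¹) (i : ℤ)
    (x : EuclideanSpace ℝ (Fin d)) :
    ‖ms (P * A ^ (-(i+1))) x‖ ≤ r⁻¹ * ‖ms (P * A ^ (-i)) x‖ := by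
  rw [← mat_step hA hP i, ms_mul]
  calc ‖ms (P * A⁻¹ * P⁻¹) (ms (P * A ^ (-i)) x)‖
      ≤ nrm (P * A⁻¹ * P⁻¹) * ‖ms (P * A ^ (-i)) x‖ := norm_ms_le _ _
    _ ≤ r⁻¹ * ‖ms (P * A ^ (-i)) x‖ := mul_le_mul_of_nonneg_right hs (norm_nonneg _)

lemma chain_step {A P : Matrix (Fin d) (Fin d) ℝ} {r : ℝ} (hA : IsUnit A.det)
    (hP : IsUnit P.det) (hr : 1 < r) (hs : nrm (P * A⁻¹ * P⁻¹) ≤ r⁻¹) (i : ℤ) :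
    chain A P i ⊆ chain A P (i+1) := by
  intro x hx
  rw [mem_chain_iff hA] at hx ⊢
  calc ‖ms (P * A ^ (-(i+1))) x‖ ≤ r⁻¹ * ‖ms (P * A ^ (-i)) x‖ := norm_step hA hP hs i x
    _ ≤ 1 * ‖ms (P * A ^ (-i)) x‖ :=
        mul_le_mul_of_nonneg_right (inv_lt_one_of_one_lt₀ hr).le (norm_nonneg _)
    _ = ‖ms (P * A ^ (-i)) x‖ := one_mul _
    _ < 1 := hx

lemma chain_mono {A P : Matrix (Fin d) (Fin d) ℝ} {r : ℝ} (hA : IsUnit A.det)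
    (hP : IsUnit P.det) (hr : 1 < r) (hs : nrm (P * A⁻¹ * P⁻¹) ≤ r⁻¹) {i j : ℤ}
    (hij : i ≤ j) : chain A P i ⊆ chain A P j :=
  Int.le_induction (motive := fun n _ => chain A P i ⊆ chain A P n) (subset_refl _)
    (fun n _ ih => ih.trans (chain_step hA hP hr hs n)) j hij

lemma norm_decay {A P : Matrix (Fin d) (Fin d) ℝ} {r : ℝ} (hA : IsUnit A.det)
    (hP : IsUnit P.det) (hr : 1 < r) (hs : nrm (P * A⁻¹ * P⁻¹) ≤ r⁻¹) (i : ℤ) (k : ℕ)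
    (x : EuclideanSpace ℝ (Fin d)) :
    ‖ms (P * A ^ (-(i + k))) x‖ ≤ r⁻¹ ^ k * ‖ms (P * A ^ (-i)) x‖ := by
  have hr0 : (0:ℝ) ≤ r⁻¹ := inv_nonneg.mpr (by linarith)
  induction k with
  | zero => simp
  | succ k ih =>
    have he : (i + ((k:ℕ)+1 : ℕ) : ℤ) = (i + k) + 1 := by push_cast; ring
    rw [he]
    calc ‖ms (P * A ^ (-(i + k + 1))) x‖
        ≤ r⁻¹ * ‖ms (P * A ^ (-(i + k))) x‖ := norm_step hA hP hs _ x
      _ ≤ r⁻¹ * (r⁻¹ ^ k * ‖ms (P * A ^ (-i)) x‖) := mul_le_mul_of_nonneg_left ih hr0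
      _ = r⁻¹ ^ (k+1) * ‖ms (P * A ^ (-i)) x‖ := by ring

lemma exists_mem_chain {A P : Matrix (Fin d) (Fin d) ℝ} {r : ℝ} (hA : IsUnit A.det)
    (hP : IsUnit P.det) (hr : 1 < r) (hs : nrm (P * A⁻¹ * P⁻¹) ≤ r⁻¹)
    (x : EuclideanSpace ℝ (Fin d)) : ∃ i : ℤ, x ∈ chain A P i := by
  obtain ⟨k, hk⟩ := pow_unbounded_of_one_lt ‖ms P x‖ hr
  refine ⟨k, ?_⟩
  rw [mem_chain_iff hA]
  have hdec := norm_decay hA hP hr hs 0 k x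
  simp only [zero_add, neg_zero, zpow_zero, Matrix.mul_one] at hdec
  have hp : (0:ℝ) < r ^ k := by positivity
  calc ‖ms (P * A ^ (-(k:ℤ))) x‖ ≤ r⁻¹ ^ k * ‖ms P x‖ := hdec
    _ < r⁻¹ ^ k * r ^ k := by
        rw [inv_pow]
        exact mul_lt_mul_of_pos_left hk (inv_pos.mpr hp)
    _ = 1 := by rw [inv_pow, inv_mul_cancel₀ hp.ne']

lemma exists_not_mem_chain {A P : Matrix (Fin d) (Fin d) ℝ} {r : ℝ} (hA : IsUnit A.det)
    (hP : IsUnit P.det) (hr : 1 < r) (hs : nrm (P * A⁻¹ * P⁻¹) ≤ r⁻¹)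
    {x : EuclideanSpace ℝ (Fin d)} (hx : x ≠ 0) : ∃ i : ℤ, x ∉ chain A P i := by
  have h0 : 0 < ‖ms P x‖ := norm_ms_pos hP hx
  obtain ⟨k, hk⟩ := pow_unbounded_of_one_lt (‖ms P x‖⁻¹) hr
  refine ⟨-(k:ℤ), fun hmem => ?_⟩
  rw [mem_chain_iff hA] at hmem
  have hdec := norm_decay hA hP hr hs (-(k:ℤ)) k x
  have he : (-(k:ℤ) + (k:ℕ) : ℤ) = 0 := by push_cast; ring
  rw [he] at hdec
  simp only [neg_zero, zpow_zero, Matrix.mul_one] at hdec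
  have hq : (0:ℝ) < r⁻¹ ^ k := by positivity
  have hlt : ‖ms P x‖ < r⁻¹ ^ k := by
    calc ‖ms P x‖ ≤ r⁻¹ ^ k * ‖ms (P * A ^ (-(-(k:ℤ)))) x‖ := hdec
      _ < r⁻¹ ^ k * 1 := mul_lt_mul_of_pos_left hmem hq
      _ = r⁻¹ ^ k := mul_one _
  rw [inv_pow] at hlt
  have hp : (0:ℝ) < r ^ k := by positivity
  have hcon := mul_lt_mul'' hlt hk (norm_nonneg _) (inv_nonneg.mpr h0.le)
  rw [mul_inv_cancel₀ h0.ne', inv_mul_cancel₀ hp.ne'] at hcon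
  exact lt_irrefl _ hcon

lemma exists_shell {A P : Matrix (Fin d) (Fin d) ℝ} {r : ℝ} (hA : IsUnit A.det)
    (hP : IsUnit P.det) (hr : 1 < r) (hs : nrm (P * A⁻¹ * P⁻¹) ≤ r⁻¹)
    {x : EuclideanSpace ℝ (Fin d)} (hx : x ≠ 0) :
    ∃ i : ℤ, x ∈ chain A P (i+1) \ chain A P i := by
  obtain ⟨n, hn⟩ := exists_mem_chain hA hP hr hs x
  obtain ⟨m, hm⟩ := exists_not_mem_chain hA hP hr hs hx
  have Hbdd : ∃ b : ℤ, ∀ z : ℤ, x ∈ chain A P z → b ≤ z := by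
    refine ⟨m + 1, fun z hz => ?_⟩
    by_contra hcon
    push_neg at hcon
    exact hm (chain_mono hA hP hr hs (by omega : z ≤ m) hz)
  obtain ⟨lb, hlb, hleast⟩ := Int.exists_least_of_bdd Hbdd ⟨n, hn⟩
  refine ⟨lb - 1, ?_, fun hcon => ?_⟩
  · rw [sub_add_cancel]; exact hlb
  · have := hleast _ hcon; omega

lemma shell_unique {A P : Matrix (Fin d) (Fin d) ℝ} {r : ℝ} (hA : IsUnit A.det)
    (hP : IsUnit P.det) (hr : 1 < r) (hs : nrm (P * A⁻¹ * P⁻¹) ≤ r⁻¹)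
    {x : EuclideanSpace ℝ (Fin d)} {i k : ℤ}
    (h1 : x ∈ chain A P (i+1) \ chain A P i) (h2 : x ∈ chain A P (k+1) \ chain A P k) :
    i = k := by
  by_contra hne
  rcases lt_or_gt_of_ne hne with h | h
  · exact h2.2 (chain_mono hA hP hr hs (by omega : i+1 ≤ k) h1.1)
  · exact h1.2 (chain_mono hA hP hr hs (by omega : k+1 ≤ i) h2.1)

open Classical in
noncomputable def rho (A P : Matrix (Fin d) (Fin d) ℝ) (x : EuclideanSpace ℝ (Fin d)) : ℝ :=
  if h : ∃ i : ℤ, x ∈ chain A P (i+1) \ chain A P i then |A.det| ^ h.choose else 0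

lemma rho_zero (A P : Matrix (Fin d) (Fin d) ℝ) : rho A P 0 = 0 := by
  unfold rho
  rw [dif_neg]
  rintro ⟨i, hi⟩
  exact hi.2 (zero_mem_chain A P i)

lemma rho_eq {A P : Matrix (Fin d) (Fin d) ℝ} {r : ℝ} (hA : IsUnit A.det)
    (hP : IsUnit P.det) (hr : 1 < r) (hs : nrm (P * A⁻¹ * P⁻¹) ≤ r⁻¹)
    {x : EuclideanSpace ℝ (Fin d)} {i : ℤ}
    (hx : x ∈ chain A P (i+1) \ chain A P i) : rho A P x = |A.det| ^ i := by
  unfold rho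
  rw [dif_pos ⟨i, hx⟩]
  congr 1
  exact shell_unique hA hP hr hs (Exists.choose_spec (⟨i, hx⟩ :
    ∃ n : ℤ, x ∈ chain A P (n+1) \ chain A P n)) hx

lemma chain_subset_iff {A B P Q : Matrix (Fin d) (Fin d) ℝ} (hA : IsUnit A.det)
    (hB : IsUnit B.det) (hP : IsUnit P.det) (hQ : IsUnit Q.det) (i j : ℤ) :
    chain B Q j ⊆ chain A P i ↔ gfun A B P Q i j ≤ 1 := by
  have hdet : IsUnit ((Q * B ^ (-j)).det) := by
    rw [Matrix.det_mul]
    exact hQ.mul (hB.det_zpow _)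
  rw [chain_eq hB, chain_eq hA, ell_subset_iff hdet]
  unfold gfun
  rw [Matrix.mul_inv_rev, Matrix.zpow_neg hB, Matrix.nonsing_inv_nonsing_inv _ (hB.det_zpow j),
    ← Matrix.mul_assoc]

lemma g_step {A P : Matrix (Fin d) (Fin d) ℝ} {r : ℝ} (hA : IsUnit A.det)
    (hP : IsUnit P.det) (hs : nrm (P * A⁻¹ * P⁻¹) ≤ r⁻¹)
    (B Q : Matrix (Fin d) (Fin d) ℝ) (i j : ℤ) :
    gfun A B P Q (i+1) j ≤ r⁻¹ * gfun A B P Q i j := by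
  unfold gfun
  have he : P * A ^ (-(i+1)) * (B ^ j * Q⁻¹) =
      (P * A⁻¹ * P⁻¹) * (P * A ^ (-i) * (B ^ j * Q⁻¹)) := by
    rw [← mat_step hA hP i, Matrix.mul_assoc]
  rw [he]
  calc nrm ((P * A⁻¹ * P⁻¹) * (P * A ^ (-i) * (B ^ j * Q⁻¹)))
      ≤ nrm (P * A⁻¹ * P⁻¹) * nrm (P * A ^ (-i) * (B ^ j * Q⁻¹)) := nrm_mul_le _ _
    _ ≤ r⁻¹ * nrm (P * A ^ (-i) * (B ^ j * Q⁻¹)) :=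
        mul_le_mul_of_nonneg_right hs (nrm_nonneg _)

lemma g_decay {A P : Matrix (Fin d) (Fin d) ℝ} {r : ℝ} (hA : IsUnit A.det)
    (hP : IsUnit P.det) (hr : 1 < r) (hs : nrm (P * A⁻¹ * P⁻¹) ≤ r⁻¹)
    (B Q : Matrix (Fin d) (Fin d) ℝ) (i j : ℤ) (k : ℕ) :
    gfun A B P Q (i + k) j ≤ r⁻¹ ^ k * gfun A B P Q i j := by
  have hr0 : (0:ℝ) ≤ r⁻¹ := inv_nonneg.mpr (by linarith)
  induction k with
  | zero => simp
  | succ k ih =>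
    have he : (i + ((k:ℕ)+1 : ℕ) : ℤ) = (i + k) + 1 := by push_cast; ring
    rw [he]
    calc gfun A B P Q (i + k + 1) j ≤ r⁻¹ * gfun A B P Q (i + k) j := g_step hA hP hs B Q _ j
      _ ≤ r⁻¹ * (r⁻¹ ^ k * gfun A B P Q i j) := mul_le_mul_of_nonneg_left ih hr0
      _ = r⁻¹ ^ (k+1) * gfun A B P Q i j := by ring

lemma g_transpose (A B P Q : Matrix (Fin d) (Fin d) ℝ) (hA : IsUnit A.det)
    (hB : IsUnit B.det) (hP : IsUnit P.det) (hQ : IsUnit Q.det) {cA cB : ℝ}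
    (hcA : 0 < cA) (hcB : 0 < cB) (i j : ℤ) :
    gfun Aᵀ Bᵀ (cA • P⁻¹ᵀ) (cB • Q⁻¹ᵀ) i j = (cA / cB) * gfun B A Q P (-j) (-i) := by
  have hQt : IsUnit (Qᵀ).det := by rwa [Matrix.det_transpose]
  have hQit : IsUnit ((Q⁻¹ᵀ)).det := by
    rw [Matrix.det_transpose, Matrix.det_nonsing_inv, Ring.inverse_eq_inv']
    exact (isUnit_iff_ne_zero).mpr (inv_ne_zero hQ.ne_zero)
  have h1 : (cB • Q⁻¹ᵀ)⁻¹ = cB⁻¹ • Qᵀ := by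
    rw [smul_inv_mat hcB.ne' hQit, Matrix.transpose_nonsing_inv,
      Matrix.nonsing_inv_nonsing_inv _ hQt]
  unfold gfun
  rw [h1]
  have h3 : (cA • P⁻¹ᵀ) * (Aᵀ) ^ (-i) * ((Bᵀ) ^ j * (cB⁻¹ • Qᵀ)) =
      (cA * cB⁻¹) • ((Q * B ^ j * (A ^ (-i) * P⁻¹))ᵀ) := by
    rw [← Matrix.transpose_zpow, ← Matrix.transpose_zpow]
    simp only [Matrix.transpose_mul, smul_mul_assoc, mul_smul_comm, smul_smul,
      Matrix.mul_assoc]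
    rw [mul_comm cB⁻¹ cA]
  rw [h3, nrm_smul, nrm_transpose]
  have habs : |cA * cB⁻¹| = cA / cB := by
    rw [abs_of_pos (by positivity), div_eq_mul_inv]
  rw [habs]
  simp [Matrix.mul_assoc]

lemma claim1 {A B P Q : Matrix (Fin d) (Fin d) ℝ} {rA rB : ℝ} (hA : IsUnit A.det)
    (hB : IsUnit B.det) (hP : IsUnit P.det) (hQ : IsUnit Q.det)
    (hrA : 1 < rA) (hrB : 1 < rB)
    (hsA : nrm (P * A⁻¹ * P⁻¹) ≤ rA⁻¹) (hsB : nrm (Q * B⁻¹ * Q⁻¹) ≤ rB⁻¹)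
    {a b C : ℝ} (ha : 1 ≤ a) (hb : 1 ≤ b) (hC : 0 < C)
    (hstar : ∀ i j : ℤ, ∀ x, x ∈ chain A P (i+1) \ chain A P i →
      x ∈ chain B Q (j+1) \ chain B Q j → a ^ i ≤ C * b ^ j)
    (i j : ℤ) (hlt : C * b ^ j < a ^ (i+1)) :
    chain B Q (j+1) ⊆ chain A P (i+1) := by
  intro x hxB
  by_contra hxA
  have hx0 : x ≠ 0 := by rintro rfl; exact hxA (zero_mem_chain A P (i+1))
  obtain ⟨i', hi'⟩ := exists_shell hA hP hrA hsA hx0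
  obtain ⟨j', hj'⟩ := exists_shell hB hQ hrB hsB hx0
  have hii : i + 1 ≤ i' := by
    by_contra hcon
    push_neg at hcon
    exact hxA (chain_mono hA hP hrA hsA (by omega : i' + 1 ≤ i + 1) hi'.1)
  have hjj : j' ≤ j := by
    by_contra hcon
    push_neg at hcon
    exact hj'.2 (chain_mono hB hQ hrB hsB (by omega : j + 1 ≤ j') hxB)
  have h1 : a ^ i' ≤ C * b ^ j' := hstar i' j' x hi' hj'
  have h2 : a ^ (i+1) ≤ a ^ i' := zpow_le_zpow_right₀ ha hii
  have h3 : b ^ j' ≤ b ^ j := zpow_le_zpow_right₀ hb hjj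
  have h4 : C * b ^ j' ≤ C * b ^ j := mul_le_mul_of_nonneg_left h3 hC.le
  linarith

lemma inv_cross {u v C : ℝ} (hu : 0 < u) (hv : 0 < v) (h : C * u < v) : C * v⁻¹ < u⁻¹ := by
  have h2 : C / v < 1 / u := by
    rw [div_lt_div_iff₀ hv hu]
    simpa using h
  simpa [div_eq_mul_inv, one_div] using h2

lemma inv_cross_le {u v C : ℝ} (hu : 0 < u) (hv : 0 < v) (h : u⁻¹ ≤ C * v⁻¹) : v ≤ C * u := by
  have h2 : 1 / u ≤ C / v := by simpa [one_div, div_eq_mul_inv] using h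
  rw [div_le_div_iff₀ hu hv] at h2
  linarith



lemma step_bound {A P : Matrix (Fin d) (Fin d) ℝ} {r : ℝ} (hA : IsUnit A.det)
    (hP : IsUnit P.det) (hr : 1 < r) (hsub : r • ell P ⊆ ms A '' ell P) :
    nrm (P * A⁻¹ * P⁻¹) ≤ r⁻¹ := by
  have h0 : (0:ℝ) < r := by linarith
  rw [smul_ell h0, image_ell hA] at hsub
  have h1 := (ell_subset_iff (isUnit_det_smul (inv_ne_zero h0.ne') hP)).mp hsub
  rw [smul_inv_mat (inv_ne_zero h0.ne') hP, inv_inv, mul_smul_comm, nrm_smul,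
    abs_of_pos h0] at h1
  have h2 := (le_div_iff₀' h0).mpr h1
  rwa [one_div] at h2

lemma ell_subset_smul (P : Matrix (Fin d) (Fin d) ℝ) {r : ℝ} (hr : 1 < r) :
    ell P ⊆ r • ell P := by
  intro x hx
  have h0 : (0:ℝ) < r := by linarith
  rw [smul_ell h0, mem_ell, ms_smul_mat, norm_smul, Real.norm_eq_abs,
    abs_of_pos (inv_pos.mpr h0)]
  calc r⁻¹ * ‖ms P x‖ ≤ 1 * ‖ms P x‖ :=
        mul_le_mul_of_nonneg_right (inv_lt_one_of_one_lt₀ hr).le (norm_nonneg _)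
    _ = ‖ms P x‖ := one_mul _
    _ < 1 := hx

lemma smul_subset_image {A P : Matrix (Fin d) (Fin d) ℝ} {r : ℝ} (hA : IsUnit A.det)
    (hP : IsUnit P.det) (hr : 1 < r) (hbound : nrm (P * A⁻¹ * P⁻¹) ≤ r⁻¹) :
    r • ell P ⊆ ms A '' ell P := by
  have h0 : (0:ℝ) < r := by linarith
  rw [smul_ell h0, image_ell hA]
  apply (ell_subset_iff (isUnit_det_smul (inv_ne_zero h0.ne') hP)).mpr
  rw [smul_inv_mat (inv_ne_zero h0.ne') hP, inv_inv, mul_smul_comm, nrm_smul, abs_of_pos h0]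
  calc r * nrm (P * A⁻¹ * P⁻¹) ≤ r * r⁻¹ := mul_le_mul_of_nonneg_left hbound h0.le
    _ = 1 := mul_inv_cancel₀ h0.ne'

lemma one_lt_absdet (hd : d ≠ 0) {A P : Matrix (Fin d) (Fin d) ℝ} {r : ℝ}
    (hP : IsUnit P.det) (hr : 1 < r) (hvol : volume (ell P) = 1)
    (hsub : r • ell P ⊆ ms A '' ell P) : 1 < |A.det| := by
  have h0 : (0:ℝ) < r := by linarith
  have himg : volume (ms A '' ell P) = ENNReal.ofReal |A.det| * volume (ell P) := by
    have he : ms A '' ell P = (Matrix.toEuclideanLin (𝕜 := ℝ) (n := Fin d) A) '' ell P := rfl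
    rw [he, Measure.addHaar_image_linearMap, det_toEuclideanLin]
  have hsm : volume (r • ell P) = ENNReal.ofReal (r ^ d) * volume (ell P) := by
    rw [Measure.addHaar_smul_of_nonneg volume h0.le, finrank_euclideanSpace_fin]
  have hmono : volume (r • ell P) ≤ volume (ms A '' ell P) := measure_mono hsub
  rw [himg, hsm, hvol, mul_one, mul_one] at hmono
  rw [ENNReal.ofReal_le_ofReal_iff (abs_nonneg _)] at hmono
  calc (1:ℝ) < r ^ d := one_lt_pow₀ hr hd
    _ ≤ |A.det| := hmono

lemma isUnit_det_inv_transpose {P : Matrix (Fin d) (Fin d) ℝ} (hP : IsUnit P.det) :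
    IsUnit ((P⁻¹ᵀ).det) := by
  rw [Matrix.det_transpose, Matrix.det_nonsing_inv, Ring.inverse_eq_inv']
  exact (isUnit_iff_ne_zero).mpr (inv_ne_zero hP.ne_zero)

lemma transpose_step_mat {A P : Matrix (Fin d) (Fin d) ℝ} (hA : IsUnit A.det)
    (hP : IsUnit P.det) {c : ℝ} (hc : 0 < c) :
    (c • P⁻¹ᵀ) * (Aᵀ)⁻¹ * (c • P⁻¹ᵀ)⁻¹ = (P * A⁻¹ * P⁻¹)ᵀ := by
  have hPt : IsUnit (Pᵀ).det := by rwa [Matrix.det_transpose]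
  rw [smul_inv_mat hc.ne' (isUnit_det_inv_transpose hP), Matrix.transpose_nonsing_inv,
    Matrix.nonsing_inv_nonsing_inv _ hPt]
  rw [smul_mul_assoc, smul_mul_assoc, mul_smul_comm, smul_smul, mul_inv_cancel₀ hc.ne',
    one_smul]
  rw [Matrix.transpose_mul, Matrix.transpose_mul, Matrix.transpose_nonsing_inv,
    Matrix.mul_assoc, Matrix.transpose_nonsing_inv]

lemma main (hd : d ≠ 0) (A B : Matrix (Fin d) (Fin d) ℝ)
    (hAu : IsUnit A.det) (hBu : IsUnit B.det) (h : StepEquivalent A B) :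
    StepEquivalent Aᵀ Bᵀ := by
  obtain ⟨ΩA, ΩB, ρA, ρB, hEA, hEB, hSA, hSB, C, hC1, hCeq⟩ := h
  obtain ⟨⟨P, hPu, hPΩ⟩, hvolA, rA, hrA, hA1, hA2⟩ := hEA
  obtain ⟨⟨Q, hQu, hQΩ⟩, hvolB, rB, hrB, hB1, hB2⟩ := hEB
  subst hPΩ
  subst hQΩ
  have hP : IsUnit P.det := (Matrix.isUnit_iff_isUnit_det P).mp hPu
  have hQ : IsUnit Q.det := (Matrix.isUnit_iff_isUnit_det Q).mp hQu
  have hsA : nrm (P * A⁻¹ * P⁻¹) ≤ rA⁻¹ := step_bound hAu hP hrA hA2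
  have hsB : nrm (Q * B⁻¹ * Q⁻¹) ≤ rB⁻¹ := step_bound hBu hQ hrB hB2
  have ha1 : 1 < |A.det| := one_lt_absdet hd hP hrA hvolA hA2
  have hb1 : 1 < |B.det| := one_lt_absdet hd hQ hrB hvolB hB2
  have ha0 : (0:ℝ) < |A.det| := by linarith
  have hb0 : (0:ℝ) < |B.det| := by linarith
  have hC0 : (0:ℝ) < C := by linarith
  have hapos : ∀ n : ℤ, (0:ℝ) < |A.det| ^ n := fun n => zpow_pos ha0 n
  have hbpos : ∀ n : ℤ, (0:ℝ) < |B.det| ^ n := fun n => zpow_pos hb0 n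
  -- the two halves of the quasi-norm equivalence, in index form
  have hstarAB : ∀ i j : ℤ, ∀ x, x ∈ chain A P (i+1) \ chain A P i →
      x ∈ chain B Q (j+1) \ chain B Q j → |A.det| ^ i ≤ C * |B.det| ^ j := by
    intro i j x h1 h2
    have e1 : ρA x = |A.det| ^ i := hSA.2 i x h1
    have e2 : ρB x = |B.det| ^ j := hSB.2 j x h2
    have h3 := (hCeq x).1
    rw [e1, e2, div_mul_eq_mul_div, one_mul, div_le_iff₀ hC0] at h3
    linarith
  have hstarBA : ∀ j i : ℤ, ∀ x, x ∈ chain B Q (j+1) \ chain B Q j →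
      x ∈ chain A P (i+1) \ chain A P i → |B.det| ^ j ≤ C * |A.det| ^ i := by
    intro j i x h2 h1
    have e1 : ρA x = |A.det| ^ i := hSA.2 i x h1
    have e2 : ρB x = |B.det| ^ j := hSB.2 j x h2
    have h3 := (hCeq x).2
    rw [e1, e2] at h3
    linarith
  -- normalizing scalars
  have hadP : (0:ℝ) < |P.det| := abs_pos.mpr hP.ne_zero
  have hadQ : (0:ℝ) < |Q.det| := abs_pos.mpr hQ.ne_zero
  have hd0 : ((d:ℝ)) ≠ 0 := Nat.cast_ne_zero.mpr hd
  set cA := |P.det| ^ ((2:ℝ) / (d:ℝ)) with hcA_def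
  set cB := |Q.det| ^ ((2:ℝ) / (d:ℝ)) with hcB_def
  have hcA : 0 < cA := Real.rpow_pos_of_pos hadP _
  have hcB : 0 < cB := Real.rpow_pos_of_pos hadQ _
  have hcAd : cA ^ d = |P.det| ^ 2 := by
    rw [hcA_def, ← Real.rpow_natCast (|P.det| ^ ((2:ℝ)/(d:ℝ))) d, ← Real.rpow_mul hadP.le,
      div_mul_cancel₀ _ hd0, show ((2:ℝ)) = ((2:ℕ):ℝ) by norm_num, Real.rpow_natCast]
  have hcBd : cB ^ d = |Q.det| ^ 2 := by
    rw [hcB_def, ← Real.rpow_natCast (|Q.det| ^ ((2:ℝ)/(d:ℝ))) d, ← Real.rpow_mul hadQ.le,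
      div_mul_cancel₀ _ hd0, show ((2:ℝ)) = ((2:ℕ):ℝ) by norm_num, Real.rpow_natCast]
  set P' := cA • P⁻¹ᵀ with hP'_def
  set Q' := cB • Q⁻¹ᵀ with hQ'_def
  have hP' : IsUnit P'.det := isUnit_det_smul hcA.ne' (isUnit_det_inv_transpose hP)
  have hQ' : IsUnit Q'.det := isUnit_det_smul hcB.ne' (isUnit_det_inv_transpose hQ)
  have hAt : IsUnit ((Aᵀ).det) := by rwa [Matrix.det_transpose]
  have hBt : IsUnit ((Bᵀ).det) := by rwa [Matrix.det_transpose]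
  have hsA' : nrm (P' * (Aᵀ)⁻¹ * P'⁻¹) ≤ rA⁻¹ := by
    rw [hP'_def, transpose_step_mat hAu hP hcA, nrm_transpose]
    exact hsA
  have hsB' : nrm (Q' * (Bᵀ)⁻¹ * Q'⁻¹) ≤ rB⁻¹ := by
    rw [hQ'_def, transpose_step_mat hBu hQ hcB, nrm_transpose]
    exact hsB
  have hdetP' : |P'.det| = |P.det| := by
    rw [hP'_def, Matrix.det_smul, Fintype.card_fin, Matrix.det_transpose,
      Matrix.det_nonsing_inv, Ring.inverse_eq_inv', abs_mul, abs_pow,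
      abs_of_pos hcA, abs_inv, hcAd, sq, mul_assoc, mul_inv_cancel₀ hadP.ne', mul_one]
  have hdetQ' : |Q'.det| = |Q.det| := by
    rw [hQ'_def, Matrix.det_smul, Fintype.card_fin, Matrix.det_transpose,
      Matrix.det_nonsing_inv, Ring.inverse_eq_inv', abs_mul, abs_pow,
      abs_of_pos hcB, abs_inv, hcBd, sq, mul_assoc, mul_inv_cancel₀ hadQ.ne', mul_one]
  have hvolA' : volume (ell P') = 1 := by
    rw [volume_ell hP', hdetP', ← volume_ell hP]
    exact hvolA
  have hvolB' : volume (ell Q') = 1 := by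
    rw [volume_ell hQ', hdetQ', ← volume_ell hQ]
    exact hvolB
  obtain ⟨k₀, hk₀⟩ := pow_unbounded_of_one_lt (cB / cA) hrA
  obtain ⟨k₁, hk₁⟩ := pow_unbounded_of_one_lt (cA / cB) hrB
  -- key index bound 1
  have key1 : ∀ i j : ℤ, ∀ x : EuclideanSpace ℝ (Fin d),
      x ∈ chain Aᵀ P' (i+1) \ chain Aᵀ P' i → x ∈ chain Bᵀ Q' (j+1) \ chain Bᵀ Q' j →
      |B.det| ^ j ≤ (C * |A.det| ^ (1 + (k₀:ℤ))) * |A.det| ^ i := by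
    intro i j x hxi hxj
    by_contra hcon
    push_neg at hcon
    have hsplit : |A.det| ^ (i+1+(k₀:ℤ)) = |A.det| ^ (1+(k₀:ℤ)) * |A.det| ^ i := by
      rw [show (i+1+(k₀:ℤ)) = (1+(k₀:ℤ))+i by ring, zpow_add₀ ha0.ne']
    have hstep1 : C * |A.det| ^ (i+1+(k₀:ℤ)) < |B.det| ^ j := by
      rw [hsplit, ← mul_assoc]
      exact hcon
    have hinv1 : C * |B.det| ^ (-j) < |A.det| ^ (-(i+1+(k₀:ℤ))) := by
      rw [_root_.zpow_neg, _root_.zpow_neg]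
      exact inv_cross (hapos _) (hbpos _) hstep1
    have hinv2 : C * |B.det| ^ (-j-1) < |A.det| ^ (-(i+1+(k₀:ℤ))) := by
      have hble : |B.det| ^ (-j-1 : ℤ) ≤ |B.det| ^ (-j : ℤ) :=
        zpow_le_zpow_right₀ hb1.le (by omega)
      have := mul_le_mul_of_nonneg_left hble hC0.le
      linarith
    have hc1 := claim1 hAu hBu hP hQ hrA hrB hsA hsB ha1.le hb1.le hC0 hstarAB
        (-(i+1+(k₀:ℤ))-1) (-j-1)
        (by rw [show ((-(i+1+(k₀:ℤ))-1)+1 : ℤ) = -(i+1+(k₀:ℤ)) by ring]; exact hinv2)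
    have hg1 := (chain_subset_iff hAu hBu hP hQ _ _).mp hc1
    rw [show ((-(i+1+(k₀:ℤ))-1)+1 : ℤ) = -(i+1)-(k₀:ℤ) by ring,
      show ((-j-1)+1 : ℤ) = -j by ring] at hg1
    have hg2 := g_decay hAu hP hrA hsA B Q (-(i+1)-(k₀:ℤ)) (-j) k₀
    rw [show (-(i+1)-(k₀:ℤ) + (k₀:ℕ) : ℤ) = -(i+1) by push_cast; ring] at hg2
    have hg3 : gfun A B P Q (-(i+1)) (-j) ≤ rA⁻¹ ^ k₀ :=
      le_trans hg2 (by
        calc rA⁻¹ ^ k₀ * gfun A B P Q (-(i+1)-(k₀:ℤ)) (-j) ≤ rA⁻¹ ^ k₀ * 1 :=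
              mul_le_mul_of_nonneg_left hg1 (by positivity)
          _ = rA⁻¹ ^ k₀ := mul_one _)
    have hrk : rA⁻¹ ^ k₀ ≤ cA / cB := by
      rw [inv_pow]
      have h2 := inv_anti₀ (div_pos hcB hcA) hk₀.le
      rwa [inv_div] at h2
    have hsub : chain Aᵀ P' (i+1) ⊆ chain Bᵀ Q' j := by
      apply (chain_subset_iff hBt hAt hQ' hP' j (i+1)).mpr
      rw [hQ'_def, hP'_def, g_transpose B A Q P hBu hAu hQ hP hcB hcA j (i+1)]
      calc (cB / cA) * gfun A B P Q (-(i+1)) (-j) ≤ (cB / cA) * (cA / cB) :=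
            mul_le_mul_of_nonneg_left (le_trans hg3 hrk) (div_pos hcB hcA).le
        _ = 1 := by field_simp
    exact hxj.2 (hsub hxi.1)
  -- key index bound 2
  have key2 : ∀ i j : ℤ, ∀ x : EuclideanSpace ℝ (Fin d),
      x ∈ chain Aᵀ P' (i+1) \ chain Aᵀ P' i → x ∈ chain Bᵀ Q' (j+1) \ chain Bᵀ Q' j →
      |A.det| ^ i ≤ (C * |B.det| ^ (1 + (k₁:ℤ))) * |B.det| ^ j := by
    intro i j x hxi hxj
    by_contra hcon
    push_neg at hcon
    have hsplit : |B.det| ^ (j+1+(k₁:ℤ)) = |B.det| ^ (1+(k₁:ℤ)) * |B.det| ^ j := by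
      rw [show (j+1+(k₁:ℤ)) = (1+(k₁:ℤ))+j by ring, zpow_add₀ hb0.ne']
    have hstep1 : C * |B.det| ^ (j+1+(k₁:ℤ)) < |A.det| ^ i := by
      rw [hsplit, ← mul_assoc]
      exact hcon
    have hinv1 : C * |A.det| ^ (-i) < |B.det| ^ (-(j+1+(k₁:ℤ))) := by
      rw [_root_.zpow_neg, _root_.zpow_neg]
      exact inv_cross (hbpos _) (hapos _) hstep1
    have hinv2 : C * |A.det| ^ (-i-1) < |B.det| ^ (-(j+1+(k₁:ℤ))) := by
      have hale : |A.det| ^ (-i-1 : ℤ) ≤ |A.det| ^ (-i : ℤ) :=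
        zpow_le_zpow_right₀ ha1.le (by omega)
      have := mul_le_mul_of_nonneg_left hale hC0.le
      linarith
    have hc1 := claim1 hBu hAu hQ hP hrB hrA hsB hsA hb1.le ha1.le hC0 hstarBA
        (-(j+1+(k₁:ℤ))-1) (-i-1)
        (by rw [show ((-(j+1+(k₁:ℤ))-1)+1 : ℤ) = -(j+1+(k₁:ℤ)) by ring]; exact hinv2)
    have hg1 := (chain_subset_iff hBu hAu hQ hP _ _).mp hc1
    rw [show ((-(j+1+(k₁:ℤ))-1)+1 : ℤ) = -(j+1)-(k₁:ℤ) by ring,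
      show ((-i-1)+1 : ℤ) = -i by ring] at hg1
    have hg2 := g_decay hBu hQ hrB hsB A P (-(j+1)-(k₁:ℤ)) (-i) k₁
    rw [show (-(j+1)-(k₁:ℤ) + (k₁:ℕ) : ℤ) = -(j+1) by push_cast; ring] at hg2
    have hg3 : gfun B A Q P (-(j+1)) (-i) ≤ rB⁻¹ ^ k₁ :=
      le_trans hg2 (by
        calc rB⁻¹ ^ k₁ * gfun B A Q P (-(j+1)-(k₁:ℤ)) (-i) ≤ rB⁻¹ ^ k₁ * 1 :=
              mul_le_mul_of_nonneg_left hg1 (by positivity)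
          _ = rB⁻¹ ^ k₁ := mul_one _)
    have hrk : rB⁻¹ ^ k₁ ≤ cB / cA := by
      rw [inv_pow]
      have h2 := inv_anti₀ (div_pos hcA hcB) hk₁.le
      rwa [inv_div] at h2
    have hsub : chain Bᵀ Q' (j+1) ⊆ chain Aᵀ P' i := by
      apply (chain_subset_iff hAt hBt hP' hQ' i (j+1)).mpr
      rw [hP'_def, hQ'_def, g_transpose A B P Q hAu hBu hP hQ hcA hcB i (j+1)]
      calc (cA / cB) * gfun B A Q P (-(j+1)) (-i) ≤ (cA / cB) * (cB / cA) :=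
            mul_le_mul_of_nonneg_left (le_trans hg3 hrk) (div_pos hcA hcB).le
        _ = 1 := by field_simp
    exact hxi.2 (hsub hxj.1)
  -- the final constant
  have honeA : (1:ℝ) ≤ |A.det| ^ (1 + (k₀:ℤ)) := by
    have := zpow_le_zpow_right₀ ha1.le (show (0:ℤ) ≤ 1 + (k₀:ℤ) by positivity)
    rwa [zpow_zero] at this
  have honeB : (1:ℝ) ≤ |B.det| ^ (1 + (k₁:ℤ)) := by
    have := zpow_le_zpow_right₀ hb1.le (show (0:ℤ) ≤ 1 + (k₁:ℤ) by positivity)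
    rwa [zpow_zero] at this
  have hC1p : 1 ≤ C * |A.det| ^ (1 + (k₀:ℤ)) := by nlinarith
  have hC'1 : (1:ℝ) ≤ max (C * |A.det| ^ (1 + (k₀:ℤ))) (C * |B.det| ^ (1 + (k₁:ℤ))) :=
    le_trans hC1p (le_max_left _ _)
  have hC'0 : (0:ℝ) < max (C * |A.det| ^ (1 + (k₀:ℤ))) (C * |B.det| ^ (1 + (k₁:ℤ))) := by
    linarith
  refine ⟨ell P', ell Q', rho Aᵀ P', rho Bᵀ Q', ?_, ?_, ?_, ?_,
    max (C * |A.det| ^ (1 + (k₀:ℤ))) (C * |B.det| ^ (1 + (k₁:ℤ))), hC'1, ?_⟩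
  · exact ⟨⟨P', (Matrix.isUnit_iff_isUnit_det P').mpr hP', rfl⟩, hvolA', rA, hrA,
      ell_subset_smul P' hrA, smul_subset_image hAt hP' hrA hsA'⟩
  · exact ⟨⟨Q', (Matrix.isUnit_iff_isUnit_det Q').mpr hQ', rfl⟩, hvolB', rB, hrB,
      ell_subset_smul Q' hrB, smul_subset_image hBt hQ' hrB hsB'⟩
  · exact ⟨rho_zero _ _, fun i x hx => rho_eq hAt hP' hrA hsA' hx⟩
  · exact ⟨rho_zero _ _, fun i x hx => rho_eq hBt hQ' hrB hsB' hx⟩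
  · intro x
    rcases eq_or_ne x 0 with rfl | hx
    · rw [rho_zero, rho_zero]
      constructor <;> simp
    · obtain ⟨i, hxi⟩ := exists_shell hAt hP' hrA hsA' hx
      obtain ⟨j, hxj⟩ := exists_shell hBt hQ' hrB hsB' hx
      have e1 : rho Aᵀ P' x = |A.det| ^ i := by
        rw [rho_eq hAt hP' hrA hsA' hxi, Matrix.det_transpose]
      have e2 : rho Bᵀ Q' x = |B.det| ^ j := by
        rw [rho_eq hBt hQ' hrB hsB' hxj, Matrix.det_transpose]
      have k1 := key1 i j x hxi hxj
      have k2 := key2 i j x hxi hxj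
      rw [e1, e2]
      constructor
      · rw [div_mul_eq_mul_div, one_mul, div_le_iff₀ hC'0]
        calc |A.det| ^ i ≤ (C * |B.det| ^ (1 + (k₁:ℤ))) * |B.det| ^ j := k2
          _ ≤ max (C * |A.det| ^ (1 + (k₀:ℤ))) (C * |B.det| ^ (1 + (k₁:ℤ))) * |B.det| ^ j :=
              mul_le_mul_of_nonneg_right (le_max_right _ _) (hbpos j).le
          _ = |B.det| ^ j * max (C * |A.det| ^ (1 + (k₀:ℤ))) (C * |B.det| ^ (1 + (k₁:ℤ))) :=
              mul_comm _ _
      · calc |B.det| ^ j ≤ (C * |A.det| ^ (1 + (k₀:ℤ))) * |A.det| ^ i := k1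
          _ ≤ max (C * |A.det| ^ (1 + (k₀:ℤ))) (C * |B.det| ^ (1 + (k₁:ℤ))) * |A.det| ^ i :=
              mul_le_mul_of_nonneg_right (le_max_left _ _) (hapos i).le


end StepAux


/-- Two expansive matrices are equivalent if and only if their transposes are equivalent. -/
theorem stmt3 {d : ℕ} (A B : Matrix (Fin d) (Fin d) ℝ)
    (hA : Expansive A) (hB : Expansive B) :
    StepEquivalent A B ↔ StepEquivalent A.transpose B.transpose := by
  rcases Nat.eq_zero_or_pos d with hd | hd
  · subst hd
    have hAT : A.transpose = A := by ext i j; exact i.elim0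
    have hBT : B.transpose = B := by ext i j; exact i.elim0
    rw [hAT, hBT]
  · have hd0 : d ≠ 0 := by omega
    have hAd : IsUnit A.det := (Matrix.isUnit_iff_isUnit_det A).mp hA.1
    have hBd : IsUnit B.det := (Matrix.isUnit_iff_isUnit_det B).mp hB.1
    constructor
    · exact StepAux.main hd0 A B hAd hBd
    · intro h
      have hAdt : IsUnit A.transpose.det := by rwa [Matrix.det_transpose]
      have hBdt : IsUnit B.transpose.det := by rwa [Matrix.det_transpose]
      have h2 := StepAux.main hd0 A.transpose B.transpose hAdt hBdt h
      rwa [Matrix.transpose_transpose, Matrix.transpose_transpose] at h2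
end

section
/- Let A, B ∈ GL(d, ℝ) be expansive matrices whose step homogeneous quasi-norms ρ_A, ρ_B are equivalent, and let Q, P ⊆ ℝ^d be open sets whose closures are compact subsets of ℝ^d \ {0}. Then there exists C > 0 such that for all i, j ∈ ℤ with A^i Q ∩ B^j P ≠ ∅, one has (1/C)·|det B|^j ≤ |det A|^i ≤ C·|det B|^j. -/
open MeasureTheory
open scoped Pointwise

section Aux

variable {d : ℕ}

lemma ms_mul' (M N : Matrix (Fin d) (Fin d) ℝ) (x : EuclideanSpace ℝ (Fin d)) :
    ms (M * N) x = ms M (ms N x) := by simp [ms, Matrix.mulVec_mulVec]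

lemma ms_one' (x : EuclideanSpace ℝ (Fin d)) : ms (1 : Matrix (Fin d) (Fin d) ℝ) x = x :=
  by simp [ms]

lemma ms_smul' (M : Matrix (Fin d) (Fin d) ℝ) (c : ℝ) (x : EuclideanSpace ℝ (Fin d)) :
    ms M (c • x) = c • ms M x := by simp [ms, Matrix.mulVec_smul]

lemma ms_zero' (M : Matrix (Fin d) (Fin d) ℝ) : ms M 0 = 0 := by simp [ms]

/-- `ms M` as a continuous linear map. -/
noncomputable def msL (M : Matrix (Fin d) (Fin d) ℝ) :
    EuclideanSpace ℝ (Fin d) →L[ℝ] EuclideanSpace ℝ (Fin d) :=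
  LinearMap.toContinuousLinearMap
    { toFun := ms M
      map_add' := fun x y => by simp [ms, Matrix.mulVec_add]
      map_smul' := fun c x => by simp [ms, Matrix.mulVec_smul] }

lemma ms_continuous' (M : Matrix (Fin d) (Fin d) ℝ) : Continuous (ms M) :=
  (msL M).continuous

lemma ms_cancel {M : Matrix (Fin d) (Fin d) ℝ} (h : IsUnit M.det)
    (x : EuclideanSpace ℝ (Fin d)) : ms M⁻¹ (ms M x) = x := by
  rw [← ms_mul', Matrix.nonsing_inv_mul M h, ms_one']

lemma ms_image_smul (M : Matrix (Fin d) (Fin d) ℝ) (c : ℝ)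
    (s : Set (EuclideanSpace ℝ (Fin d))) : ms M '' (c • s) = c • (ms M '' s) :=
  Set.image_smul_comm (ms M) c s (ms_smul' M c)

lemma ms_image_comp (M N : Matrix (Fin d) (Fin d) ℝ) (s : Set (EuclideanSpace ℝ (Fin d))) :
    ms (M * N) '' s = ms M '' (ms N '' s) := by
  rw [← Set.image_comp]
  exact Set.image_congr fun x _ => ms_mul' M N x

lemma shell_find {X : Type*} (S : ℤ → Set X) (x : X) :
    ∀ n : ℕ, ∀ a : ℤ, x ∉ S a → x ∈ S (a + n) →
      ∃ k, a ≤ k ∧ k < a + n ∧ x ∈ S (k+1) ∧ x ∉ S k := by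
  intro n
  induction n with
  | zero => intro a ha hb; rw [show a + ((0:ℕ):ℤ) = a by simp] at hb; exact absurd hb ha
  | succ n ih =>
      intro a ha hb
      by_cases h : x ∈ S (a + n)
      · obtain ⟨k, h1, h2, h3, h4⟩ := ih a ha h
        exact ⟨k, h1, by omega, h3, h4⟩
      · refine ⟨a + n, by omega, by omega, ?_, h⟩
        rwa [show (a+(n:ℤ))+1 = a + ((n+1:ℕ):ℤ) by push_cast; ring]

variable {A : Matrix (Fin d) (Fin d) ℝ} {Ω : Set (EuclideanSpace ℝ (Fin d))}
  {r : ℝ} {Pm : Matrix (Fin d) (Fin d) ℝ}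

lemma cover_aux (hdet : IsUnit A.det) (h2 : r • Ω ⊆ ms A '' Ω) :
    ∀ n : ℕ, (r ^ n) • Ω ⊆ ms (A ^ (n : ℤ)) '' Ω := by
  intro n
  induction n with
  | zero => simp [Set.image_congr (fun x _ => ms_one' x)]
  | succ n ih =>
      have key : ((r:ℝ)^(n+1)) • Ω ⊆ ms (A ^ ((n:ℤ)+1)) '' Ω := by
        calc ((r:ℝ)^(n+1)) • Ω = r • ((r^n) • Ω) := by rw [smul_smul, pow_succ']
        _ ⊆ r • (ms (A^(n:ℤ)) '' Ω) := Set.smul_set_mono ih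
        _ = ms (A^(n:ℤ)) '' (r • Ω) := (ms_image_smul _ _ _).symm
        _ ⊆ ms (A^(n:ℤ)) '' (ms A '' Ω) := Set.image_mono h2
        _ = ms (A^(n:ℤ) * A) '' Ω := (ms_image_comp _ _ _).symm
        _ = ms (A^((n:ℤ)+1)) '' Ω := by rw [Matrix.zpow_add_one hdet]
      have : ((n:ℤ)+1) = ((n+1 : ℕ) : ℤ) := by push_cast; ring
      rwa [this] at key

lemma inv_step (hdet : IsUnit A.det) (hr : 1 < r) (h2 : r • Ω ⊆ ms A '' Ω) :
    ms A⁻¹ '' Ω ⊆ r⁻¹ • Ω := by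
  rintro y ⟨x, hx, rfl⟩
  have : r • x ∈ ms A '' Ω := h2 (Set.smul_mem_smul_set hx)
  obtain ⟨z, hz, hze⟩ := this
  have hz' : ms A⁻¹ (r • x) = z := by rw [← hze, ms_cancel hdet]
  rw [ms_smul'] at hz'
  rw [Set.mem_inv_smul_set_iff₀ (by positivity : (r:ℝ) ≠ 0)]
  rw [hz']; exact hz

lemma shrink_aux (hdet : IsUnit A.det) (hr : 1 < r) (h2 : r • Ω ⊆ ms A '' Ω) :
    ∀ n : ℕ, ms (A ^ (-(n : ℤ))) '' Ω ⊆ (r ^ n)⁻¹ • Ω := by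
  intro n
  induction n with
  | zero => simp [Set.image_congr (fun x _ => ms_one' x)]
  | succ n ih =>
      have e : A ^ (-((n+1:ℕ) : ℤ)) = A ^ (-(n:ℤ)) * A⁻¹ := by
        have : (-((n+1:ℕ):ℤ)) = (-(n:ℤ)) + (-1) := by push_cast; ring
        rw [this, Matrix.zpow_add hdet, Matrix.zpow_neg_one]
      calc ms (A ^ (-((n+1:ℕ) : ℤ))) '' Ω = ms (A ^ (-(n:ℤ))) '' (ms A⁻¹ '' Ω) := by
            rw [e, ms_image_comp]
      _ ⊆ ms (A ^ (-(n:ℤ))) '' (r⁻¹ • Ω) := Set.image_mono (inv_step hdet hr h2)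
      _ = r⁻¹ • (ms (A ^ (-(n:ℤ))) '' Ω) := ms_image_smul _ _ _
      _ ⊆ r⁻¹ • ((r ^ n)⁻¹ • Ω) := Set.smul_set_mono ih
      _ = (r ^ (n+1))⁻¹ • Ω := by rw [smul_smul, ← mul_inv, ← pow_succ']

/-- The key uniform bound: on a compact set `K` away from `0`, the step quasi-norm of
`ms (A^i) x` is comparable to `|det A| ^ i`, uniformly. -/
lemma key_bound (hdet : IsUnit A.det) (hr : 1 < r)
    (h2 : r • Ω ⊆ ms A '' Ω)
    (hP : IsUnit Pm) (hΩeq : Ω = {x | ‖ms Pm x‖ < 1})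
    (ρ : EuclideanSpace ℝ (Fin d) → ℝ)
    (hρ : ∀ i : ℤ, ∀ x ∈ ms (A ^ (i + 1)) '' Ω \ ms (A ^ i) '' Ω, ρ x = |A.det| ^ i)
    (K : Set (EuclideanSpace ℝ (Fin d))) (hK : IsCompact K)
    (hK0 : (0 : EuclideanSpace ℝ (Fin d)) ∉ K) :
    ∃ c C : ℝ, 0 < c ∧ 0 < C ∧ ∀ x ∈ K, ∀ i : ℤ,
      c * |A.det| ^ i ≤ ρ (ms (A ^ i) x) ∧ ρ (ms (A ^ i) x) ≤ C * |A.det| ^ i := by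
  set t := |A.det| with ht_def
  have ht : 0 < t := abs_pos.mpr hdet.ne_zero
  rcases K.eq_empty_or_nonempty with hKe | hKne
  · exact ⟨1, 1, one_pos, one_pos, by simp [hKe]⟩
  have hΩpre : Ω = ms Pm ⁻¹' Metric.ball 0 1 := by
    rw [hΩeq]; ext x; simp [Metric.mem_ball, dist_zero_right]
  have hΩopen : IsOpen Ω := hΩpre ▸ Metric.isOpen_ball.preimage (ms_continuous' Pm)
  have h0Ω : (0 : EuclideanSpace ℝ (Fin d)) ∈ Ω := by
    rw [hΩeq]; simp [ms_zero']
  obtain ⟨ε, hε, hball⟩ := Metric.isOpen_iff.mp hΩopen 0 h0Ω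
  have hPdet : IsUnit Pm.det := (Matrix.isUnit_iff_isUnit_det Pm).mp hP
  set R : ℝ := ‖msL (Pm⁻¹)‖ + 1 with hR_def
  have hR0 : 0 < R := by positivity
  have hR : ∀ x ∈ Ω, ‖x‖ < R := by
    intro x hx
    rw [hΩeq] at hx
    have hx1 : ‖ms Pm x‖ < 1 := hx
    have hxe : ‖x‖ = ‖msL (Pm⁻¹) (ms Pm x)‖ := by
      have : msL (Pm⁻¹) (ms Pm x) = x := ms_cancel hPdet x
      rw [this]
    calc ‖x‖ = ‖msL (Pm⁻¹) (ms Pm x)‖ := hxe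
    _ ≤ ‖msL (Pm⁻¹)‖ * ‖ms Pm x‖ := (msL (Pm⁻¹)).le_opNorm _
    _ ≤ ‖msL (Pm⁻¹)‖ * 1 := mul_le_mul_of_nonneg_left hx1.le (norm_nonneg _)
    _ < R := by rw [mul_one, hR_def]; linarith
  obtain ⟨xmax, _, hmax⟩ := hK.exists_isMaxOn hKne continuous_norm.continuousOn
  set ρ₀ : ℝ := ‖xmax‖ + 1 with hρ₀_def
  have hρ₀pos : 0 < ρ₀ := by positivity
  have hρ₀ : ∀ x ∈ K, ‖x‖ < ρ₀ := fun x hx => lt_of_le_of_lt (hmax hx) (by linarith)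
  obtain ⟨xmin, hxminK, hmin⟩ := hK.exists_isMinOn hKne continuous_norm.continuousOn
  set δ : ℝ := ‖xmin‖ with hδ_def
  have hδpos : 0 < δ := by
    rw [hδ_def, norm_pos_iff]
    intro h0; exact hK0 (h0 ▸ hxminK)
  have hδ : ∀ x ∈ K, δ ≤ ‖x‖ := fun x hx => hmin hx
  obtain ⟨N, hN⟩ := pow_unbounded_of_one_lt (ρ₀ / ε) hr
  have hKN : ∀ x ∈ K, x ∈ ms (A ^ ((N:ℕ) : ℤ)) '' Ω := by
    intro x hx
    apply cover_aux hdet h2 N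
    rw [Set.mem_smul_set_iff_inv_smul_mem₀ (by positivity : (r:ℝ)^N ≠ 0)]
    apply hball
    rw [Metric.mem_ball, dist_zero_right, norm_smul]
    have he : ‖((r:ℝ)^N)⁻¹‖ = ((r:ℝ)^N)⁻¹ := by
      rw [Real.norm_eq_abs]; exact abs_of_pos (by positivity)
    rw [he]
    have hrN : (0:ℝ) < r ^ N := by positivity
    rw [inv_mul_lt_iff₀ hrN]
    have hlt : ρ₀ < ε * r ^ N := by
      rw [div_lt_iff₀ hε] at hN; linarith [hN]
    calc ‖x‖ < ρ₀ := hρ₀ x hx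
    _ < ε * r^N := hlt
    _ = r^N * ε := by ring
  obtain ⟨M, hM⟩ := pow_unbounded_of_one_lt (R / δ) hr
  have hKM : ∀ x ∈ K, x ∉ ms (A ^ (-(M:ℤ))) '' Ω := by
    intro x hx hmem
    have hmem' := shrink_aux hdet hr h2 M hmem
    obtain ⟨y, hy, hye⟩ := hmem'
    have hnorm : ‖x‖ = ((r:ℝ)^M)⁻¹ * ‖y‖ := by
      rw [← hye, norm_smul, Real.norm_eq_abs,
        abs_of_pos (by positivity : (0:ℝ) < ((r:ℝ)^M)⁻¹)]
    have h1' : ‖x‖ < ((r:ℝ)^M)⁻¹ * R :=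
      hnorm ▸ mul_lt_mul_of_pos_left (hR y hy) (by positivity)
    have h2' : ((r:ℝ)^M)⁻¹ * R < δ := by
      rw [div_lt_iff₀ hδpos] at hM
      rw [inv_mul_lt_iff₀ (by positivity : (0:ℝ) < (r:ℝ)^M)]
      calc R < δ * r^M := by linarith
      _ = r^M * δ := by ring
    linarith [hδ x hx]
  set c : ℝ := min (t ^ (-(M:ℤ))) (t ^ ((N:ℕ):ℤ)) with hc_def
  set C : ℝ := max (t ^ (-(M:ℤ))) (t ^ ((N:ℕ):ℤ)) with hC_def
  have hcpos : 0 < c := lt_min (zpow_pos ht _) (zpow_pos ht _)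
  have hCpos : 0 < C := lt_of_lt_of_le hcpos (min_le_max)
  refine ⟨c, C, hcpos, hCpos, ?_⟩
  intro x hx i
  have hxN : x ∈ ms (A ^ ((-(M:ℤ)) + ((M + N : ℕ) : ℤ))) '' Ω := by
    have e : (-(M:ℤ)) + ((M + N : ℕ) : ℤ) = ((N:ℕ):ℤ) := by push_cast; ring
    rw [e]; exact hKN x hx
  obtain ⟨k, hk1, hk2, hk3, hk4⟩ :=
    shell_find (fun n => ms (A ^ n) '' Ω) x (M + N) (-(M:ℤ)) (hKM x hx) hxN
  have hkN : k < ((N:ℕ):ℤ) := by push_cast at hk2 ⊢; omega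
  have hmem1 : ms (A ^ i) x ∈ ms (A ^ ((i + k) + 1)) '' Ω := by
    obtain ⟨w, hw, hwe⟩ := hk3
    refine ⟨w, hw, ?_⟩
    have e : A ^ ((i+k)+1) = A ^ i * A ^ (k+1) := by
      rw [← Matrix.zpow_add hdet]; ring_nf
    rw [e, ms_mul', hwe]
  have hmem2 : ms (A ^ i) x ∉ ms (A ^ (i + k)) '' Ω := by
    rintro ⟨w, hw, hwe⟩
    apply hk4
    refine ⟨w, hw, ?_⟩
    have e1 : ms (A ^ (-i)) (ms (A ^ i) x) = x := by
      rw [← ms_mul', ← Matrix.zpow_add hdet]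
      simp [ms_one']
    have e2 : ms (A ^ (-i)) (ms (A ^ (i+k)) w) = ms (A ^ k) w := by
      rw [← ms_mul', ← Matrix.zpow_add hdet]
      ring_nf
    rw [← e1, ← hwe, e2]
  have hval : ρ (ms (A ^ i) x) = t ^ (i + k) := hρ (i+k) _ ⟨hmem1, hmem2⟩
  have hsplit : t ^ (i + k) = t ^ i * t ^ k := zpow_add₀ ht.ne' i k
  have htk_lb : c ≤ t ^ k := by
    rcases le_or_gt 1 t with h | h
    · exact le_trans (min_le_left _ _) (zpow_le_zpow_right₀ h hk1)
    · exact le_trans (min_le_right _ _)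
        (zpow_le_zpow_right_of_le_one₀ ht h.le hkN.le)
  have htk_ub : t ^ k ≤ C := by
    rcases le_or_gt 1 t with h | h
    · exact le_trans (zpow_le_zpow_right₀ h hkN.le) (le_max_right _ _)
    · exact le_trans (zpow_le_zpow_right_of_le_one₀ ht h.le hk1) (le_max_left _ _)
  have hti : (0:ℝ) < t ^ i := zpow_pos ht i
  constructor
  · rw [hval, hsplit]
    calc c * t ^ i ≤ t ^ k * t ^ i := mul_le_mul_of_nonneg_right htk_lb hti.le
    _ = t ^ i * t ^ k := by ring
  · rw [hval, hsplit]
    calc t ^ i * t ^ k = t ^ k * t ^ i := by ring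
    _ ≤ C * t ^ i := mul_le_mul_of_nonneg_right htk_ub hti.le

end Aux

/-- If the step quasi-norms of expansive `A, B` are equivalent, then `|det A|^i ≍ |det B|^j`
whenever `A^i Q ∩ B^j P ≠ ∅`, for `Q, P` open with compact closure in `ℝ^d \ {0}`. -/
theorem stmt4 {d : ℕ} (A B : Matrix (Fin d) (Fin d) ℝ)
    (hA : Expansive A) (hB : Expansive B)
    (ΩA ΩB : Set (EuclideanSpace ℝ (Fin d)))
    (hΩA : IsExpansiveEllipsoid A ΩA) (hΩB : IsExpansiveEllipsoid B ΩB)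
    (ρA ρB : EuclideanSpace ℝ (Fin d) → ℝ)
    (hρA : IsStepQuasiNorm A ΩA ρA) (hρB : IsStepQuasiNorm B ΩB ρB)
    (C₀ : ℝ) (hC₀ : 1 ≤ C₀) (hequiv : ∀ x, (1 / C₀) * ρA x ≤ ρB x ∧ ρB x ≤ C₀ * ρA x)
    (Q P : Set (EuclideanSpace ℝ (Fin d))) (hQo : IsOpen Q) (hPo : IsOpen P)
    (hQc : IsCompact (closure Q)) (hPc : IsCompact (closure P))
    (hQ0 : (0 : EuclideanSpace ℝ (Fin d)) ∉ closure Q)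
    (hP0 : (0 : EuclideanSpace ℝ (Fin d)) ∉ closure P) :
    ∃ C : ℝ, 0 < C ∧ ∀ i j : ℤ,
      (ms (A ^ i) '' Q ∩ ms (B ^ j) '' P).Nonempty →
        (1 / C) * |B.det| ^ j ≤ |A.det| ^ i ∧ |A.det| ^ i ≤ C * |B.det| ^ j := by
  obtain ⟨⟨PA, hPA, hPAeq⟩, -, rA, hrA, h1A, h2A⟩ := hΩA
  obtain ⟨⟨PB, hPB, hPBeq⟩, -, rB, hrB, h1B, h2B⟩ := hΩB
  have hdetA : IsUnit A.det := (Matrix.isUnit_iff_isUnit_det A).mp hA.1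
  have hdetB : IsUnit B.det := (Matrix.isUnit_iff_isUnit_det B).mp hB.1
  obtain ⟨cA, CA, hcA, hCA, hboundA⟩ :=
    key_bound hdetA hrA h2A hPA hPAeq ρA hρA.2 (closure Q) hQc hQ0
  obtain ⟨cB, CB, hcB, hCB, hboundB⟩ :=
    key_bound hdetB hrB h2B hPB hPBeq ρB hρB.2 (closure P) hPc hP0
  have hC₀pos : 0 < C₀ := lt_of_lt_of_le one_pos hC₀
  set C : ℝ := C₀ * CB / cA + C₀ * CA / cB with hC_def
  have hCpos : 0 < C := by positivity
  refine ⟨C, hCpos, ?_⟩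
  rintro i j ⟨x, ⟨q, hq, hqe⟩, p, hp, hpe⟩
  have hq' : q ∈ closure Q := subset_closure hq
  have hp' : p ∈ closure P := subset_closure hp
  obtain ⟨hA1, hA2⟩ := hboundA q hq' i
  obtain ⟨hB1, hB2⟩ := hboundB p hp' j
  rw [hqe] at hA1 hA2
  rw [hpe] at hB1 hB2
  obtain ⟨he1, he2⟩ := hequiv x
  have he1' : ρA x ≤ C₀ * ρB x := by
    have := mul_le_mul_of_nonneg_left he1 hC₀pos.le
    calc ρA x = C₀ * ((1/C₀) * ρA x) := by field_simp
    _ ≤ C₀ * ρB x := this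
  set DA : ℝ := |A.det| ^ i with hDA_def
  set DB : ℝ := |B.det| ^ j with hDB_def
  have hDApos : 0 < DA := zpow_pos (abs_pos.mpr hdetA.ne_zero) i
  have hDBpos : 0 < DB := zpow_pos (abs_pos.mpr hdetB.ne_zero) j
  have keyA : cA * DA ≤ C₀ * (CB * DB) := by
    calc cA * DA ≤ ρA x := hA1
    _ ≤ C₀ * ρB x := he1'
    _ ≤ C₀ * (CB * DB) := mul_le_mul_of_nonneg_left hB2 hC₀pos.le
  have keyB : cB * DB ≤ C₀ * (CA * DA) := by
    calc cB * DB ≤ ρB x := hB1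
    _ ≤ C₀ * ρA x := he2
    _ ≤ C₀ * (CA * DA) := mul_le_mul_of_nonneg_left hA2 hC₀pos.le
  have stepA : DA ≤ (C₀ * CB / cA) * DB := by
    rw [div_mul_eq_mul_div, le_div_iff₀ hcA]
    nlinarith [keyA]
  have stepB : DB ≤ (C₀ * CA / cB) * DA := by
    rw [div_mul_eq_mul_div, le_div_iff₀ hcB]
    nlinarith [keyB]
  constructor
  · rw [one_div, inv_mul_le_iff₀ hCpos]
    calc DB ≤ (C₀ * CA / cB) * DA := stepB
    _ ≤ C * DA := by
        apply mul_le_mul_of_nonneg_right _ hDApos.le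
        rw [hC_def]
        have : (0:ℝ) < C₀ * CB / cA := by positivity
        linarith
  · calc DA ≤ (C₀ * CB / cA) * DB := stepA
    _ ≤ C * DB := by
        apply mul_le_mul_of_nonneg_right _ hDBpos.le
        rw [hC_def]
        have : (0:ℝ) < C₀ * CA / cB := by positivity
        linarith
end

section
/- Let A, B ∈ GL(d, ℝ) be expansive, α, β ∈ ℝ \ {0}, and Q, P ⊆ ℝ^d open with closures compact in ℝ^d \ {0}. Suppose there exists C > 0 such that (1/C)|det B|^{βj} ≤ |det A|^{αi} ≤ C|det B|^{βj} whenever A^i Q ∩ B^j P ≠ ∅. Then there exists N ∈ ℕ such that for all i, j ∈ ℤ: the set J_i = {j ∈ ℤ : A^iQ ∩ B^jP ≠ ∅} is contained in {j : |j − ⌊(α/β)·c·i⌋| ≤ N}, and the set I_j = {i ∈ ℤ : A^iQ ∩ B^jP ≠ ∅} is contained in {i : |i − ⌊(β/α)·(1/c)·j⌋| ≤ N}, where c = ln|det A| / ln|det B|. -/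
open MeasureTheory
open scoped Pointwise

section AuxHelpers

open Polynomial Matrix

lemma root_mem_spectrum_aux {n : Type*} [Fintype n] [DecidableEq n] {K : Type*} [Field K]
    (M : Matrix n n K) (μ : K) (h : M.charpoly.IsRoot μ) : μ ∈ spectrum K M := by
  rw [spectrum.mem_iff]
  intro hu
  have hdet : IsUnit (algebraMap K (Matrix n n K) μ - M).det :=
    (Matrix.isUnit_iff_isUnit_det _).mp hu
  have : M.charpoly.eval μ = ((scalar n) μ - M).det := by
    rw [charpoly, eval_det, matPolyEquiv_charmatrix]
    simp
  have halg : algebraMap K (Matrix n n K) μ = (scalar n) μ := by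
    ext i j
    simp [Matrix.algebraMap_matrix_apply, Matrix.scalar_apply, Matrix.diagonal]
  rw [halg, ← this, h.eq_zero] at hdet
  exact hdet.ne_zero rfl

lemma one_lt_multiset_prod_aux (s : Multiset ℝ) (hne : s ≠ 0) (h : ∀ x ∈ s, 1 < x) :
    1 < s.prod := by
  induction s using Multiset.induction_on with
  | empty => exact absurd rfl hne
  | cons a s ih =>
    rcases eq_or_ne s 0 with rfl | hs
    · simpa using h a (by simp)
    · have ha := h a (by simp)
      have hs' := ih hs (fun x hx => h x (by simp [hx]))
      rw [Multiset.prod_cons]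
      nlinarith

lemma one_lt_abs_det_aux {d : ℕ} (hd : d ≠ 0) (A : Matrix (Fin d) (Fin d) ℝ)
    (hA : Expansive A) : 1 < |A.det| := by
  set M : Matrix (Fin d) (Fin d) ℂ := A.map (algebraMap ℝ ℂ) with hM
  have hdet : M.det = (A.det : ℂ) := by
    rw [hM]
    exact (RingHom.map_det (algebraMap ℝ ℂ) A).symm
  have hprod : M.det = M.charpoly.roots.prod := Matrix.det_eq_prod_roots_charpoly M
  have hcard : M.charpoly.roots.card = d := by
    rw [(Polynomial.splits_iff_card_roots).mp (IsAlgClosed.splits M.charpoly),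
      Matrix.charpoly_natDegree_eq_dim, Fintype.card_fin]
  have habs : |A.det| = normHom M.det := by
    show |A.det| = ‖M.det‖
    rw [hdet]; simp
  rw [habs, hprod, map_multiset_prod]
  apply one_lt_multiset_prod_aux
  · intro h0
    rw [Multiset.map_eq_zero] at h0
    rw [h0] at hcard
    simp at hcard
    exact hd hcard.symm
  · intro x hx
    rw [Multiset.mem_map] at hx
    obtain ⟨μ, hμ, rfl⟩ := hx
    exact hA.2 μ (root_mem_spectrum_aux M μ (Polynomial.isRoot_of_mem_roots hμ))

end AuxHelpers

/-- If `|det A|^{αi} ≍ |det B|^{βj}` whenever `A^i Q ∩ B^j P ≠ ∅`, then the index sets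
`J_i` and `I_j` are contained in intervals of uniformly bounded length around
`⌊(α/β) c i⌋` resp. `⌊(β/α)(1/c) j⌋`, where `c = ln |det A| / ln |det B|`. -/
theorem stmt5 {d : ℕ} (A B : Matrix (Fin d) (Fin d) ℝ)
    (hA : Expansive A) (hB : Expansive B) (α β : ℝ) (hα : α ≠ 0) (hβ : β ≠ 0)
    (Q P : Set (EuclideanSpace ℝ (Fin d))) (hQo : IsOpen Q) (hPo : IsOpen P)
    (hQc : IsCompact (closure Q)) (hPc : IsCompact (closure P))
    (hQ0 : (0 : EuclideanSpace ℝ (Fin d)) ∉ closure Q)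
    (hP0 : (0 : EuclideanSpace ℝ (Fin d)) ∉ closure P)
    (C : ℝ) (hC : 0 < C)
    (hbound : ∀ i j : ℤ, (ms (A ^ i) '' Q ∩ ms (B ^ j) '' P).Nonempty →
      (1 / C) * |B.det| ^ (β * j) ≤ |A.det| ^ (α * i) ∧
        |A.det| ^ (α * i) ≤ C * |B.det| ^ (β * j)) :
    ∃ N : ℕ, ∀ i j : ℤ, (ms (A ^ i) '' Q ∩ ms (B ^ j) '' P).Nonempty →
      |j - ⌊α / β * (Real.log |A.det| / Real.log |B.det|) * i⌋| ≤ (N : ℤ) ∧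
      |i - ⌊β / α * (Real.log |A.det| / Real.log |B.det|)⁻¹ * j⌋| ≤ (N : ℤ) := by
  rcases eq_or_ne d 0 with rfl | hd
  · refine ⟨0, fun i j hne => ?_⟩
    exfalso
    obtain ⟨x, ⟨q, hq, _⟩, _⟩ := hne
    haveI : Subsingleton (EuclideanSpace ℝ (Fin 0)) :=
      ⟨fun a b => PiLp.ext fun i => i.elim0⟩
    exact hQ0 (subset_closure (Subsingleton.elim q 0 ▸ hq))
  · have ha : 1 < |A.det| := one_lt_abs_det_aux hd A hA
    have hb : 1 < |B.det| := one_lt_abs_det_aux hd B hB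
    set a := |A.det| with ha'
    set b := |B.det| with hb'
    set La := Real.log a with hLa
    set Lb := Real.log b with hLb
    have hLa0 : 0 < La := Real.log_pos ha
    have hLb0 : 0 < Lb := Real.log_pos hb
    set Mc := |Real.log C| with hMc
    have hMc0 : 0 ≤ Mc := abs_nonneg _
    set K1 := Mc / (|β| * Lb) with hK1
    set K2 := Mc / (|α| * La) with hK2
    have hK10 : 0 ≤ K1 := by positivity
    have hK20 : 0 ≤ K2 := by positivity
    refine ⟨⌈K1⌉₊ + ⌈K2⌉₊ + 1, fun i j hne => ?_⟩
    obtain ⟨h1, h2⟩ := hbound i j hne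
    have ha0 : (0:ℝ) < a := lt_trans one_pos ha
    have hb0 : (0:ℝ) < b := lt_trans one_pos hb
    -- log inequalities
    have l2 : α * i * La ≤ Real.log C + β * j * Lb := by
      have := Real.log_le_log (by positivity) h2
      rwa [Real.log_rpow ha0, Real.log_mul (ne_of_gt hC) (by positivity),
        Real.log_rpow hb0] at this
    have l1 : β * j * Lb - Real.log C ≤ α * i * La := by
      have := Real.log_le_log (by positivity) h1
      rw [Real.log_rpow ha0, Real.log_mul (by positivity) (by positivity),
        Real.log_rpow hb0, Real.log_div one_ne_zero (ne_of_gt hC), Real.log_one,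
        zero_sub, neg_add_eq_sub, ← hLa, ← hLb] at this
      linarith
    have key : |α * i * La - β * j * Lb| ≤ Mc := by
      rw [hMc, abs_le]
      have e1 := neg_abs_le (Real.log C)
      have e2 := le_abs_self (Real.log C)
      constructor <;> linarith
    -- first bound
    have hfirst : |(j:ℝ) - (α / β * (La / Lb) * i)| ≤ K1 := by
      have heq : (j:ℝ) - (α / β * (La / Lb) * i) = (β * j * Lb - α * i * La) / (β * Lb) := by
        field_simp
      rw [heq, abs_div, abs_mul, abs_of_pos hLb0, abs_sub_comm]
      exact div_le_div_of_nonneg_right key (by positivity) |>.trans_eq rfl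
    have hsecond : |(i:ℝ) - (β / α * (La / Lb)⁻¹ * j)| ≤ K2 := by
      have heq : (i:ℝ) - (β / α * (La / Lb)⁻¹ * j) = (α * i * La - β * j * Lb) / (α * La) := by
        field_simp
      rw [heq, abs_div, abs_mul, abs_of_pos hLa0]
      exact div_le_div_of_nonneg_right key (by positivity)
    constructor
    · set x := α / β * (La / Lb) * (i:ℝ) with hx
      have hfl : |(j:ℝ) - (⌊x⌋ : ℝ)| ≤ K1 + 1 := by
        have h3 := Int.floor_le x
        have h4 := Int.lt_floor_add_one x
        rw [abs_le] at hfirst ⊢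
        constructor <;> [linarith [hfirst.1]; linarith [hfirst.2]]
      have : ((|j - ⌊x⌋| : ℤ) : ℝ) ≤ ((⌈K1⌉₊ + ⌈K2⌉₊ + 1 : ℕ) : ℝ) := by
        push_cast
        calc |(j:ℝ) - (⌊x⌋:ℝ)| ≤ K1 + 1 := hfl
          _ ≤ ⌈K1⌉₊ + ⌈K2⌉₊ + 1 := by
            have := Nat.le_ceil K1
            have : (0:ℝ) ≤ ⌈K2⌉₊ := by positivity
            linarith [Nat.le_ceil K1]
      exact_mod_cast this
    · set y := β / α * (La / Lb)⁻¹ * (j:ℝ) with hy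
      have hfl : |(i:ℝ) - (⌊y⌋ : ℝ)| ≤ K2 + 1 := by
        have h3 := Int.floor_le y
        have h4 := Int.lt_floor_add_one y
        rw [abs_le] at hsecond ⊢
        constructor <;> [linarith [hsecond.1]; linarith [hsecond.2]]
      have : ((|i - ⌊y⌋| : ℤ) : ℝ) ≤ ((⌈K1⌉₊ + ⌈K2⌉₊ + 1 : ℕ) : ℝ) := by
        push_cast
        calc |(i:ℝ) - (⌊y⌋:ℝ)| ≤ K2 + 1 := hfl
          _ ≤ ⌈K1⌉₊ + ⌈K2⌉₊ + 1 := by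
            have : (0:ℝ) ≤ ⌈K1⌉₊ := by positivity
            linarith [Nat.le_ceil K2]
      exact_mod_cast this
end

section
/- Let K₁, K₂ ⊆ ℝ^d be compact sets and p ∈ (0,1]. If f, ψ are Schwartz functions on ℝ^d with supp f̂ ⊆ K₂ and supp ψ̂ ⊆ K₁, then ‖f ∗ ψ‖_{L^p} ≤ [m(K₁ − K₂)]^{1/p − 1} · ‖f‖_{L^p} · ‖ψ‖_{L^p}, where K₁ − K₂ = {u − v : u ∈ K₁, v ∈ K₂} and m denotes Lebesgue measure. -/
open MeasureTheory SchwartzMap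
open MeasureTheory SchwartzMap Real Complex
open scoped Pointwise FourierTransform ENNReal RealInnerProductSpace

noncomputable section

variable {d : ℕ}

local notation "𝕍" => EuclideanSpace ℝ (Fin d)

lemma schwartz_hasTemperateGrowth (f : 𝓢(𝕍, ℂ)) : Function.HasTemperateGrowth ⇑f :=
  ⟨f.smooth', fun n => ⟨0, SchwartzMap.seminorm ℝ 0 n f, fun x => by
    simpa using f.norm_iteratedFDeriv_le_seminorm ℝ n x⟩⟩

lemma hasTemperateGrowth_sub (x : 𝕍) : Function.HasTemperateGrowth (fun y : 𝕍 => x - y) := by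
  have h : ∀ y : 𝕍, HasFDerivAt (fun y : 𝕍 => x - y) (-(ContinuousLinearMap.id ℝ 𝕍)) y :=
    fun y => (hasFDerivAt_id y).const_sub x
  apply Function.HasTemperateGrowth.of_fderiv (k := 1) (C := ‖x‖ + 1)
  · have h2 : fderiv ℝ (fun y : 𝕍 => x - y) = fun _ => -(ContinuousLinearMap.id ℝ 𝕍) :=
      funext fun y => (h y).fderiv
    rw [h2]; exact .const _
  · exact fun y => (h y).differentiableAt
  · intro y
    have h3 : ‖x - y‖ ≤ ‖x‖ + ‖y‖ := norm_sub_le x y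
    simp only [pow_one]
    nlinarith [norm_nonneg (y : 𝕍), norm_nonneg x]

/-- `y ↦ ψ (x - y)` as a Schwartz map. -/
def shiftReflect (ψ : 𝓢(𝕍, ℂ)) (x : 𝕍) : 𝓢(𝕍, ℂ) :=
  compCLM (𝕜 := ℝ) (hasTemperateGrowth_sub x)
    ⟨1, ‖x‖ + 1, fun y => by
      have h3 : ‖(y : 𝕍)‖ ≤ ‖x‖ + ‖x - y‖ := by
        simpa using norm_sub_le x (x - y)
      simp only [pow_one]
      nlinarith [norm_nonneg (x - y), norm_nonneg x]⟩ ψ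

@[simp] lemma shiftReflect_apply (ψ : 𝓢(𝕍, ℂ)) (x y : 𝕍) :
    shiftReflect ψ x y = ψ (x - y) := rfl

/-- product of Schwartz maps -/
def mulS (f g : 𝓢(𝕍, ℂ)) : 𝓢(𝕍, ℂ) :=
  bilinLeftCLM (ContinuousLinearMap.mul ℝ ℂ) (schwartz_hasTemperateGrowth g) f

@[simp] lemma mulS_apply (f g : 𝓢(𝕍, ℂ)) (x : 𝕍) : mulS f g x = f x * g x := rfl

lemma schwartz_decay_bound (f : 𝓢(𝕍, ℂ)) (k : ℕ) :
    ∃ C : ℝ, 0 ≤ C ∧ ∀ x, ‖f x‖ ≤ C * (1 + ‖x‖) ^ (-(k : ℝ)) := by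
  refine ⟨2 ^ k * (Finset.Iic (k, 0)).sup (fun m => SchwartzMap.seminorm ℝ m.1 m.2) f,
    by positivity, fun x => ?_⟩
  have h := one_add_le_sup_seminorm_apply (𝕜 := ℝ) (m := (k, 0)) le_rfl le_rfl f x
  rw [norm_iteratedFDeriv_zero] at h
  have hpos : (0 : ℝ) < 1 + ‖x‖ := by positivity
  rw [Real.rpow_neg hpos.le, Real.rpow_natCast, ← div_eq_mul_inv, le_div_iff₀ (by positivity)]
  linarith [h]

lemma schwartz_integrable_rpow (f : 𝓢(𝕍, ℂ)) {p : ℝ} (hp : 0 < p) :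
    Integrable (fun x : 𝕍 => ‖f x‖ ^ p) := by
  obtain ⟨k, hk⟩ := exists_nat_gt ((d : ℝ) / p)
  obtain ⟨C, hC0, hC⟩ := schwartz_decay_bound f k
  have hd : (Module.finrank ℝ (EuclideanSpace ℝ (Fin d)) : ℝ) < (k : ℝ) * p := by
    rw [div_lt_iff₀ hp] at hk
    simpa using hk
  have hint := (integrable_one_add_norm (E := EuclideanSpace ℝ (Fin d)) (μ := volume) (r := (k : ℝ) * p) hd).const_mul (C ^ p)
  apply hint.mono'
  · exact (f.continuous.norm.rpow_const (fun x => Or.inr hp.le)).aestronglyMeasurable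
  · refine Filter.Eventually.of_forall fun x => ?_
    have hpos : (0 : ℝ) < 1 + ‖x‖ := by positivity
    have h1 : ‖f x‖ ^ p ≤ (C * (1 + ‖x‖) ^ (-(k : ℝ))) ^ p :=
      Real.rpow_le_rpow (norm_nonneg _) (hC x) hp.le
    have h2 : (C * (1 + ‖x‖) ^ (-(k : ℝ))) ^ p
        = C ^ p * (1 + ‖x‖) ^ (-((k : ℝ) * p)) := by
      rw [Real.mul_rpow hC0 (Real.rpow_nonneg hpos.le _), ← Real.rpow_mul hpos.le, neg_mul]
    rw [Real.norm_eq_abs, _root_.abs_of_nonneg (Real.rpow_nonneg (norm_nonneg _) p)]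
    rw [h2] at h1
    exact h1

set_option maxHeartbeats 1000000 in
lemma nikolskii (g : 𝓢(𝕍, ℂ)) {Ω : Set 𝕍} (hΩc : IsCompact Ω)
    (hΩ : tsupport (𝓕 ⇑g) ⊆ Ω) {p : ℝ} (hp : 0 < p) (hp1 : p ≤ 1) :
    (∫ y, ‖g y‖) ^ p ≤ (volume Ω).toReal ^ (1 - p) * ∫ y, ‖g y‖ ^ p := by
  set V : ℝ := (volume Ω).toReal with hV
  set A : ℝ := ∫ y, ‖g y‖ with hA
  set S : ℝ := ∫ y, ‖g y‖ ^ p with hS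
  have hA0 : 0 ≤ A := integral_nonneg fun y => norm_nonneg _
  have hV0 : 0 ≤ V := ENNReal.toReal_nonneg
  have hS0 : 0 ≤ S := integral_nonneg fun y => Real.rpow_nonneg (norm_nonneg _) p
  have h𝓕int : Integrable (𝓕 ⇑g) volume := by
    have h : 𝓕 ⇑g = ⇑(fourierTransformCLM ℝ g) := rfl
    rw [h]; exact (fourierTransformCLM ℝ g).integrable
  have hN1 : ∀ y, ‖g y‖ ≤ V * A := by
    intro y
    have hinv := g.continuous.fourierInv_fourier_eq g.integrable h𝓕int
    have h1 : g y = ∫ ξ in Ω, 𝐞 ⟪ξ, y⟫ • (𝓕 ⇑g) ξ := by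
      conv_lhs => rw [← hinv]
      rw [Real.fourierInv_eq]
      exact (setIntegral_eq_integral_of_forall_compl_eq_zero fun ξ hξ => by
        rw [image_eq_zero_of_notMem_tsupport (fun h => hξ (hΩ h)), smul_zero]).symm
    rw [h1]
    calc ‖∫ ξ in Ω, 𝐞 ⟪ξ, y⟫ • (𝓕 ⇑g) ξ‖ ≤ A * V := by
          apply norm_setIntegral_le_of_norm_le_const hΩc.measure_lt_top
          intro ξ _
          have hb : ‖(𝓕 ⇑g) ξ‖ ≤ A :=
            VectorFourier.norm_fourierIntegral_le_integral_norm 𝐞 volume (innerₗ 𝕍) ⇑g ξ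
          calc ‖𝐞 ⟪ξ, y⟫ • (𝓕 ⇑g) ξ‖ = ‖(𝓕 ⇑g) ξ‖ := by
                rw [Circle.smul_def, norm_smul, Circle.norm_coe, one_mul]
            _ ≤ A := hb
      _ = V * A := mul_comm _ _
  have key : A ≤ (V * A) ^ (1 - p) * S := by
    have hpt : ∀ y, ‖g y‖ ≤ ‖g y‖ ^ p * (V * A) ^ (1 - p) := by
      intro y
      rcases eq_or_lt_of_le (norm_nonneg (g y)) with h0 | h0
      · rw [← h0, Real.zero_rpow hp.ne']
        positivity
      · have h1 : ‖g y‖ = ‖g y‖ ^ p * ‖g y‖ ^ (1 - p) := by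
          rw [← Real.rpow_add h0, add_sub_cancel, Real.rpow_one]
        nth_rewrite 1 [h1]
        have h1p : (0:ℝ) ≤ 1 - p := by linarith
        exact mul_le_mul_of_nonneg_left
          (Real.rpow_le_rpow (norm_nonneg (g y)) (hN1 y) h1p)
          (Real.rpow_nonneg (norm_nonneg (g y)) p)
    calc A ≤ ∫ y, ‖g y‖ ^ p * (V * A) ^ (1 - p) :=
          integral_mono g.integrable.norm ((schwartz_integrable_rpow g hp).mul_const _) hpt
      _ = (V * A) ^ (1 - p) * S := by rw [integral_mul_const]; ring
  rcases eq_or_lt_of_le hA0 with h | h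
  · rw [← h, Real.zero_rpow hp.ne']
    positivity
  · have h2 : (V * A) ^ (1 - p) = V ^ (1 - p) * A ^ (1 - p) := Real.mul_rpow hV0 hA0
    have hA1p : 0 < A ^ (1 - p) := Real.rpow_pos_of_pos h _
    have h3 : A / A ^ (1 - p) ≤ V ^ (1 - p) * S := by
      rw [div_le_iff₀ hA1p]
      calc A ≤ (V * A) ^ (1 - p) * S := key
        _ = V ^ (1 - p) * S * A ^ (1 - p) := by rw [h2]; ring
    have h4 : A ^ p = A / A ^ (1 - p) := by
      rw [eq_div_iff hA1p.ne', ← Real.rpow_add h, add_sub_cancel, Real.rpow_one]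
    rw [h4]
    exact h3

set_option maxHeartbeats 1000000 in
lemma fourier_shiftReflect (ψ : 𝓢(𝕍, ℂ)) (x ζ : 𝕍) :
    𝓕 ⇑(shiftReflect ψ x) ζ
      = Complex.exp (((-2 : ℝ) * π * ⟪x, ζ⟫ : ℝ) * Complex.I) * (𝓕 ⇑ψ) (-ζ) := by
  set G : 𝕍 → ℂ := fun u => Complex.exp (((-2 : ℝ) * π * ⟪x - u, ζ⟫ : ℝ) * Complex.I) * ψ u
    with hG
  calc 𝓕 ⇑(shiftReflect ψ x) ζ
      = ∫ y, Complex.exp ((↑((-2 : ℝ) * π * ⟪y, ζ⟫)) * Complex.I) • shiftReflect ψ x y :=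
        Real.fourier_eq' _ ζ
    _ = ∫ y, G (x - y) := by
        congr 1; funext y
        rw [hG, smul_eq_mul]
        simp only [shiftReflect_apply]
        congr 3
        rw [sub_sub_cancel]
    _ = ∫ u, G u := integral_sub_left_eq_self G volume x
    _ = Complex.exp (((-2 : ℝ) * π * ⟪x, ζ⟫ : ℝ) * Complex.I) * (𝓕 ⇑ψ) (-ζ) := by
        rw [Real.fourier_eq' (⇑ψ) (-ζ), ← integral_const_mul]
        congr 1; funext u
        simp only [hG, smul_eq_mul]
        have h1 : ((-2 : ℝ) * π * ⟪x - u, ζ⟫ : ℝ)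
            = ((-2 : ℝ) * π * ⟪x, ζ⟫) + ((-2 : ℝ) * π * ⟪u, -ζ⟫) := by
          rw [inner_sub_left, inner_neg_right]; ring
        rw [h1, Complex.ofReal_add, add_mul, Complex.exp_add]
        ring
  rfl

set_option maxHeartbeats 1000000 in
lemma fourier_mul_eq (f h : 𝓢(𝕍, ℂ)) (ξ : 𝕍) :
    𝓕 ⇑(mulS f h) ξ = ∫ η, (𝓕 ⇑f) η * (𝓕 ⇑h) (ξ - η) := by
  have hΦ : 𝓕 ⇑f = ⇑(fourierTransformCLM ℝ f) := rfl
  have hΦint : Integrable (𝓕 ⇑f) volume := by rw [hΦ]; exact (fourierTransformCLM ℝ f).integrable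
  have hΦcont : Continuous (𝓕 ⇑f) := by rw [hΦ]; exact (fourierTransformCLM ℝ f).continuous
  have hinv : ∀ y, f y
      = ∫ η, Complex.exp ((↑(2 * π * ⟪η, y⟫)) * Complex.I) • (𝓕 ⇑f) η := by
    intro y
    conv_lhs => rw [← f.continuous.fourierInv_fourier_eq f.integrable hΦint]
    rw [Real.fourierInv_eq']
  set F : 𝕍 × 𝕍 → ℂ := fun z =>
    Complex.exp ((↑((-2 : ℝ) * π * ⟪z.2, ξ⟫)) * Complex.I) *
      (Complex.exp ((↑(2 * π * ⟪z.1, z.2⟫)) * Complex.I) * (𝓕 ⇑f) z.1 * h z.2) with hF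
  have hFmeas : AEStronglyMeasurable F (volume.prod volume) := by
    apply Continuous.aestronglyMeasurable
    rw [hF]
    have c1 : Continuous fun z : 𝕍 × 𝕍 => ((-2 : ℝ) * π * ⟪z.2, ξ⟫ : ℝ) :=
      continuous_const.mul (Continuous.inner continuous_snd continuous_const)
    have c2 : Continuous fun z : 𝕍 × 𝕍 => (2 * π * ⟪z.1, z.2⟫ : ℝ) :=
      continuous_const.mul (Continuous.inner continuous_fst continuous_snd)
    have ce1 : Continuous fun z : 𝕍 × 𝕍 =>
        Complex.exp ((↑((-2 : ℝ) * π * ⟪z.2, ξ⟫)) * Complex.I) :=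
      Complex.continuous_exp.comp ((Complex.continuous_ofReal.comp c1).mul continuous_const)
    have ce2 : Continuous fun z : 𝕍 × 𝕍 =>
        Complex.exp ((↑(2 * π * ⟪z.1, z.2⟫)) * Complex.I) :=
      Complex.continuous_exp.comp ((Complex.continuous_ofReal.comp c2).mul continuous_const)
    exact ce1.mul ((ce2.mul (hΦcont.comp continuous_fst)).mul
      (h.continuous.comp continuous_snd))
  have hFnorm : ∀ z, ‖F z‖ = ‖(𝓕 ⇑f) z.1‖ * ‖h z.2‖ := by
    intro z
    rw [hF]
    simp only [norm_mul, Complex.norm_exp_ofReal_mul_I, one_mul]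
  have hFint : Integrable F (volume.prod volume) := by
    apply (hΦint.norm.mul_prod h.integrable.norm).mono' hFmeas
    exact Filter.Eventually.of_forall fun z => by rw [hFnorm z]
  calc 𝓕 ⇑(mulS f h) ξ
      = ∫ y, Complex.exp ((↑((-2 : ℝ) * π * ⟪y, ξ⟫)) * Complex.I) • (mulS f h y) :=
        Real.fourier_eq' _ ξ
    _ = ∫ y, ∫ η, F (η, y) := by
        congr 1; funext y
        simp only [mulS_apply]
        rw [hinv y, smul_eq_mul, ← integral_mul_const, ← integral_const_mul]
        congr 1
    _ = ∫ η, ∫ y, F (η, y) :=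
        (integral_integral_swap (f := fun η y => F (η, y)) hFint).symm
    _ = ∫ η, (𝓕 ⇑f) η * (𝓕 ⇑h) (ξ - η) := by
        congr 1; funext η
        rw [Real.fourier_eq' (⇑h) (ξ - η), ← integral_const_mul]
        congr 1; funext y
        simp only [hF, smul_eq_mul]
        have h1 : ((-2 : ℝ) * π * ⟪y, ξ - η⟫ : ℝ)
            = ((-2 : ℝ) * π * ⟪y, ξ⟫) + (2 * π * ⟪η, y⟫) := by
          rw [inner_sub_right, real_inner_comm η y]; ring
        rw [h1, Complex.ofReal_add, add_mul, Complex.exp_add]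
        ring
  rfl

lemma support_fourier_mul (f ψ : 𝓢(𝕍, ℂ)) {K₁ K₂ : Set 𝕍}
    (hK₁ : IsCompact K₁) (hK₂ : IsCompact K₂)
    (hf : tsupport (𝓕 ⇑f) ⊆ K₂) (hψ : tsupport (𝓕 ⇑ψ) ⊆ K₁) (x : 𝕍) :
    tsupport (𝓕 ⇑(mulS f (shiftReflect ψ x))) ⊆ K₂ - K₁ := by
  have hcomp : IsCompact (K₂ - K₁) := by
    rw [sub_eq_add_neg]; exact hK₂.add hK₁.neg
  apply closure_minimal ?_ hcomp.isClosed
  intro ξ hξ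
  by_contra hmem
  apply hξ
  rw [fourier_mul_eq]
  have hzero : ∀ η, (𝓕 ⇑f) η * (𝓕 ⇑(shiftReflect ψ x)) (ξ - η) = 0 := by
    intro η
    by_cases hη : (𝓕 ⇑f) η = 0
    · rw [hη, zero_mul]
    · by_cases hζ : (𝓕 ⇑ψ) (η - ξ) = 0
      · rw [fourier_shiftReflect, neg_sub, hζ, mul_zero, mul_zero]
      · exact absurd
          (Set.mem_sub.mpr ⟨η, hf (subset_tsupport _ hη), η - ξ,
            hψ (subset_tsupport _ hζ), by abel⟩) hmem
  simp only [hzero, integral_zero]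

set_option maxHeartbeats 2000000 in
/-- Triebel's convolution inequality for `p ∈ (0,1]` and band-limited Schwartz functions:
`‖f ∗ ψ‖_{L^p} ≤ m(K₁ - K₂)^{1/p - 1} ‖f‖_{L^p} ‖ψ‖_{L^p}`. -/
theorem stmt7 {d : ℕ} (K₁ K₂ : Set (EuclideanSpace ℝ (Fin d)))
    (hK₁ : IsCompact K₁) (hK₂ : IsCompact K₂)
    (p : ℝ) (hp0 : 0 < p) (hp1 : p ≤ 1)
    (f ψ : SchwartzMap (EuclideanSpace ℝ (Fin d)) ℂ)
    (hf : tsupport (𝓕 ⇑f) ⊆ K₂) (hψ : tsupport (𝓕 ⇑ψ) ⊆ K₁) :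
    eLpNorm (fun x => ∫ y, f y * ψ (x - y)) (ENNReal.ofReal p) volume ≤
      volume (K₁ - K₂) ^ (1 / p - 1) *
        (eLpNorm (⇑f) (ENNReal.ofReal p) volume *
          eLpNorm (⇑ψ) (ENNReal.ofReal p) volume) := by
  have hq0 : ENNReal.ofReal p ≠ 0 := (ENNReal.ofReal_pos.mpr hp0).ne'
  have hqt : ENNReal.ofReal p ≠ ∞ := ENNReal.ofReal_ne_top
  have hqr : (ENNReal.ofReal p).toReal = p := ENNReal.toReal_ofReal hp0.le
  have h1p : (0:ℝ) ≤ 1 - p := by linarith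
  set Ω : Set (EuclideanSpace ℝ (Fin d)) := K₂ - K₁ with hΩdef
  have hΩc : IsCompact Ω := by rw [hΩdef, sub_eq_add_neg]; exact hK₂.add hK₁.neg
  have hvol : volume (K₁ - K₂) = volume Ω := by
    have h : K₁ - K₂ = -Ω := by rw [hΩdef, neg_sub]
    rw [h, Measure.measure_neg]
  set V : ℝ := (volume Ω).toReal with hVdef
  have hpt : ∀ x, ‖∫ y, f y * ψ (x - y)‖ ^ p
      ≤ V ^ (1 - p) * ∫ y, ‖f y‖ ^ p * ‖ψ (x - y)‖ ^ p := by
    intro x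
    have hgy : ∀ y, mulS f (shiftReflect ψ x) y = f y * ψ (x - y) := fun y => rfl
    have h1 : ‖∫ y, f y * ψ (x - y)‖ ≤ ∫ y, ‖mulS f (shiftReflect ψ x) y‖ := by
      simp only [hgy]
      exact norm_integral_le_integral_norm _
    have h2 := nikolskii (mulS f (shiftReflect ψ x)) hΩc
      (support_fourier_mul f ψ hK₁ hK₂ hf hψ x) hp0 hp1
    have h3 : ∀ y, ‖mulS f (shiftReflect ψ x) y‖ ^ p = ‖f y‖ ^ p * ‖ψ (x - y)‖ ^ p := by
      intro y
      rw [hgy, norm_mul, Real.mul_rpow (norm_nonneg _) (norm_nonneg _)]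
    calc ‖∫ y, f y * ψ (x - y)‖ ^ p
        ≤ (∫ y, ‖mulS f (shiftReflect ψ x) y‖) ^ p :=
          Real.rpow_le_rpow (norm_nonneg _) h1 hp0.le
      _ ≤ V ^ (1 - p) * ∫ y, ‖mulS f (shiftReflect ψ x) y‖ ^ p := h2
      _ = V ^ (1 - p) * ∫ y, ‖f y‖ ^ p * ‖ψ (x - y)‖ ^ p := by simp only [h3]
  have hSint : ∀ x, Integrable (fun y => ‖f y‖ ^ p * ‖ψ (x - y)‖ ^ p) volume := by
    intro x
    have hcont : Continuous fun y : EuclideanSpace ℝ (Fin d) => ψ (x - y) :=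
      ψ.continuous.comp (continuous_const.sub continuous_id)
    apply (((schwartz_integrable_rpow f hp0)).mul_const
      ((SchwartzMap.seminorm ℝ 0 0 ψ) ^ p)).mono'
    · exact ((f.continuous.norm.rpow_const fun y => Or.inr hp0.le).mul
        (hcont.norm.rpow_const fun y => Or.inr hp0.le)).aestronglyMeasurable
    · refine Filter.Eventually.of_forall fun y => ?_
      have hb : ‖ψ (x - y)‖ ^ p ≤ (SchwartzMap.seminorm ℝ 0 0 ψ) ^ p :=
        Real.rpow_le_rpow (norm_nonneg _) (SchwartzMap.norm_le_seminorm ℝ ψ _) hp0.le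
      rw [Real.norm_eq_abs, _root_.abs_of_nonneg (by positivity)]
      exact mul_le_mul_of_nonneg_left hb (Real.rpow_nonneg (norm_nonneg _) _)
  set If := ∫⁻ y, ENNReal.ofReal (‖f y‖ ^ p) with hIf
  set Iψ := ∫⁻ y, ENNReal.ofReal (‖ψ y‖ ^ p) with hIψ
  have mF : Measurable fun y : EuclideanSpace ℝ (Fin d) => ENNReal.ofReal (‖f y‖ ^ p) :=
    (f.continuous.norm.rpow_const fun y => Or.inr hp0.le).measurable.ennreal_ofReal
  have mG : Measurable fun y : EuclideanSpace ℝ (Fin d) => ENNReal.ofReal (‖ψ y‖ ^ p) :=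
    (ψ.continuous.norm.rpow_const fun y => Or.inr hp0.le).measurable.ennreal_ofReal
  have hswap : (∫⁻ x, ∫⁻ y, ENNReal.ofReal (‖f y‖ ^ p) * ENNReal.ofReal (‖ψ (x - y)‖ ^ p))
      = If * Iψ := by
    rw [lintegral_lintegral_swap
      (((mF.comp measurable_snd).mul (mG.comp (measurable_fst.sub measurable_snd))).aemeasurable)]
    calc ∫⁻ y, ∫⁻ x, ENNReal.ofReal (‖f y‖ ^ p) * ENNReal.ofReal (‖ψ (x - y)‖ ^ p)
        = ∫⁻ y, ENNReal.ofReal (‖f y‖ ^ p) * ∫⁻ x, ENNReal.ofReal (‖ψ (x - y)‖ ^ p) := by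
          apply lintegral_congr
          intro y
          exact lintegral_const_mul' _ _ ENNReal.ofReal_ne_top
      _ = ∫⁻ y, ENNReal.ofReal (‖f y‖ ^ p) * Iψ := by
          apply lintegral_congr
          intro y
          rw [hIψ]
          congr 1
          exact lintegral_sub_right_eq_self
            (fun u : EuclideanSpace ℝ (Fin d) => ENNReal.ofReal (‖ψ u‖ ^ p)) y
      _ = If * Iψ := lintegral_mul_const Iψ mF
  have hmono : (∫⁻ x, (‖∫ y, f y * ψ (x - y)‖₊ : ℝ≥0∞) ^ p)
      ≤ ENNReal.ofReal (V ^ (1 - p)) * (If * Iψ) := by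
    have step1 : (∫⁻ x, (‖∫ y, f y * ψ (x - y)‖₊ : ℝ≥0∞) ^ p)
        ≤ ∫⁻ x, ENNReal.ofReal (V ^ (1 - p)) *
            ∫⁻ y, ENNReal.ofReal (‖f y‖ ^ p) * ENNReal.ofReal (‖ψ (x - y)‖ ^ p) := by
      apply lintegral_mono
      intro x
      dsimp only
      have e1 : ((‖∫ y, f y * ψ (x - y)‖₊ : ℝ≥0∞)) ^ p
          = ENNReal.ofReal (‖∫ y, f y * ψ (x - y)‖ ^ p) := by
        rw [← enorm_eq_nnnorm, ← ofReal_norm, ← ENNReal.ofReal_rpow_of_nonneg (norm_nonneg _) hp0.le]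
      rw [e1]
      have e2 : ENNReal.ofReal (V ^ (1 - p) * ∫ y, ‖f y‖ ^ p * ‖ψ (x - y)‖ ^ p)
          = ENNReal.ofReal (V ^ (1 - p)) *
            ∫⁻ y, ENNReal.ofReal (‖f y‖ ^ p) * ENNReal.ofReal (‖ψ (x - y)‖ ^ p) := by
        rw [ENNReal.ofReal_mul (Real.rpow_nonneg ENNReal.toReal_nonneg _),
          ofReal_integral_eq_lintegral_ofReal (hSint x)
            (Filter.Eventually.of_forall fun y => by positivity)]
        congr 1
        apply lintegral_congr
        intro y
        rw [ENNReal.ofReal_mul (Real.rpow_nonneg (norm_nonneg _) _)]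
      rw [← e2]
      exact ENNReal.ofReal_le_ofReal (hpt x)
    refine step1.trans ?_
    rw [lintegral_const_mul' _ _ ENNReal.ofReal_ne_top, hswap]
  have hIfe : If ^ (1/p) = eLpNorm (⇑f) (ENNReal.ofReal p) volume := by
    rw [eLpNorm_eq_lintegral_rpow_enorm_toReal hq0 hqt, hqr, hIf]
    congr 1
    apply lintegral_congr
    intro y
    rw [← ofReal_norm, ← ENNReal.ofReal_rpow_of_nonneg (norm_nonneg _) hp0.le]
  have hIψe : Iψ ^ (1/p) = eLpNorm (⇑ψ) (ENNReal.ofReal p) volume := by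
    rw [eLpNorm_eq_lintegral_rpow_enorm_toReal hq0 hqt, hqr, hIψ]
    congr 1
    apply lintegral_congr
    intro y
    rw [← ofReal_norm, ← ENNReal.ofReal_rpow_of_nonneg (norm_nonneg _) hp0.le]
  have hof : ENNReal.ofReal (V ^ (1 - p)) = volume Ω ^ (1 - p) := by
    conv_rhs => rw [← ENNReal.ofReal_toReal hΩc.measure_lt_top.ne]
    rw [ENNReal.ofReal_rpow_of_nonneg ENNReal.toReal_nonneg h1p]
  have hexp : (1 - p) * (1/p) = 1/p - 1 := by
    rw [one_div, sub_mul, one_mul, mul_inv_cancel₀ hp0.ne']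
  calc eLpNorm (fun x => ∫ y, f y * ψ (x - y)) (ENNReal.ofReal p) volume
      = (∫⁻ x, (‖∫ y, f y * ψ (x - y)‖₊ : ℝ≥0∞) ^ p) ^ (1/p) := by
        rw [eLpNorm_eq_lintegral_rpow_enorm_toReal hq0 hqt, hqr]
        rfl
    _ ≤ (ENNReal.ofReal (V ^ (1 - p)) * (If * Iψ)) ^ (1/p) :=
        ENNReal.rpow_le_rpow hmono (by positivity)
    _ = volume (K₁ - K₂) ^ (1 / p - 1) *
        (eLpNorm (⇑f) (ENNReal.ofReal p) volume * eLpNorm (⇑ψ) (ENNReal.ofReal p) volume) := by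
        rw [ENNReal.mul_rpow_of_nonneg _ _ (by positivity),
          ENNReal.mul_rpow_of_nonneg _ _ (by positivity),
          hIfe, hIψe, hof, ← ENNReal.rpow_mul, hexp, hvol]

end
end

section
/- Let A ∈ GL(d, ℝ) be expansive, M > 0, N ∈ ℕ, Q ⊆ ℝ^d bounded. Let φ, ϕ be Schwartz functions, and for i ∈ ℤ and δ > 0 set φ_i(x) = |det A|^i φ(A^i x) and ϕ_δ(x) = δ^d ϕ(δx). Then there exists C = C(d,M,N,Q,ϕ,φ,A) > 0 such that: if i, ℓ ∈ ℤ and δ > 0 satisfy |i − ℓ| ≤ N and B_δ(η) ⊆ (A*)^ℓ Q for some η ∈ ℝ^d, then (|ϕ_δ| ∗ |φ_i|)(x) ≤ C·δ^d·(1 + |δx|)^{−M} for all x ∈ ℝ^d. -/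
open MeasureTheory
open scoped Pointwise

/-- Uniform polynomial decay bound for Schwartz functions. -/
lemma schwartz_decay_aux {d : ℕ} (f : SchwartzMap (EuclideanSpace ℝ (Fin d)) ℂ) (k : ℕ) :
    ∃ C : ℝ, 0 ≤ C ∧ ∀ x, ‖f x‖ * (1 + ‖x‖) ^ k ≤ C := by
  refine ⟨2 ^ k * (Finset.Iic (k,0)).sup (fun m => SchwartzMap.seminorm ℝ m.1 m.2) f,
    by positivity, fun x => ?_⟩
  have := SchwartzMap.one_add_le_sup_seminorm_apply (𝕜 := ℝ) (m := (k,0)) le_rfl le_rfl f x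
  simpa [norm_iteratedFDeriv_zero, mul_comm] using this

/-- Change of variables for an invertible matrix acting on Euclidean space. -/
lemma cov_aux {d : ℕ} (B : Matrix (Fin d) (Fin d) ℝ) (hB : IsUnit B.det)
    (Φ : EuclideanSpace ℝ (Fin d) → ℝ) (hc : Continuous Φ) (hi : Integrable Φ) :
    Integrable (fun y : EuclideanSpace ℝ (Fin d) => Φ (ms B y)) ∧
      ∫ y : EuclideanSpace ℝ (Fin d), Φ (ms B y) = |B.det|⁻¹ * ∫ u, Φ u := by
  set f : EuclideanSpace ℝ (Fin d) →ₗ[ℝ] EuclideanSpace ℝ (Fin d) :=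
    (Matrix.toEuclideanLin (𝕜 := ℝ) B : _ →ₗ[ℝ] _) with hf
  have hdet : LinearMap.det f = B.det := by
    rw [hf, Matrix.toEuclideanLin_eq_toLin]; exact LinearMap.det_toLin _ _
  have hdet0 : LinearMap.det f ≠ 0 := by rw [hdet]; exact hB.ne_zero
  have hmap : Measure.map f volume = ENNReal.ofReal |(LinearMap.det f)⁻¹| • volume :=
    Measure.map_linearMap_addHaar_eq_smul_addHaar volume hdet0
  have hfc : Continuous f := f.continuous_of_finiteDimensional
  have hΦm : AEStronglyMeasurable Φ (Measure.map f volume) := hc.aestronglyMeasurable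
  have hms : ∀ y, ms B y = f y := fun y => rfl
  have h2 : ∫ u, Φ u ∂(Measure.map f volume) = |B.det|⁻¹ * ∫ u, Φ u := by
    rw [hmap, integral_smul_measure, ENNReal.toReal_ofReal (abs_nonneg _), hdet,
      abs_inv, smul_eq_mul]
  constructor
  · have h3 : Integrable Φ (Measure.map f volume) := by
      rw [hmap]; exact hi.smul_measure ENNReal.ofReal_ne_top
    have := (integrable_map_measure hΦm hfc.aemeasurable).mp h3
    simp only [Function.comp_def] at this
    exact this.congr (ae_of_all _ fun y => by simp [Function.comp, hms])
  · simp_rw [hms]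
    rw [← integral_map hfc.aemeasurable hΦm, h2]

lemma intPhi_aux {d : ℕ} :
    Integrable (fun u : EuclideanSpace ℝ (Fin d) => ((1 + ‖u‖) ^ (d+1))⁻¹) := by
  have h := integrable_one_add_norm (E := EuclideanSpace ℝ (Fin d)) (μ := volume)
    (r := (d+1)) (by simp)
  refine h.congr (ae_of_all _ fun x => ?_)
  simp only []
  rw [show (-((d:ℝ)+1)) = -(((d+1:ℕ)):ℝ) by push_cast; ring,
    Real.rpow_neg (by positivity), Real.rpow_natCast]

set_option synthInstance.maxHeartbeats 1000000 in
lemma norm_clm_transpose {d : ℕ} (B : Matrix (Fin d) (Fin d) ℝ) :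
    ‖Matrix.toEuclideanCLM (𝕜 := ℝ) B.transpose‖ = ‖Matrix.toEuclideanCLM (𝕜 := ℝ) B‖ := by
  rw [show B.transpose = star B by
    rw [Matrix.star_eq_conjTranspose, Matrix.conjTranspose_eq_transpose_of_trivial]]
  rw [map_star, ContinuousLinearMap.star_eq_adjoint]
  exact ContinuousLinearMap.adjoint.norm_map _

lemma det_zpow_aux {d : ℕ} (A : Matrix (Fin d) (Fin d) ℝ) (i : ℤ) :
    (A ^ i).det = A.det ^ i := by
  obtain n | n := i
  · rw [Int.ofNat_eq_coe, zpow_natCast, zpow_natCast, Matrix.det_pow]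
  · rw [zpow_negSucc, zpow_negSucc, Matrix.det_nonsing_inv, Matrix.det_pow,
      Ring.inverse_eq_inv']

lemma abs_zpow_aux (a : ℝ) (i : ℤ) : |a ^ i| = |a| ^ i := by
  obtain n | n := i
  · simp [zpow_natCast, abs_pow]
  · simp [zpow_negSucc, abs_inv, abs_pow]

set_option maxHeartbeats 2000000 in
set_option synthInstance.maxHeartbeats 400000 in
/-- Decay estimate for `(|ϕ_δ| ∗ |φ_i|)(x)` when `B_δ(η) ⊆ (A*)^ℓ Q` and `|i - ℓ| ≤ N`,
where `ϕ_δ = δ^d ϕ(δ ·)` and `φ_i = |det A|^i φ(A^i ·)`. -/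
theorem stmt10 {d : ℕ} (A : Matrix (Fin d) (Fin d) ℝ) (hA : Expansive A)
    (M : ℝ) (hM : 0 < M) (N : ℕ)
    (Q : Set (EuclideanSpace ℝ (Fin d))) (hQ : Bornology.IsBounded Q)
    (φ ϕ : SchwartzMap (EuclideanSpace ℝ (Fin d)) ℂ) :
    ∃ C : ℝ, 0 < C ∧ ∀ (i ℓ : ℤ) (δ : ℝ) (η : EuclideanSpace ℝ (Fin d)),
      0 < δ → |i - ℓ| ≤ (N : ℤ) → Metric.ball η δ ⊆ ms (A.transpose ^ ℓ) '' Q →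
      ∀ x : EuclideanSpace ℝ (Fin d),
        (∫ y : EuclideanSpace ℝ (Fin d),
            ‖δ ^ d * ϕ (δ • y)‖ *
              ‖|A.det| ^ i * φ (ms (A ^ i) (x - y))‖) ≤
          C * δ ^ d * (1 + δ * ‖x‖) ^ (-M) := by
  classical
  obtain ⟨hAu, -⟩ := hA
  have hdet : IsUnit A.det := (Matrix.isUnit_iff_isUnit_det A).mp hAu
  have hdetT : IsUnit A.transpose.det := by rwa [Matrix.det_transpose]
  have hdet0 : A.det ≠ 0 := hdet.ne_zero
  set m : ℕ := ⌈M⌉₊ with hm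
  obtain ⟨R₀, hQR₀⟩ := hQ.subset_closedBall 0
  set R : ℝ := max R₀ 1 with hRdef
  have hR1 : (1:ℝ) ≤ R := le_max_right _ _
  have hR0 : (0:ℝ) < R := lt_of_lt_of_le one_pos hR1
  have hQR : Q ⊆ Metric.closedBall 0 R :=
    hQR₀.trans (Metric.closedBall_subset_closedBall (le_max_left _ _))
  set Lm : Matrix (Fin d) (Fin d) ℝ →
      (EuclideanSpace ℝ (Fin d) →L[ℝ] EuclideanSpace ℝ (Fin d)) :=
    fun B => Matrix.toEuclideanCLM (𝕜 := ℝ) B with hLm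
  have hne : (Finset.Icc (-(N:ℤ)) (N:ℤ)).Nonempty := ⟨0, by simp⟩
  set K : ℝ := (Finset.Icc (-(N:ℤ)) (N:ℤ)).sup' hne (fun k => ‖Lm (A ^ k)‖) with hK
  have h0mem : (0:ℤ) ∈ Finset.Icc (-(N:ℤ)) (N:ℤ) := by simp
  have hK0 : (0:ℝ) ≤ K :=
    le_trans (norm_nonneg (Lm (A ^ (0:ℤ)))) (Finset.le_sup' (fun k => ‖Lm (A ^ k)‖) h0mem)
  obtain ⟨C₁, hC₁0, hC₁⟩ := schwartz_decay_aux ϕ m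
  obtain ⟨C₂, hC₂0, hC₂⟩ := schwartz_decay_aux φ (m + (d+1))
  set Φ : EuclideanSpace ℝ (Fin d) → ℝ := fun u => ((1 + ‖u‖) ^ (d+1))⁻¹ with hΦdef
  have hΦc : Continuous Φ := by
    have : Continuous fun u : EuclideanSpace ℝ (Fin d) => (1 + ‖u‖) ^ (d+1) :=
      (continuous_const.add continuous_norm).pow _
    exact this.inv₀ fun u => by positivity
  have hΦint : Integrable Φ := intPhi_aux
  set I₀ : ℝ := ∫ u : EuclideanSpace ℝ (Fin d), Φ u with hI₀def
  have hI₀0 : 0 ≤ I₀ := integral_nonneg fun u => by positivity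
  set P : ℝ := (1 + 4*R*K) ^ m with hPdef
  have hP0 : (0:ℝ) < P := by positivity
  refine ⟨(C₁+1) * (C₂+1) * P * (I₀+1), by positivity, ?_⟩
  intro i ℓ δ η hδ hiℓ hball x
  set w : EuclideanSpace ℝ (Fin d) → EuclideanSpace ℝ (Fin d) :=
    fun y => ms (A ^ i) (x - y) with hw
  set D : ℝ := |A.det| ^ i with hD
  have hD0 : (0:ℝ) < D := zpow_pos (abs_pos.mpr hdet0) i
  -- Step 1: bound on the operator norm of (Aᵀ)^(-ℓ)
  have hmemQ : ∀ z ∈ Metric.ball η δ,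
      ms (A.transpose ^ (-ℓ)) z ∈ Metric.closedBall (0 : EuclideanSpace ℝ (Fin d)) R := by
    intro z hz
    obtain ⟨q, hq, rfl⟩ := hball hz
    have hcancel : ms (A.transpose ^ (-ℓ)) (ms (A.transpose ^ ℓ) q) = q := by
      show WithLp.toLp 2 ((A.transpose ^ (-ℓ)).mulVec ((A.transpose ^ ℓ).mulVec q)) = q
      rw [Matrix.mulVec_mulVec, ← Matrix.zpow_add hdetT, neg_add_cancel, zpow_zero,
        Matrix.one_mulVec]
    rw [hcancel]; exact hQR hq
  have hTnorm : ‖Lm (A.transpose ^ (-ℓ))‖ ≤ 4*R/δ := by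
    refine ContinuousLinearMap.opNorm_le_bound _ (by positivity) fun v => ?_
    rcases eq_or_ne v 0 with rfl | hv
    · simp
    · have hnv : 0 < ‖v‖ := norm_pos_iff.mpr hv
      set u : EuclideanSpace ℝ (Fin d) := (δ/(2*‖v‖)) • v with hu
      have h1 : η + u ∈ Metric.ball η δ := by
        rw [Metric.mem_ball, dist_eq_norm, add_sub_cancel_left, hu, norm_smul,
          Real.norm_eq_abs, abs_of_pos (by positivity)]
        rw [div_mul_eq_mul_div, div_lt_iff₀ (by positivity)]
        nlinarith
      have h2 : η ∈ Metric.ball η δ := Metric.mem_ball_self hδ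
      have e1 := hmemQ _ h1
      have e2 := hmemQ _ h2
      rw [Metric.mem_closedBall, dist_zero_right] at e1 e2
      have hact : ∀ z, ms (A.transpose ^ (-ℓ)) z = Lm (A.transpose ^ (-ℓ)) z :=
        fun z => rfl
      have key : ‖Lm (A.transpose ^ (-ℓ)) u‖ ≤ 2*R := by
        have heq : Lm (A.transpose ^ (-ℓ)) u =
            ms (A.transpose ^ (-ℓ)) (η + u) - ms (A.transpose ^ (-ℓ)) η := by
          rw [hact, hact, ← map_sub, add_sub_cancel_left]
        rw [heq]
        calc ‖ms (A.transpose ^ (-ℓ)) (η + u) - ms (A.transpose ^ (-ℓ)) η‖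
            ≤ ‖ms (A.transpose ^ (-ℓ)) (η + u)‖ + ‖ms (A.transpose ^ (-ℓ)) η‖ :=
              norm_sub_le _ _
          _ ≤ R + R := add_le_add e1 e2
          _ = 2*R := by ring
      have hLu : ‖Lm (A.transpose ^ (-ℓ)) u‖ =
          (δ/(2*‖v‖)) * ‖Lm (A.transpose ^ (-ℓ)) v‖ := by
        rw [hu, (Lm (A.transpose ^ (-ℓ))).map_smul, norm_smul, Real.norm_eq_abs, abs_of_pos (by positivity)]
      rw [hLu] at key
      rw [div_mul_eq_mul_div, div_le_iff₀ (by positivity : (0:ℝ) < 2*‖v‖)] at key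
      rw [div_mul_eq_mul_div, le_div_iff₀ hδ]
      nlinarith
  have hAl : ‖Lm (A ^ (-ℓ))‖ ≤ 4*R/δ := by
    have htr : (A ^ (-ℓ)).transpose = A.transpose ^ (-ℓ) := Matrix.transpose_zpow A (-ℓ)
    have := norm_clm_transpose (A ^ (-ℓ))
    rw [htr] at this
    rw [hLm, ← this]
    exact hTnorm
  have hAi : δ * ‖Lm (A ^ (-i))‖ ≤ 4*R*K := by
    have hsplit : (A : Matrix (Fin d) (Fin d) ℝ) ^ (-i) = A ^ (ℓ - i) * A ^ (-ℓ) := by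
      rw [← Matrix.zpow_add hdet]
      congr 1
      ring
    have hmm : Lm (A ^ (ℓ - i) * A ^ (-ℓ)) = Lm (A ^ (ℓ - i)) * Lm (A ^ (-ℓ)) :=
      map_mul (Matrix.toEuclideanCLM (𝕜 := ℝ) (n := Fin d)) _ _
    have h1 : ‖Lm (A ^ (-i))‖ ≤ ‖Lm (A ^ (ℓ - i))‖ * ‖Lm (A ^ (-ℓ))‖ := by
      rw [hsplit, hmm]; exact norm_mul_le _ _
    have hmem : ℓ - i ∈ Finset.Icc (-(N:ℤ)) (N:ℤ) := by
      rw [Finset.mem_Icc]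
      have := abs_le.mp hiℓ
      omega
    have h2 : ‖Lm (A ^ (ℓ - i))‖ ≤ K := Finset.le_sup' (fun k => ‖Lm (A ^ k)‖) hmem
    have h3 : δ * ‖Lm (A ^ (-i))‖ ≤ δ * (K * (4*R/δ)) :=
      mul_le_mul_of_nonneg_left
        (h1.trans (mul_le_mul h2 hAl (norm_nonneg _) hK0)) hδ.le
    calc δ * ‖Lm (A ^ (-i))‖ ≤ δ * (K * (4*R/δ)) := h3
      _ = 4*R*K := by field_simp
  have hzkey : ∀ z : EuclideanSpace ℝ (Fin d), δ * ‖z‖ ≤ 4*R*K * ‖ms (A ^ i) z‖ := by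
    intro z
    have hzz : Lm (A ^ (-i)) (ms (A ^ i) z) = z := by
      show WithLp.toLp 2 ((A ^ (-i)).mulVec ((A ^ i).mulVec z)) = z
      rw [Matrix.mulVec_mulVec, ← Matrix.zpow_add hdet, neg_add_cancel, zpow_zero,
        Matrix.one_mulVec]
    calc δ * ‖z‖ = δ * ‖Lm (A ^ (-i)) (ms (A ^ i) z)‖ := by rw [hzz]
      _ ≤ δ * (‖Lm (A ^ (-i))‖ * ‖ms (A ^ i) z‖) :=
          mul_le_mul_of_nonneg_left (ContinuousLinearMap.le_opNorm _ _) hδ.le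
      _ = (δ * ‖Lm (A ^ (-i))‖) * ‖ms (A ^ i) z‖ := by ring
      _ ≤ 4*R*K * ‖ms (A ^ i) z‖ := mul_le_mul_of_nonneg_right hAi (norm_nonneg _)
  -- Step 2: the integrand bound
  set b : ℝ := 1 + δ * ‖x‖ with hb
  have hb1 : (1:ℝ) ≤ b := by
    have : 0 ≤ δ * ‖x‖ := by positivity
    linarith
  have hb0 : (0:ℝ) < b := lt_of_lt_of_le one_pos hb1
  set S : ℝ := δ^d * C₁ * (P * (C₂ * D)) with hS
  set G : EuclideanSpace ℝ (Fin d) → ℝ := fun y => ((b^m)⁻¹ * S) * Φ (w y) with hG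
  have hBu : IsUnit (A ^ i).det := hdet.det_zpow i
  obtain ⟨hcovInt, hcovEq⟩ := cov_aux (A ^ i) hBu Φ hΦc hΦint
  have hGint : Integrable G := by
    have h2 : Integrable (fun y => Φ (ms (A ^ i) (x - y))) := hcovInt.comp_sub_left x
    exact h2.const_mul _
  have hptwise : ∀ y : EuclideanSpace ℝ (Fin d),
      ‖δ ^ d * ϕ (δ • y)‖ *
        ‖|A.det| ^ i * φ (ms (A ^ i) (x - y))‖ ≤ G y := by
    intro y
    have habs : ‖δ ^ d * ϕ (δ • y)‖ *
        ‖|A.det| ^ i * φ (ms (A ^ i) (x - y))‖ =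
        δ^d * ‖ϕ (δ • y)‖ * (D * ‖φ (w y)‖) := by
      rw [norm_mul, norm_mul, norm_pow, norm_zpow, Complex.norm_real, Complex.norm_real,
        Real.norm_eq_abs, Real.norm_eq_abs, abs_of_pos hδ, abs_abs, hD, hw]
    rw [habs]
    simp only [hG]
    have hΦw0 : 0 < Φ (w y) := by rw [hΦdef]; positivity
    have hbm0 : (0:ℝ) < b^m := by positivity
    rw [show ((b^m)⁻¹ * S) * Φ (w y) = (S * Φ (w y))/(b^m) by
      rw [div_eq_mul_inv]; ring, le_div_iff₀ hbm0]
    -- main chain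
    have htri : ‖x‖ ≤ ‖y‖ + ‖x - y‖ := by
      have := norm_add_le y (x - y)
      rwa [add_sub_cancel] at this
    have hbsplit : b ≤ (1 + δ*‖y‖) * (1 + δ*‖x-y‖) := by
      rw [hb]
      nlinarith [mul_nonneg (mul_nonneg hδ.le (norm_nonneg y))
        (mul_nonneg hδ.le (norm_nonneg (x-y))), norm_nonneg y, norm_nonneg (x-y)]
    have hbm : b^m ≤ (1 + δ*‖y‖)^m * (1 + δ*‖x-y‖)^m := by
      rw [← mul_pow]
      exact pow_le_pow_left₀ hb0.le hbsplit m
    have h1 : ‖ϕ (δ • y)‖ * (1 + δ*‖y‖)^m ≤ C₁ := by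
      have := hC₁ (δ • y)
      rwa [norm_smul, Real.norm_eq_abs, abs_of_pos hδ] at this
    have hzw : δ * ‖x - y‖ ≤ 4*R*K * ‖w y‖ := hzkey (x - y)
    have h2 : (1 + δ*‖x-y‖)^m ≤ P * (1 + ‖w y‖)^m := by
      rw [hPdef, ← mul_pow]
      apply pow_le_pow_left₀ (by positivity)
      nlinarith [norm_nonneg (w y), mul_nonneg (mul_nonneg (mul_nonneg
        (by norm_num : (0:ℝ) ≤ 4) hR0.le) hK0) (norm_nonneg (w y))]
    have h3 : ‖φ (w y)‖ * (1 + ‖w y‖)^m ≤ C₂ * Φ (w y) := by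
      have hpos : (0:ℝ) < (1 + ‖w y‖)^(d+1) := by positivity
      have := hC₂ (w y)
      rw [pow_add] at this
      rw [hΦdef, ← div_eq_mul_inv, le_div_iff₀ hpos, mul_assoc]
      exact this
    have hn1 : (0:ℝ) ≤ ‖ϕ (δ • y)‖ := norm_nonneg _
    have hn2 : (0:ℝ) ≤ ‖φ (w y)‖ := norm_nonneg _
    calc δ^d * ‖ϕ (δ • y)‖ * (D * ‖φ (w y)‖) * b^m
        ≤ δ^d * ‖ϕ (δ • y)‖ * (D * ‖φ (w y)‖) * ((1 + δ*‖y‖)^m * (1 + δ*‖x-y‖)^m) := by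
          apply mul_le_mul_of_nonneg_left hbm (by positivity)
      _ = (‖ϕ (δ • y)‖ * (1 + δ*‖y‖)^m) * ((‖φ (w y)‖ * (1 + δ*‖x-y‖)^m) * (δ^d * D)) := by
          ring
      _ ≤ C₁ * ((‖φ (w y)‖ * (1 + δ*‖x-y‖)^m) * (δ^d * D)) := by
          apply mul_le_mul_of_nonneg_right h1 (by positivity)
      _ ≤ C₁ * ((‖φ (w y)‖ * (P * (1 + ‖w y‖)^m)) * (δ^d * D)) := by
          apply mul_le_mul_of_nonneg_left _ hC₁0
          apply mul_le_mul_of_nonneg_right _ (by positivity)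
          exact mul_le_mul_of_nonneg_left h2 hn2
      _ = (‖φ (w y)‖ * (1 + ‖w y‖)^m) * (C₁ * P * (δ^d * D)) := by ring
      _ ≤ (C₂ * Φ (w y)) * (C₁ * P * (δ^d * D)) := by
          apply mul_le_mul_of_nonneg_right h3 (by positivity)
      _ = S * Φ (w y) := by rw [hS]; ring
  -- Step 3: integrate
  have hintG : ∫ y, G y = (b^m)⁻¹ * S * (D⁻¹ * I₀) := by
    simp only [hG, hw]
    rw [integral_const_mul]
    congr 1
    rw [show (∫ y, Φ (ms (A ^ i) (x - y))) = ∫ y, Φ (ms (A ^ i) y) from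
      integral_sub_left_eq_self (fun z => Φ (ms (A ^ i) z)) volume x]
    rw [hcovEq, det_zpow_aux, abs_zpow_aux, ← hD, ← hI₀def]
  have hmono : (∫ y : EuclideanSpace ℝ (Fin d),
      ‖δ ^ d * ϕ (δ • y)‖ *
        ‖|A.det| ^ i * φ (ms (A ^ i) (x - y))‖) ≤ ∫ y, G y := by
    refine integral_mono_of_nonneg (ae_of_all _ fun y => ?_) hGint
      (ae_of_all _ fun y => hptwise y)
    positivity
  have hrpow : (b^m)⁻¹ ≤ b ^ (-M) := by
    have h2 : (b^m)⁻¹ = b ^ (-(m:ℝ)) := by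
      rw [Real.rpow_neg hb0.le, Real.rpow_natCast]
    rw [h2]
    apply Real.rpow_le_rpow_of_exponent_le hb1
    have h3 : M ≤ ((⌈M⌉₊ : ℕ):ℝ) := Nat.le_ceil M
    rw [← hm] at h3
    linarith
  have hconst : C₁ * (P * (C₂ * I₀)) ≤ (C₁+1) * (C₂+1) * P * (I₀+1) := by
    nlinarith [hC₁0, hC₂0, hI₀0, hP0.le, mul_nonneg hC₁0 hC₂0,
      mul_nonneg (mul_nonneg hC₁0 hC₂0) hP0.le,
      mul_nonneg (mul_nonneg hC₁0 hP0.le) hI₀0,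
      mul_nonneg (mul_nonneg hC₂0 hP0.le) hI₀0,
      mul_nonneg hP0.le hI₀0, mul_nonneg hC₁0 hP0.le, mul_nonneg hC₂0 hP0.le,
      mul_nonneg (mul_nonneg (mul_nonneg hC₁0 hC₂0) hP0.le) hI₀0]
  calc (∫ y : EuclideanSpace ℝ (Fin d),
      ‖δ ^ d * ϕ (δ • y)‖ *
        ‖|A.det| ^ i * φ (ms (A ^ i) (x - y))‖)
      ≤ ∫ y, G y := hmono
    _ = (b^m)⁻¹ * S * (D⁻¹ * I₀) := hintG
    _ = (b^m)⁻¹ * (δ^d * (C₁ * (P * (C₂ * I₀)))) := by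
        rw [hS]; field_simp
    _ ≤ b ^ (-M) * (δ^d * ((C₁+1) * (C₂+1) * P * (I₀+1))) := by
        apply mul_le_mul hrpow _ (by positivity) (by positivity)
        exact mul_le_mul_of_nonneg_left hconst (by positivity)
    _ = (C₁+1) * (C₂+1) * P * (I₀+1) * δ ^ d * b ^ (-M) := by ring
end
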